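/- arXiv:2006.09568 — 7 statements merged into one kernel-verified Lean document; each statement's English description precedes it below -/
import Mathlib

section
/- Let N ≥ 1 and let x_0, x_1, …, x_N ∈ ℝ² satisfy ‖x_i − x_0‖₂ ≤ 1 for all 0 ≤ i ≤ N. Let A = {x_0, x_1, …, x_N} and let A_{⊕1} = A ⊕ B, where B is the closed unit Euclidean disc. Then the upper surface area (perimeter) of A_{⊕1} satisfies λ̄(∂A_{⊕1}) ≤ 4π, i.e., it is at most the perimeter of the disc of radius 2 centered at x_0. -/
open MeasureTheory Set Filter
open scoped ENNReal Pointwise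

/-- The closed unit Euclidean ball in `ℝ^d`. -/
noncomputable def unitBall (d : ℕ) : Set (EuclideanSpace ℝ (Fin d)) := Metric.closedBall 0 1

/-- The upper `K`-surface area of `A`:
`λ̄_K(∂A) = limsup_{δ→0⁺} (λ(A ⊕ δK) − λ(A))/δ`. -/
noncomputable def upperSurf {d : ℕ} (K A : Set (EuclideanSpace ℝ (Fin d))) : ℝ≥0∞ :=
  Filter.limsup (fun δ : ℝ => (volume (A + δ • K) - volume A) / ENNReal.ofReal δ)
    (nhdsWithin 0 (Set.Ioi 0))

section Aux

open scoped RealInnerProductSpace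

set_option maxHeartbeats 1000000

noncomputable section

local notation "E2" => EuclideanSpace ℝ (Fin 2)

def psiMap (ε : ℝ) (w : E2) : E2 :=
  Real.sqrt ((‖w‖^2 + ε)/‖w‖^2) • w

def psiDeriv (ε : ℝ) (w : E2) : E2 →L[ℝ] E2 :=
  Real.sqrt ((‖w‖^2 + ε)/‖w‖^2) • ContinuousLinearMap.id ℝ E2 +
    ((((1 * ‖w‖^2 - (‖w‖^2 + ε) * 1)/(‖w‖^2)^2) / (2 * Real.sqrt ((‖w‖^2 + ε)/‖w‖^2)))
      • ((2:ℝ) • innerSL ℝ w)).smulRight w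

lemma hasFDerivAt_normSq (w : E2) :
    HasFDerivAt (fun v : E2 => ‖v‖^2) ((2:ℝ) • innerSL ℝ w) w := by
  have h := (hasFDerivAt_id (𝕜 := ℝ) w).inner ℝ (hasFDerivAt_id w)
  have h2 : (fun v : E2 => (inner ℝ v v : ℝ)) = fun v : E2 => ‖v‖^2 := by
    funext v; exact real_inner_self_eq_norm_sq v
  simp only [id_eq] at h
  rw [h2] at h
  refine HasFDerivAt.congr_fderiv h ?_
  ext v
  simp [fderivInnerCLM_apply, real_inner_comm, two_mul]

lemma psi_hasFDerivAt {ε : ℝ} (hε : 0 < ε) {w : E2} (hw : w ≠ 0) :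
    HasFDerivAt (psiMap ε) (psiDeriv ε w) w := by
  have hT : (0:ℝ) < ‖w‖^2 := by
    have := norm_pos_iff.2 hw; positivity
  have hr0 : (0:ℝ) < (‖w‖^2 + ε)/‖w‖^2 :=
    div_pos (by positivity) hT
  have hQ := hasFDerivAt_normSq w
  have hdiv : HasDerivAt (fun t : ℝ => (t + ε)/t)
      ((1 * ‖w‖^2 - (‖w‖^2 + ε) * 1)/(‖w‖^2)^2) (‖w‖^2) :=
    ((hasDerivAt_id (‖w‖^2)).add_const ε).div (hasDerivAt_id _) hT.ne'
  have hsqrt : HasDerivAt (fun t : ℝ => Real.sqrt ((t + ε)/t))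
      (((1 * ‖w‖^2 - (‖w‖^2 + ε) * 1)/(‖w‖^2)^2) / (2 * Real.sqrt ((‖w‖^2 + ε)/‖w‖^2)))
      (‖w‖^2) := hdiv.sqrt hr0.ne'
  have hcomp := hsqrt.comp_hasFDerivAt w hQ
  have hfinal := hcomp.smul (hasFDerivAt_id w)
  exact hfinal

/-- determinant of `a • id + (b • ⟪w,·⟫).smulRight w` in the plane. -/
lemma aux_det (a b : ℝ) (w : E2) :
    ContinuousLinearMap.det
      (a • ContinuousLinearMap.id ℝ E2 + ((b • innerSL ℝ w).smulRight w)) =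
      a^2 + a * b * (w 0 ^ 2 + w 1 ^ 2) := by
  classical
  set L : E2 →L[ℝ] E2 := a • ContinuousLinearMap.id ℝ E2 + ((b • innerSL ℝ w).smulRight w)
  have hdet : ContinuousLinearMap.det L = LinearMap.det (L : E2 →ₗ[ℝ] E2) := rfl
  rw [hdet]
  set B := (EuclideanSpace.basisFun (Fin 2) ℝ).toBasis
  rw [← LinearMap.det_toMatrix B]
  rw [Matrix.det_fin_two]
  have hB : ∀ j : Fin 2, B j = EuclideanSpace.single j 1 := by
    intro j; simp [B, EuclideanSpace.basisFun_apply]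
  have happ : ∀ i j : Fin 2, LinearMap.toMatrix B B (L : E2 →ₗ[ℝ] E2) i j
      = a * (EuclideanSpace.single j (1:ℝ)) i + b * w j * w i := by
    intro i j
    rw [LinearMap.toMatrix_apply]
    have : (L : E2 →ₗ[ℝ] E2) (B j) = a • (EuclideanSpace.single j (1:ℝ))
        + (b * w j) • w := by
      rw [hB]
      simp only [L, ContinuousLinearMap.add_apply, ContinuousLinearMap.smul_apply,
        ContinuousLinearMap.id_apply, ContinuousLinearMap.smulRight_apply,
        ContinuousLinearMap.coe_coe]
      congr 1
      have : (innerSL ℝ w) (EuclideanSpace.single j (1:ℝ)) = w j := by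
        simp [innerSL_apply_apply, EuclideanSpace.inner_single_right]
      simp only [ContinuousLinearMap.smul_apply, this, smul_eq_mul]
    rw [this]
    simp [B, OrthonormalBasis.coe_toBasis_repr_apply, EuclideanSpace.basisFun_repr]
  rw [happ, happ, happ, happ]
  simp [EuclideanSpace.single_apply]
  ring

lemma psi_det {ε : ℝ} (hε : 0 < ε) {w : E2} (hw : w ≠ 0) :
    (psiDeriv ε w).det = 1 := by
  have hT : (0:ℝ) < ‖w‖^2 := by have := norm_pos_iff.2 hw; positivity
  have hr0 : (0:ℝ) < (‖w‖^2 + ε)/‖w‖^2 := div_pos (by positivity) hT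
  have hsum : w 0 ^ 2 + w 1 ^ 2 = ‖w‖^2 := by
    have h := real_inner_self_eq_norm_sq w
    simp only [PiLp.inner_apply, RCLike.inner_apply, starRingEnd_apply, star_trivial,
      Fin.sum_univ_two] at h
    linear_combination h
  rw [psiDeriv, smul_smul, aux_det, hsum]
  have ha2 : Real.sqrt ((‖w‖^2 + ε)/‖w‖^2) ^ 2 = (‖w‖^2 + ε)/‖w‖^2 := Real.sq_sqrt hr0.le
  have ha0 : 0 < Real.sqrt ((‖w‖^2 + ε)/‖w‖^2) := Real.sqrt_pos.2 hr0
  set a := Real.sqrt ((‖w‖^2 + ε)/‖w‖^2) with ha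
  have key : a^2 * ‖w‖^2 = ‖w‖^2 + ε := by
    rw [ha2]; field_simp
  field_simp
  linear_combination key

lemma key_radial {z w : E2} {δ : ℝ} (hz : ‖z‖ ≤ 1) (hδ : 0 < δ)
    (hw : ‖w - z‖ ≤ 1 + δ) (hbig : 4*δ + 2*δ^2 < ‖w‖^2) :
    ∃ q : E2, ‖q - z‖ ≤ 1 ∧ q ≠ 0 ∧
      Real.sqrt ((‖q‖^2 + (4*δ + 2*δ^2))/‖q‖^2) • q = w := by
  set ε : ℝ := 4*δ + 2*δ^2 with hεdef
  have hε0 : 0 < ε := by positivity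
  have hs0 : 0 < ‖w‖ := by
    rcases eq_or_lt_of_le (norm_nonneg w) with h | h
    · exfalso; rw [← h] at hbig; simp at hbig; nlinarith
    · exact h
  set s : ℝ := ‖w‖ with hsdef
  set u : E2 := s⁻¹ • w with hu
  have hu1 : ‖u‖ = 1 := by
    rw [hu, norm_smul, Real.norm_eq_abs, abs_of_pos (inv_pos.2 hs0), ← hsdef]
    field_simp
  have hw_su : s • u = w := by rw [hu, smul_inv_smul₀ hs0.ne']
  set c : ℝ := inner ℝ z u with hc
  have hcz : c^2 ≤ ‖z‖^2 := by
    have h1 : |c| ≤ ‖z‖ * ‖u‖ := abs_real_inner_le_norm z u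
    rw [hu1, mul_one] at h1
    have := abs_nonneg c
    nlinarith [sq_abs c]
  have hz1 : ‖z‖^2 ≤ 1 := by nlinarith [norm_nonneg z]
  have hmsq : (0:ℝ) ≤ 1 - ‖z‖^2 + c^2 := by nlinarith
  set m : ℝ := Real.sqrt (1 - ‖z‖^2 + c^2) with hm
  have hm2 : m^2 = 1 - ‖z‖^2 + c^2 := Real.sq_sqrt hmsq
  have hm0 : 0 ≤ m := Real.sqrt_nonneg _
  have hmc : |c| ≤ m := by
    rw [hm, ← Real.sqrt_sq_eq_abs]
    exact Real.sqrt_le_sqrt (by nlinarith)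
  set M : ℝ := Real.sqrt ((1+δ)^2 - ‖z‖^2 + c^2) with hM
  have hMsq : (0:ℝ) ≤ (1+δ)^2 - ‖z‖^2 + c^2 := by nlinarith
  have hM2 : M^2 = (1+δ)^2 - ‖z‖^2 + c^2 := Real.sq_sqrt hMsq
  have hM0 : 0 ≤ M := Real.sqrt_nonneg _
  have hmM : m ≤ M := Real.sqrt_le_sqrt (by nlinarith)
  have hwz : (inner ℝ w z : ℝ) = s * c := by
    rw [← hw_su, real_inner_smul_left, real_inner_comm]
  have hdist : s^2 - 2*(s*c) + ‖z‖^2 ≤ (1+δ)^2 := by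
    have h1 : ‖w - z‖^2 ≤ (1+δ)^2 := by
      apply pow_le_pow_left₀ (norm_nonneg _) hw
    rw [norm_sub_sq_real, hwz] at h1
    exact h1
  have hscM : s - c ≤ M := by
    have h1 : (s - c)^2 ≤ M^2 := by rw [hM2]; nlinarith
    have h2 : |s - c| ≤ M := by
      rw [← Real.sqrt_sq_eq_abs, ← Real.sqrt_sq hM0]
      exact Real.sqrt_le_sqrt h1
    exact (le_abs_self _).trans h2
  set f : ℝ := c + m with hf
  have hf0 : 0 ≤ f := by
    have := neg_abs_le c; simp only [hf]; linarith
  have hcM_f : (c + M)^2 ≤ f^2 + ε := by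
    have hMm : M^2 - m^2 = 2*δ + δ^2 := by rw [hM2, hm2]; ring
    rcases le_or_gt c 0 with hcs | hcs
    · nlinarith [mul_nonneg (neg_nonneg.2 hcs) (sub_nonneg.2 hmM)]
    · have h2c : 2*c ≤ M + m := by
        have := le_abs_self c; linarith
      nlinarith [mul_le_mul_of_nonneg_right h2c (sub_nonneg.2 hmM)]
  have hs_le : s^2 ≤ f^2 + ε := by
    have h1 : s^2 ≤ (c + M)^2 := by
      apply pow_le_pow_left₀ hs0.le (by linarith)
    exact h1.trans hcM_f
  set s' : ℝ := Real.sqrt (s^2 - ε) with hs'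
  have hsε : 0 < s^2 - ε := by rw [hsdef]; linarith [hbig]
  have hs'0 : 0 < s' := Real.sqrt_pos.2 hsε
  have hs'2 : s'^2 = s^2 - ε := Real.sq_sqrt hsε.le
  have hs'f : s' ≤ f := by
    have h1 : s'^2 ≤ f^2 := by rw [hs'2]; linarith
    calc s' = Real.sqrt (s'^2) := (Real.sqrt_sq hs'0.le).symm
    _ ≤ Real.sqrt (f^2) := Real.sqrt_le_sqrt h1
    _ = f := Real.sqrt_sq hf0
  have hfpos : 0 < f := lt_of_lt_of_le hs'0 hs'f
  set q : E2 := s' • u with hq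
  have hqnorm : ‖q‖ = s' := by
    rw [hq, norm_smul, Real.norm_eq_abs, abs_of_pos hs'0, hu1, mul_one]
  have hq0 : q ≠ 0 := by
    intro h
    rw [h, norm_zero] at hqnorm
    exact hs'0.ne hqnorm
  have hinner_uz : (inner ℝ u z : ℝ) = c := real_inner_comm u z ▸ rfl
  have hfu : ‖f • u - z‖^2 = 1 := by
    rw [norm_sub_sq_real, real_inner_smul_left, hinner_uz, norm_smul, Real.norm_eq_abs,
      abs_of_nonneg hf0, hu1, mul_one]
    nlinarith [hm2]
  have hfu1 : ‖f • u - z‖ ≤ 1 := by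
    have h := congrArg Real.sqrt hfu
    rw [Real.sqrt_sq (norm_nonneg _), Real.sqrt_one] at h
    exact h.le
  set t : ℝ := s'/f with ht
  have ht0 : 0 ≤ t := div_nonneg hs'0.le hf0
  have ht1 : t ≤ 1 := (div_le_one hfpos).2 hs'f
  have hqz : ‖q - z‖ ≤ 1 := by
    have htf : t * f = s' := by rw [ht]; field_simp
    have hdecomp : q - z = t • (f • u - z) - (1 - t) • z := by
      have h1 : t • (f • u - z) - (1 - t) • z = (t * f) • u - z := by
        rw [smul_sub, smul_smul, sub_smul, one_smul]; abel
      rw [h1, htf, ← hq]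
    rw [hdecomp]
    calc ‖t • (f • u - z) - (1 - t) • z‖ ≤ ‖t • (f • u - z)‖ + ‖(1 - t) • z‖ :=
          norm_sub_le _ _
    _ = t * ‖f • u - z‖ + (1 - t) * ‖z‖ := by
          rw [norm_smul, norm_smul, Real.norm_eq_abs, Real.norm_eq_abs,
            abs_of_nonneg ht0, abs_of_nonneg (by linarith : (0:ℝ) ≤ 1 - t)]
    _ ≤ t * 1 + (1 - t) * 1 := by
          apply add_le_add
          · exact mul_le_mul_of_nonneg_left hfu1 ht0
          · exact mul_le_mul_of_nonneg_left hz (by linarith)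
    _ = 1 := by ring
  refine ⟨q, hqz, hq0, ?_⟩
  have hqn2 : ‖q‖^2 = s^2 - ε := by rw [hqnorm, hs'2]
  have hfac : Real.sqrt ((‖q‖^2 + ε)/‖q‖^2) = s / s' := by
    rw [hqn2]
    have h1 : s^2 - ε + ε = s^2 := by ring
    rw [h1, Real.sqrt_div (sq_nonneg s), Real.sqrt_sq hs0.le, ← hs']
  have hss' : (s / s') * s' = s := div_mul_cancel₀ s hs'0.ne'
  rw [hfac, hq, smul_smul, hss', hw_su]

lemma psi_norm {ε : ℝ} (hε : 0 < ε) {w : E2} (hw : w ≠ 0) :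
    ‖psiMap ε w‖ = Real.sqrt (‖w‖^2 + ε) := by
  have hn : 0 < ‖w‖ := norm_pos_iff.2 hw
  rw [psiMap, norm_smul, Real.norm_eq_abs,
    abs_of_nonneg (Real.sqrt_nonneg _), Real.sqrt_div (by positivity), Real.sqrt_sq hn.le]
  field_simp

lemma psi_injOn {ε : ℝ} (hε : 0 < ε) {s : Set E2} (h0 : (0:E2) ∉ s) :
    InjOn (psiMap ε) s := by
  intro w1 h1 w2 h2 heq
  have hw1 : w1 ≠ 0 := fun h => h0 (h ▸ h1)
  have hw2 : w2 ≠ 0 := fun h => h0 (h ▸ h2)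
  have hn : ‖w1‖ = ‖w2‖ := by
    have h3 := congrArg norm heq
    rw [psi_norm hε hw1, psi_norm hε hw2] at h3
    have h4 : ‖w1‖^2 + ε = ‖w2‖^2 + ε := by
      have := congrArg (fun r : ℝ => r^2) h3
      simpa [Real.sq_sqrt, (by positivity : (0:ℝ) ≤ ‖w1‖^2 + ε),
        Real.sq_sqrt (by positivity : (0:ℝ) ≤ ‖w2‖^2 + ε)] using this
    have h5 : ‖w1‖^2 = ‖w2‖^2 := by linarith
    have := congrArg Real.sqrt h5
    rwa [Real.sqrt_sq (norm_nonneg _), Real.sqrt_sq (norm_nonneg _)] at this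
  have hα : (0:ℝ) < Real.sqrt ((‖w1‖^2 + ε)/‖w1‖^2) := by
    apply Real.sqrt_pos.2
    have : 0 < ‖w1‖ := norm_pos_iff.2 hw1
    positivity
  rw [psiMap, psiMap, ← hn] at heq
  exact smul_right_injective _ hα.ne' heq

lemma vol_psi_image {ε : ℝ} (hε : 0 < ε) {s : Set E2} (hs : MeasurableSet s)
    (h0 : (0:E2) ∉ s) : volume (psiMap ε '' s) = volume s := by
  have hder : ∀ w ∈ s, HasFDerivWithinAt (psiMap ε) (psiDeriv ε w) s w := fun w hws =>
    (psi_hasFDerivAt hε (fun h => h0 (h ▸ hws))).hasFDerivWithinAt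
  have h := lintegral_image_eq_lintegral_abs_det_fderiv_mul volume hs hder
    (psi_injOn hε h0) (fun _ => (1:ℝ≥0∞))
  simp only [setLIntegral_one, mul_one] at h
  rw [h]
  rw [setLIntegral_congr_fun hs (fun ⦃w⦄ hws => ?_), setLIntegral_one]
  rw [psi_det hε (fun h => h0 (h ▸ hws))]
  norm_num

lemma ball_volume (r : ℝ) (hr : 0 ≤ r) :
    volume (Metric.closedBall (0:E2) r) = ENNReal.ofReal (Real.pi * r^2) := by
  rw [EuclideanSpace.volume_closedBall]
  simp only [Fintype.card_fin]
  have h2 : ((2:ℕ):ℝ)/2 + 1 = 2 := by norm_num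
  have h1 : (Real.sqrt Real.pi)^2 / Real.Gamma ((2:ℕ)/2 + 1) = Real.pi := by
    rw [Real.sq_sqrt Real.pi_nonneg, h2, Real.Gamma_two, div_one]
  rw [h1]
  rw [← ENNReal.ofReal_pow hr, ← ENNReal.ofReal_mul (by positivity)]
  rw [mul_comm]

lemma main_est {n : ℕ} (y : Fin n → E2) (hy : ∀ i, ‖y i‖ ≤ 1) {δ : ℝ} (hδ : 0 < δ) :
    volume (⋃ i, Metric.closedBall (y i) (1+δ)) ≤
      volume (⋃ i, Metric.closedBall (y i) 1) + ENNReal.ofReal (Real.pi * (4*δ + 2*δ^2)) := by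
  set ε : ℝ := 4*δ + 2*δ^2 with hεdef
  have hε0 : 0 < ε := by positivity
  set V : Set E2 := ⋃ i, Metric.closedBall (y i) 1 with hV
  have hVmeas : MeasurableSet (V \ {0}) :=
    (MeasurableSet.iUnion (fun i => measurableSet_closedBall)).diff (measurableSet_singleton 0)
  have h0 : (0:E2) ∉ V \ {0} := fun h => h.2 rfl
  have hsub : (⋃ i, Metric.closedBall (y i) (1+δ)) ⊆
      psiMap ε '' (V \ {0}) ∪ Metric.closedBall 0 (Real.sqrt ε) := by
    intro p hp
    simp only [mem_iUnion] at hp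
    obtain ⟨i, hpi⟩ := hp
    rcases le_or_gt (‖p‖^2) ε with hle | hgt
    · right
      rw [Metric.mem_closedBall, dist_zero_right, ← Real.sqrt_sq (norm_nonneg p)]
      exact Real.sqrt_le_sqrt hle
    · left
      have hpz : ‖p - y i‖ ≤ 1 + δ := by
        rw [← dist_eq_norm]; exact Metric.mem_closedBall.1 hpi
      obtain ⟨q, hqz, hq0, hqw⟩ := key_radial (hy i) hδ hpz (hεdef ▸ hgt)
      refine ⟨q, ⟨mem_iUnion.2 ⟨i, ?_⟩, ?_⟩, ?_⟩
      · rw [Metric.mem_closedBall, dist_eq_norm]; exact hqz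
      · simpa using hq0
      · exact hqw
  calc volume (⋃ i, Metric.closedBall (y i) (1+δ))
      ≤ volume (psiMap ε '' (V \ {0}) ∪ Metric.closedBall 0 (Real.sqrt ε)) :=
        measure_mono hsub
    _ ≤ volume (psiMap ε '' (V \ {0})) + volume (Metric.closedBall (0:E2) (Real.sqrt ε)) :=
        measure_union_le _ _
    _ = volume (V \ {0}) + ENNReal.ofReal (Real.pi * ε) := by
        rw [vol_psi_image hε0 hVmeas h0, ball_volume _ (Real.sqrt_nonneg _),
          Real.sq_sqrt hε0.le]
    _ ≤ volume V + ENNReal.ofReal (Real.pi * ε) := by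
        exact add_le_add_left (measure_mono diff_subset) _

/-- If `x_0, …, x_N ∈ ℝ²` (with `N ≥ 1`) all lie within Euclidean distance `1`
of `x_0`, and `A = {x_0, …, x_N}`, then the upper surface area (perimeter) of
`A_{⊕1} = A ⊕ B` is at most `4π`, the perimeter of the disc of radius `2`. -/
theorem perimeter_parallel_set_le_four_pi
    (N : ℕ) (hN : 1 ≤ N) (x : Fin (N + 1) → EuclideanSpace ℝ (Fin 2))
    (hx : ∀ i, ‖x i - x 0‖ ≤ 1) :
    upperSurf (unitBall 2) (Set.range x + unitBall 2) ≤ ENNReal.ofReal (4 * Real.pi) := by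
  have hrange : ∀ r : ℝ, 0 ≤ r →
      Set.range x + Metric.closedBall (0:E2) r = ⋃ i, Metric.closedBall (x i) r := by
    intro r hr
    ext p
    constructor
    · intro hp
      rw [Set.mem_add] at hp
      obtain ⟨a, ha, b, hb, hab⟩ := hp
      obtain ⟨i, rfl⟩ := ha
      refine mem_iUnion.2 ⟨i, ?_⟩
      rw [Metric.mem_closedBall, dist_eq_norm, ← hab, add_sub_cancel_left]
      rw [Metric.mem_closedBall, dist_zero_right] at hb
      exact hb
    · intro hp
      obtain ⟨i, hi⟩ := mem_iUnion.1 hp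
      rw [Set.mem_add]
      refine ⟨x i, ⟨i, rfl⟩, p - x i, ?_, by abel⟩
      rw [Metric.mem_closedBall, dist_zero_right, ← dist_eq_norm]
      exact Metric.mem_closedBall.1 hi
  -- the union with translated centers
  set y : Fin (N+1) → E2 := fun i => x i - x 0 with hy
  have hy1 : ∀ i, ‖y i‖ ≤ 1 := fun i => hx i
  have htrans : ∀ r : ℝ, (⋃ i, Metric.closedBall (x i) r) =
      (x 0) +ᵥ (⋃ i, Metric.closedBall (y i) r) := by
    intro r
    rw [Set.vadd_set_iUnion]
    refine iUnion_congr fun i => ?_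
    rw [Metric.vadd_closedBall, vadd_eq_add, hy]
    simp
  have hvol : ∀ r : ℝ, volume (⋃ i, Metric.closedBall (x i) r) =
      volume (⋃ i, Metric.closedBall (y i) r) := by
    intro r; rw [htrans r, measure_vadd]
  have hsets : ∀ δ : ℝ, 0 < δ →
      (Set.range x + unitBall 2) + δ • unitBall 2 = ⋃ i, Metric.closedBall (x i) (1+δ) := by
    intro δ hδ
    have h1 : δ • unitBall 2 = Metric.closedBall (0:E2) δ := by
      rw [unitBall, smul_closedBall _ _ zero_le_one]
      simp [Real.norm_eq_abs, abs_of_pos hδ]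
    rw [h1, unitBall, add_assoc, closedBall_add_closedBall zero_le_one hδ.le, zero_add,
      hrange _ (by linarith)]
  have hA : Set.range x + unitBall 2 = ⋃ i, Metric.closedBall (x i) 1 := by
    rw [unitBall, hrange 1 zero_le_one]
  have hF : ∀ δ : ℝ, δ ∈ Set.Ioi (0:ℝ) →
      (volume ((Set.range x + unitBall 2) + δ • unitBall 2)
        - volume (Set.range x + unitBall 2)) / ENNReal.ofReal δ
        ≤ ENNReal.ofReal (4*Real.pi) + ENNReal.ofReal (2*Real.pi*δ) := by
    intro δ hδ
    rw [Set.mem_Ioi] at hδ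
    have hmain := main_est y hy1 hδ
    rw [← hvol (1+δ), ← hvol 1] at hmain
    have h2 : volume ((Set.range x + unitBall 2) + δ • unitBall 2) ≤
        volume (Set.range x + unitBall 2) + ENNReal.ofReal (Real.pi * (4*δ+2*δ^2)) := by
      rw [hsets δ hδ, hA]; exact hmain
    have h3 : volume ((Set.range x + unitBall 2) + δ • unitBall 2)
        - volume (Set.range x + unitBall 2) ≤ ENNReal.ofReal (Real.pi * (4*δ+2*δ^2)) :=
      tsub_le_iff_left.2 h2
    have h4 := ENNReal.div_le_div_right h3 (ENNReal.ofReal δ)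
    refine h4.trans ?_
    rw [← ENNReal.ofReal_div_of_pos hδ]
    have h5 : Real.pi * (4*δ+2*δ^2)/δ = 4*Real.pi + 2*Real.pi*δ := by
      field_simp
    rw [h5, ENNReal.ofReal_add (by positivity) (by positivity)]
  have hlim : Tendsto (fun δ : ℝ => ENNReal.ofReal (4*Real.pi) + ENNReal.ofReal (2*Real.pi*δ))
      (nhdsWithin 0 (Set.Ioi 0)) (nhds (ENNReal.ofReal (4*Real.pi))) := by
    have h1 : Tendsto (fun δ : ℝ => 2*Real.pi*δ) (nhdsWithin 0 (Set.Ioi 0)) (nhds 0) := by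
      apply tendsto_nhdsWithin_of_tendsto_nhds
      have h0 : Continuous (fun δ : ℝ => 2*Real.pi*δ) := by continuity
      have := h0.tendsto (0:ℝ)
      simpa using this
    have h2 := (ENNReal.continuous_ofReal.tendsto 0).comp h1
    rw [ENNReal.ofReal_zero] at h2
    simpa using tendsto_const_nhds.add h2
  rw [upperSurf]
  calc Filter.limsup (fun δ : ℝ => (volume ((Set.range x + unitBall 2) + δ • unitBall 2)
        - volume (Set.range x + unitBall 2)) / ENNReal.ofReal δ) (nhdsWithin 0 (Set.Ioi 0))
      ≤ Filter.limsup (fun δ : ℝ => ENNReal.ofReal (4*Real.pi) + ENNReal.ofReal (2*Real.pi*δ))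
        (nhdsWithin 0 (Set.Ioi 0)) :=
        Filter.limsup_le_limsup (Filter.eventually_of_mem self_mem_nhdsWithin hF)
    _ = ENNReal.ofReal (4*Real.pi) := hlim.limsup_eq

end

end Aux
end

section
/- Let d ≥ 2, r > 0, and let x_i, x_0 ∈ ℝ^d with ‖x_0 − x_i‖₂ ≤ r. Let S be a measurable subset of the sphere {x ∈ ℝ^d : ‖x − x_i‖₂ = r} with x_0 ∉ S. Then for every x ∈ S the pointwise inequality ⟨x − x_i, x − x_0⟩ / (r · ‖x − x_0‖₂^d) ≥ 1/(2r)^{d−1} holds, and consequently ∫_S ⟨x − x_i, x − x_0⟩ / (r · ‖x − x_0‖₂^d) dH^{d−1}(x) ≥ H^{d−1}(S) / (2^{d−1} r^{d−1}), where H^{d−1} is the (d−1)-dimensional Hausdorff measure. (Equivalently, the solid angle subtended by S at x_0 is at least 2^{−(d−1)} times the solid angle subtended by S at the center x_i.) -/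
open MeasureTheory Set Filter
open scoped ENNReal

/-- Let `d ≥ 2`, `r > 0`, `‖x_0 − x_i‖₂ ≤ r`, and let `S` be a measurable
subset of the sphere of radius `r` centered at `x_i` with `x_0 ∉ S`. Then pointwise on `S`
the solid-angle density seen from `x_0`, namely `⟨x − x_i, x − x_0⟩ / (r‖x − x_0‖^d)`,
is at least `1/(2r)^{d−1}`, and consequently its integral over `S` with respect to the
`(d−1)`-dimensional Hausdorff measure is at least `H^{d−1}(S)/(2^{d−1} r^{d−1})`. -/
theorem inscribed_solid_angle_bound
    (d : ℕ) (hd : 2 ≤ d) (r : ℝ) (hr : 0 < r)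
    (xi x0 : EuclideanSpace ℝ (Fin d)) (hx0 : ‖x0 - xi‖ ≤ r)
    (S : Set (EuclideanSpace ℝ (Fin d))) (hS : MeasurableSet S)
    (hSsub : S ⊆ Metric.sphere xi r) (hx0S : x0 ∉ S) :
    (∀ x ∈ S,
      (1 : ℝ) / (2 * r) ^ (d - 1) ≤
        (inner ℝ (x - xi) (x - x0) : ℝ) / (r * ‖x - x0‖ ^ d)) ∧
    (μH[(d : ℝ) - 1]) S / ENNReal.ofReal (2 ^ (d - 1) * r ^ (d - 1)) ≤
      ∫⁻ x in S, ENNReal.ofReal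
        ((inner ℝ (x - xi) (x - x0) : ℝ) / (r * ‖x - x0‖ ^ d)) ∂(μH[(d : ℝ) - 1]) := by
  obtain ⟨k, rfl⟩ : ∃ k, d = k + 2 := ⟨d - 2, by omega⟩
  have hpt : ∀ x ∈ S,
      (1 : ℝ) / (2 * r) ^ (k + 2 - 1) ≤
        (inner ℝ (x - xi) (x - x0) : ℝ) / (r * ‖x - x0‖ ^ (k + 2)) := by
    intro x hx
    have hxr : ‖x - xi‖ = r := mem_sphere_iff_norm.mp (hSsub hx)
    have hne : x ≠ x0 := fun h => hx0S (h ▸ hx)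
    set n : ℝ := ‖x - x0‖ with hn
    have hnpos : 0 < n := by
      simpa [hn] using norm_sub_pos_iff.mpr hne
    have hnle : n ≤ 2 * r := by
      have h1 : ‖x - x0‖ ≤ ‖x - xi‖ + ‖xi - x0‖ := norm_sub_le_norm_sub_add_norm_sub x xi x0
      rw [hxr] at h1
      have h2 : ‖xi - x0‖ = ‖x0 - xi‖ := norm_sub_rev _ _
      simp only [hn]; linarith
    have hinner : n ^ 2 / 2 ≤ (inner ℝ (x - xi) (x - x0) : ℝ) := by
      have hid : ‖(x - xi) - (x - x0)‖ ^ 2 =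
          ‖x - xi‖ ^ 2 - 2 * (inner ℝ (x - xi) (x - x0) : ℝ) + ‖x - x0‖ ^ 2 :=
        norm_sub_sq_real _ _
      have heq : (x - xi) - (x - x0) = x0 - xi := by abel
      rw [heq, hxr] at hid
      have h0 : ‖x0 - xi‖ ^ 2 ≤ r ^ 2 := by nlinarith [norm_nonneg (x0 - xi)]
      nlinarith
    have hpowle : n ^ k ≤ (2 * r) ^ k := pow_le_pow_left₀ hnpos.le hnle k
    rw [div_le_div_iff₀ (by positivity) (by positivity)]
    have key : r * n ^ (k + 2) ≤ n ^ 2 / 2 * (2 * r) ^ (k + 2 - 1) := by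
      have : (2 * r) ^ (k + 2 - 1) = 2 * ((2 * r) ^ k * r) := by
        rw [show k + 2 - 1 = k + 1 from rfl, pow_succ]; ring
      rw [this, pow_add]
      have h1 : n ^ k * n ^ 2 ≤ (2 * r) ^ k * n ^ 2 := by
        apply mul_le_mul_of_nonneg_right hpowle (by positivity)
      nlinarith [pow_nonneg hnpos.le k, pow_pos hnpos 2]
    calc 1 * (r * n ^ (k + 2)) = r * n ^ (k + 2) := one_mul _
      _ ≤ n ^ 2 / 2 * (2 * r) ^ (k + 2 - 1) := key
      _ ≤ (inner ℝ (x - xi) (x - x0) : ℝ) * (2 * r) ^ (k + 2 - 1) := by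
          apply mul_le_mul_of_nonneg_right hinner (by positivity)
  refine ⟨hpt, ?_⟩
  set μ := (μH[((k + 2 : ℕ) : ℝ) - 1] : Measure (EuclideanSpace ℝ (Fin (k + 2))))
  have hc : (0 : ℝ) < (2 * r) ^ (k + 2 - 1) := by positivity
  have hbound : μ S / ENNReal.ofReal (2 ^ (k + 2 - 1) * r ^ (k + 2 - 1))
      = ENNReal.ofReal (1 / (2 * r) ^ (k + 2 - 1)) * μ S := by
    rw [one_div, ENNReal.ofReal_inv_of_pos hc, div_eq_mul_inv, mul_comm, mul_pow]
  rw [hbound]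
  calc ENNReal.ofReal (1 / (2 * r) ^ (k + 2 - 1)) * μ S
      = ∫⁻ _ in S, ENNReal.ofReal (1 / (2 * r) ^ (k + 2 - 1)) ∂μ := by
        rw [setLIntegral_const, mul_comm]
    _ ≤ _ := by
        apply setLIntegral_mono_ae' hS
        filter_upwards with x
        intro hx
        exact ENNReal.ofReal_le_ofReal (hpt x hx)
end

section
/- Let d ≥ 1, r > 0, and N ≥ 1. Let x_0, x_1, …, x_N ∈ ℝ^d satisfy ‖x_i − x_0‖_∞ ≤ r for all 0 ≤ i ≤ N, and let A = {x_0, x_1, …, x_N}. Then the upper C-surface area of the set A_{⊞r} satisfies λ̄_C(∂A_{⊞r}) ≤ 2d·(4r)^{d−1} = 2^{2d−1} d r^{d−1}, and the same bound holds for the upper surface area λ̄(∂A_{⊞r}). -/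
open MeasureTheory Set Filter
open scoped ENNReal Pointwise

/-- The closed unit `ℓ∞` ball `C = [−1,1]^d` in `ℝ^d`. -/
def unitCube (d : ℕ) : Set (EuclideanSpace ℝ (Fin d)) := {x | ∀ i, |x i| ≤ 1}

namespace SurfProof

variable {d N : ℕ}

def box (c : EuclideanSpace ℝ (Fin d)) (s : Fin d → ℝ) : Set (EuclideanSpace ℝ (Fin d)) :=
  {p | ∀ j, |p j - c j| ≤ s j}

lemma mem_box {c : EuclideanSpace ℝ (Fin d)} {s : Fin d → ℝ} {p : EuclideanSpace ℝ (Fin d)} :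
    p ∈ box c s ↔ ∀ j, |p j - c j| ≤ s j := Iff.rfl

lemma box_eq_preimage (c : EuclideanSpace ℝ (Fin d)) (s : Fin d → ℝ) :
    box c s = ((MeasurableEquiv.toLp 2 (Fin d → ℝ)).symm) ⁻¹'
      (Set.univ.pi fun j => Set.Icc (c j - s j) (c j + s j)) := by
  ext p
  simp only [box, Set.mem_setOf_eq, Set.mem_preimage, Set.mem_pi, Set.mem_univ, true_implies,
    Set.mem_Icc]
  have he : ∀ j, ((MeasurableEquiv.toLp 2 (Fin d → ℝ)).symm) p j = p j := fun _ => rfl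
  simp only [he]
  constructor
  · intro h j
    have := abs_le.mp (h j)
    exact ⟨by linarith [this.1], by linarith [this.2]⟩
  · intro h j
    rcases h j with ⟨h1, h2⟩
    exact abs_le.mpr ⟨by linarith, by linarith⟩

lemma measurableSet_box (c : EuclideanSpace ℝ (Fin d)) (s : Fin d → ℝ) :
    MeasurableSet (box c s) := by
  rw [box_eq_preimage]
  exact ((MeasurableEquiv.toLp 2 (Fin d → ℝ)).symm).measurable
    (MeasurableSet.univ_pi fun j => measurableSet_Icc)

lemma volume_box (c : EuclideanSpace ℝ (Fin d)) (s : Fin d → ℝ) :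
    volume (box c s) = ∏ j, ENNReal.ofReal (2 * s j) := by
  rw [box_eq_preimage,
    (EuclideanSpace.volume_preserving_symm_measurableEquiv_toLp (Fin d)).measure_preimage
      (MeasurableSet.univ_pi fun j => measurableSet_Icc).nullMeasurableSet,
    volume_pi_pi]
  congr 1
  ext j
  rw [Real.volume_Icc]
  ring_nf


def sfun (r δ : ℝ) (k : ℕ) : Fin d → ℝ := fun j => if (j : ℕ) < k then r + δ else r

def SS (r δ : ℝ) (x : Fin (N+1) → EuclideanSpace ℝ (Fin d)) (k : ℕ) :
    Set (EuclideanSpace ℝ (Fin d)) := ⋃ i, box (x i) (sfun r δ k)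

lemma shift_apply (p : EuclideanSpace ℝ (Fin d)) (t : ℝ) (kf j : Fin d) :
    (p + t • EuclideanSpace.single kf (1:ℝ)) j = p j + (if j = kf then t else 0) := by
  have : (p + t • EuclideanSpace.single kf (1:ℝ)) j
      = p j + t * (EuclideanSpace.single kf (1:ℝ)) j := by simp
  rw [this, EuclideanSpace.single_apply]
  split <;> ring

lemma sfun_apply_lt (r δ : ℝ) {k : ℕ} {j : Fin d} (h : (j:ℕ) < k) : sfun r δ k j = r + δ :=
  if_pos h
lemma sfun_apply_ge (r δ : ℝ) {k : ℕ} {j : Fin d} (h : ¬ (j:ℕ) < k) : sfun r δ k j = r :=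
  if_neg h

lemma sfun_le (r δ : ℝ) (hδ : 0 ≤ δ) (k : ℕ) (j : Fin d) : sfun r δ k j ≤ r + δ := by
  unfold sfun; split <;> linarith

lemma sfun_succ_ne (r δ : ℝ) {k : ℕ} (hk : k < d) {j : Fin d} (hj : j ≠ ⟨k, hk⟩) :
    sfun r δ (k+1) j = sfun r δ k j := by
  unfold sfun
  have : ((j:ℕ) < k + 1) ↔ ((j:ℕ) < k) := by
    constructor
    · intro h
      rcases Nat.lt_succ_iff_lt_or_eq.mp h with h' | h'
      · exact h'
      · exact absurd (Fin.ext h' : j = ⟨k, hk⟩) hj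
    · omega
  simp [this]

/-- key escape lemma: if `p ∈ W` and `p` shifted by `m` steps is in `W`, then `p` shifted
by one step is in `W`. -/
lemma escape {r δ : ℝ} (hδ : 0 < δ) {x : Fin (N+1) → EuclideanSpace ℝ (Fin d)}
    (hx : ∀ i j, |x i j - x 0 j| ≤ r)
    {k : ℕ} (hk : k < d) {ε : ℝ} (hε : ε = 1 ∨ ε = -1)
    {p : EuclideanSpace ℝ (Fin d)} (hp : p ∈ SS r δ x (k+1))
    {m : ℕ} (hm : 1 ≤ m)
    (hpm : p + (-(ε*(m*δ))) • EuclideanSpace.single (⟨k,hk⟩ : Fin d) (1:ℝ) ∈ SS r δ x (k+1)) :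
    p + (-(ε*δ)) • EuclideanSpace.single (⟨k,hk⟩ : Fin d) (1:ℝ) ∈ SS r δ x (k+1) := by
  classical
  set kf : Fin d := ⟨k, hk⟩ with hkf
  obtain ⟨a, ha⟩ := Set.mem_iUnion.mp hp
  obtain ⟨b, hb⟩ := Set.mem_iUnion.mp hpm
  have hka : |p kf - x a kf| ≤ r + δ := by
    have := ha kf
    rwa [sfun_apply_lt r δ (by simp [hkf, Nat.lt_succ_iff])] at this
  have hkb : |p kf + (-(ε*(m*δ))) - x b kf| ≤ r + δ := by
    have := hb kf
    rw [shift_apply, if_pos rfl] at this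
    rwa [sfun_apply_lt r δ (by simp [hkf, Nat.lt_succ_iff])] at this
  have hmδ : δ ≤ (m:ℝ) * δ := by
    have hm' : (1:ℝ) ≤ (m:ℝ) := by exact_mod_cast hm
    nlinarith
  have hxa := abs_le.mp (hx a kf)
  have hxb := abs_le.mp (hx b kf)
  have hka' := abs_le.mp hka
  have hkb' := abs_le.mp hkb
  -- decide which box to use
  rcases hε with hε | hε
  · subst hε
    by_cases hside : x 0 kf ≤ p kf - δ
    · refine Set.mem_iUnion.mpr ⟨a, fun j => ?_⟩
      rw [shift_apply]
      by_cases hj : j = kf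
      · subst hj
        rw [if_pos rfl, sfun_apply_lt r δ (by simp [hkf, Nat.lt_succ_iff])]
        rw [abs_le]; constructor <;> [linarith; linarith]
      · rw [if_neg hj, add_zero]
        have := ha j; linarith [abs_nonneg (p j - x a j)]
    · refine Set.mem_iUnion.mpr ⟨b, fun j => ?_⟩
      rw [shift_apply]
      by_cases hj : j = kf
      · subst hj
        rw [if_pos rfl, sfun_apply_lt r δ (by simp [hkf, Nat.lt_succ_iff])]
        push_neg at hside
        rw [abs_le]; constructor
        · have : p kf + -(1*((m:ℝ)*δ)) - x b kf ≥ -(r+δ) := by linarith [hkb'.1]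
          linarith
        · linarith [hxb.2]
      · rw [if_neg hj, add_zero]
        have := hb j
        rwa [shift_apply, if_neg hj, add_zero] at this
  · subst hε
    by_cases hside : p kf + δ ≤ x 0 kf
    · refine Set.mem_iUnion.mpr ⟨a, fun j => ?_⟩
      rw [shift_apply]
      by_cases hj : j = kf
      · subst hj
        rw [if_pos rfl, sfun_apply_lt r δ (by simp [hkf, Nat.lt_succ_iff])]
        rw [abs_le]; constructor
        · have : -(-1*δ) = δ := by ring
          linarith [hka'.1]
        · linarith [hxa.2]
      · rw [if_neg hj, add_zero]
        have := ha j; linarith [abs_nonneg (p j - x a j)]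
    · refine Set.mem_iUnion.mpr ⟨b, fun j => ?_⟩
      rw [shift_apply]
      by_cases hj : j = kf
      · subst hj
        rw [if_pos rfl, sfun_apply_lt r δ (by simp [hkf, Nat.lt_succ_iff])]
        push_neg at hside
        rw [abs_le]; constructor
        · linarith [hxb.1]
        · have h1 : p kf + -(-1*((m:ℝ)*δ)) - x b kf ≤ r + δ := by linarith [hkb'.2]
          linarith
      · rw [if_neg hj, add_zero]
        have := hb j
        rwa [shift_apply, if_neg hj, add_zero] at this


/-- if both one-step shifts of `p` are in `W = SS (k+1)`, then `p ∈ SS k`. -/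
lemma middle {r δ : ℝ} (hδ : 0 < δ) {x : Fin (N+1) → EuclideanSpace ℝ (Fin d)}
    (hx : ∀ i j, |x i j - x 0 j| ≤ r)
    {k : ℕ} (hk : k < d)
    {p : EuclideanSpace ℝ (Fin d)}
    (hb : p + (-δ) • EuclideanSpace.single (⟨k,hk⟩ : Fin d) (1:ℝ) ∈ SS r δ x (k+1))
    (hc : p + δ • EuclideanSpace.single (⟨k,hk⟩ : Fin d) (1:ℝ) ∈ SS r δ x (k+1)) :
    p ∈ SS r δ x k := by
  classical
  set kf : Fin d := ⟨k, hk⟩ with hkf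
  obtain ⟨b, hbb⟩ := Set.mem_iUnion.mp hb
  obtain ⟨c, hcc⟩ := Set.mem_iUnion.mp hc
  have hkb : |p kf + -δ - x b kf| ≤ r + δ := by
    have := hbb kf
    rw [shift_apply, if_pos rfl] at this
    rwa [sfun_apply_lt r δ (by simp [hkf, Nat.lt_succ_iff])] at this
  have hkc : |p kf + δ - x c kf| ≤ r + δ := by
    have := hcc kf
    rw [shift_apply, if_pos rfl] at this
    rwa [sfun_apply_lt r δ (by simp [hkf, Nat.lt_succ_iff])] at this
  have hxb := abs_le.mp (hx b kf)
  have hxc := abs_le.mp (hx c kf)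
  have hkb' := abs_le.mp hkb
  have hkc' := abs_le.mp hkc
  by_cases hside : x 0 kf ≤ p kf
  · refine Set.mem_iUnion.mpr ⟨c, fun j => ?_⟩
    by_cases hj : j = kf
    · subst hj
      rw [sfun_apply_ge r δ (by simp [hkf])]
      rw [abs_le]; constructor <;> linarith [hkc'.2, hxc.1]
    · have := hcc j
      rw [shift_apply, if_neg hj, add_zero, sfun_succ_ne r δ hk hj] at this
      exact this
  · push_neg at hside
    refine Set.mem_iUnion.mpr ⟨b, fun j => ?_⟩
    by_cases hj : j = kf
    · subst hj
      rw [sfun_apply_ge r δ (by simp [hkf])]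
      rw [abs_le]; constructor <;> linarith [hkb'.1, hxb.2]
    · have := hbb j
      rw [shift_apply, if_neg hj, add_zero, sfun_succ_ne r δ hk hj] at this
      exact this

/-- covering: `SS (k+1) ⊆ SS k ∪ P₁ ∪ P₋₁`. -/
lemma cover {r δ : ℝ} (hδ : 0 < δ) {x : Fin (N+1) → EuclideanSpace ℝ (Fin d)}
    (hx : ∀ i j, |x i j - x 0 j| ≤ r) {k : ℕ} (hk : k < d) :
    SS r δ x (k+1) ⊆ SS r δ x k
      ∪ {p | p ∈ SS r δ x (k+1) ∧
          p + (-((1:ℝ)*δ)) • EuclideanSpace.single (⟨k,hk⟩ : Fin d) (1:ℝ) ∉ SS r δ x (k+1)}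
      ∪ {p | p ∈ SS r δ x (k+1) ∧
          p + (-((-1:ℝ)*δ)) • EuclideanSpace.single (⟨k,hk⟩ : Fin d) (1:ℝ) ∉ SS r δ x (k+1)} := by
  intro p hp
  have e1 : (-((1:ℝ)*δ)) = -δ := by ring
  have e2 : (-((-1:ℝ)*δ)) = δ := by ring
  rw [e1, e2]
  by_cases h1 : p + (-δ) • EuclideanSpace.single (⟨k,hk⟩ : Fin d) (1:ℝ) ∈ SS r δ x (k+1)
  · by_cases h2 : p + δ • EuclideanSpace.single (⟨k,hk⟩ : Fin d) (1:ℝ) ∈ SS r δ x (k+1)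
    · exact Or.inl (Or.inl (middle hδ hx hk h1 h2))
    · exact Or.inr ⟨hp, h2⟩
  · exact Or.inl (Or.inr ⟨hp, h1⟩)

/-- `SS` is contained in a big box around `x 0`. -/
lemma SS_subset_bigbox {r δ : ℝ} (hδ : 0 ≤ δ) {x : Fin (N+1) → EuclideanSpace ℝ (Fin d)}
    (hx : ∀ i j, |x i j - x 0 j| ≤ r) (k : ℕ) :
    SS r δ x k ⊆ box (x 0) (fun _ => 2*r + δ) := by
  intro p hp
  obtain ⟨i, hi⟩ := Set.mem_iUnion.mp hp
  intro j
  have h1 := hi j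
  have h2 := hx i j
  have h3 := sfun_le r δ hδ k j
  calc |p j - x 0 j| ≤ |p j - x i j| + |x i j - x 0 j| := abs_sub_le _ _ _
    _ ≤ (r + δ) + r := by linarith
    _ = 2*r + δ := by ring

lemma measurableSet_SS (r δ : ℝ) (x : Fin (N+1) → EuclideanSpace ℝ (Fin d)) (k : ℕ) :
    MeasurableSet (SS r δ x k) :=
  MeasurableSet.iUnion fun i => measurableSet_box _ _


lemma real_aux {p a b : ℝ} (h : ∀ M : ℕ, ((M:ℝ)+1) * p ≤ a + M * b) : p ≤ b := by
  have hseq : Tendsto (fun M : ℕ => (a + M * b)/((M:ℝ)+1)) atTop (nhds b) := by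
    have h1 := tendsto_one_div_add_atTop_nhds_zero_nat (𝕜 := ℝ)
    have h2 : Tendsto (fun M : ℕ => b + (a - b) * (1/((M:ℝ)+1))) atTop (nhds (b + (a-b)*0)) :=
      tendsto_const_nhds.add (h1.const_mul (a - b))
    rw [mul_zero, add_zero] at h2
    refine h2.congr fun M => ?_
    have hM : ((M:ℝ)+1) ≠ 0 := by positivity
    field_simp
    ring
  refine ge_of_tendsto' hseq fun M => ?_
  have hM : (0:ℝ) < (M:ℝ) + 1 := by positivity
  rw [le_div_iff₀ hM]
  linarith [h M]

lemma volume_SS_ne_top {r δ : ℝ} (hδ : 0 ≤ δ) {x : Fin (N+1) → EuclideanSpace ℝ (Fin d)}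
    (hx : ∀ i j, |x i j - x 0 j| ≤ r) (k : ℕ) : volume (SS r δ x k) ≠ ⊤ := by
  refine ne_top_of_le_ne_top ?_ (measure_mono (SS_subset_bigbox hδ hx k))
  rw [volume_box]
  exact (ENNReal.prod_lt_top fun j _ => ENNReal.ofReal_lt_top).ne

lemma side_bound {r δ : ℝ} (hr : 0 < r) (hδ : 0 < δ)
    {x : Fin (N+1) → EuclideanSpace ℝ (Fin d)} (hx : ∀ i j, |x i j - x 0 j| ≤ r)
    {k : ℕ} (hk : k < d) {ε : ℝ} (hε : ε = 1 ∨ ε = -1) :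
    volume {p | p ∈ SS r δ x (k+1) ∧
        p + (-(ε*δ)) • EuclideanSpace.single (⟨k,hk⟩ : Fin d) (1:ℝ) ∉ SS r δ x (k+1)}
      ≤ ENNReal.ofReal (δ * (4*r + 2*δ) ^ (d-1)) := by
  classical
  set kf : Fin d := ⟨k, hk⟩ with hkf
  set u : EuclideanSpace ℝ (Fin d) := EuclideanSpace.single kf (1:ℝ) with hu
  set W : Set (EuclideanSpace ℝ (Fin d)) := SS r δ x (k+1) with hW
  set P : Set (EuclideanSpace ℝ (Fin d)) :=
    {p | p ∈ W ∧ p + (-(ε*δ)) • u ∉ W} with hP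
  -- the escaping sets
  set G : ℕ → Set (EuclideanSpace ℝ (Fin d)) := fun M =>
    W \ ⋃ m ∈ Finset.Icc 1 M, ((fun p => p + (-(ε*((m:ℝ)*δ))) • u) ⁻¹' W) with hG
  have hWmeas : MeasurableSet W := measurableSet_SS r δ x (k+1)
  have hGmeas : ∀ M, MeasurableSet (G M) := by
    intro M
    refine hWmeas.diff (MeasurableSet.biUnion (Finset.Icc 1 M).countable_toSet
      fun m _ => ?_)
    exact (measurable_add_const _) hWmeas
  have hPG : ∀ M : ℕ, P ⊆ G M := by
    intro M p hp
    refine ⟨hp.1, fun hmem => ?_⟩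
    simp only [Set.mem_iUnion, Set.mem_preimage, Finset.mem_Icc] at hmem
    obtain ⟨m, ⟨hm1, _⟩, hpm⟩ := hmem
    exact hp.2 (escape hδ hx hk hε hp.1 hm1 hpm)
  -- translates of G M
  have key : ∀ M : ℕ, ((M:ℝ≥0∞)+1) * volume (G M)
      ≤ ENNReal.ofReal (4*r+2*δ + M*δ) * ENNReal.ofReal (4*r+2*δ) ^ (d-1) := by
    intro M
    set H : ℕ → Set (EuclideanSpace ℝ (Fin d)) := fun l =>
      (fun p => p + (-(ε*((l:ℝ)*δ))) • u) ⁻¹' (G M) with hH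
    have hHvol : ∀ l, volume (H l) = volume (G M) := fun l =>
      measure_preimage_add_right volume _ _
    have hHmeas : ∀ l, MeasurableSet (H l) := fun l =>
      (measurable_add_const _) (hGmeas M)
    have hHdisj : ∀ l ∈ Finset.range (M+1), ∀ l' ∈ Finset.range (M+1), l ≠ l' →
        Disjoint (H l) (H l') := by
      have main : ∀ l l', l < l' → l' ≤ M → Disjoint (H l) (H l') := by
        intro l l' hll hl'M
        rw [Set.disjoint_left]
        intro p hpl hpl'
        have hq : p + (-(ε*((l:ℝ)*δ))) • u ∈ G M := hpl
        have hq' : p + (-(ε*((l':ℝ)*δ))) • u ∈ G M := hpl'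
        have hvec : (p + (-(ε*((l:ℝ)*δ))) • u) + (-(ε*(((l'-l:ℕ):ℝ)*δ))) • u
            = p + (-(ε*((l':ℝ)*δ))) • u := by
          rw [add_assoc, ← add_smul]
          congr 1
          have : ((l'-l:ℕ):ℝ) = (l':ℝ) - l := by
            rw [Nat.cast_sub hll.le]
          rw [this]; ring
        refine hq.2 ?_
        simp only [Set.mem_iUnion, Set.mem_preimage, Finset.mem_Icc]
        exact ⟨l' - l, ⟨by omega, by omega⟩, by rw [hvec]; exact hq'.1⟩
      intro l hl l' hl' hne
      rcases lt_or_gt_of_ne hne with h | h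
      · exact main l l' h (by simpa [Nat.lt_succ_iff] using hl')
      · exact (main l' l h (by simpa [Nat.lt_succ_iff] using hl)).symm
    -- containment in big box
    set bigbox : Set (EuclideanSpace ℝ (Fin d)) :=
      box (x 0 + (ε*((M:ℝ)*δ)/2) • u) (fun j => if j = kf then 2*r+δ + (M:ℝ)*δ/2 else 2*r+δ)
      with hbig
    have hHsub : ∀ l ∈ Finset.range (M+1), H l ⊆ bigbox := by
      intro l hl p hpl
      have hl' : (l:ℝ) ≤ (M:ℝ) := by
        have := Finset.mem_range.mp hl; exact_mod_cast Nat.lt_succ_iff.mp this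
      have hl0 : (0:ℝ) ≤ (l:ℝ) := Nat.cast_nonneg l
      have hmem : p + (-(ε*((l:ℝ)*δ))) • u ∈ box (x 0) (fun _ => 2*r + δ) :=
        SS_subset_bigbox hδ.le hx (k+1) (hpl.1)
      intro j
      have hj1 := hmem j
      rw [shift_apply] at hj1
      dsimp only at hj1 ⊢
      have hcenter : (x 0 + (ε*((M:ℝ)*δ)/2) • u) j
          = x 0 j + (if j = kf then ε*((M:ℝ)*δ)/2 else 0) := shift_apply (x 0) _ kf j
      rw [hcenter]
      by_cases hj : j = kf
      · rw [if_pos hj] at hj1 ⊢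
        rw [if_pos hj]
        have hj2 := abs_le.mp hj1
        rw [abs_le]
        rcases hε with hε | hε <;> subst hε <;>
          constructor <;> nlinarith [hj2.1, hj2.2, hδ.le]
      · simp only [if_neg hj, add_zero] at hj1 ⊢
        exact hj1
    have hvol_bigbox : volume bigbox
        = ENNReal.ofReal (4*r+2*δ + M*δ) * ENNReal.ofReal (4*r+2*δ) ^ (d-1) := by
      rw [hbig, volume_box]
      rw [← Finset.mul_prod_erase Finset.univ _ (Finset.mem_univ kf)]
      have h1 : ENNReal.ofReal (2 * if kf = kf then 2*r+δ + (M:ℝ)*δ/2 else 2*r+δ)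
          = ENNReal.ofReal (4*r+2*δ + M*δ) := by
        rw [if_pos rfl]; congr 1; ring
      have h2 : ∀ j ∈ Finset.univ.erase kf,
          ENNReal.ofReal (2 * if j = kf then 2*r+δ + (M:ℝ)*δ/2 else 2*r+δ)
          = ENNReal.ofReal (4*r+2*δ) := by
        intro j hj
        rw [if_neg (Finset.mem_erase.mp hj).1]
        congr 1; ring
      rw [h1, Finset.prod_congr rfl h2, Finset.prod_const]
      congr 1
      rw [Finset.card_erase_of_mem (Finset.mem_univ kf), Finset.card_univ, Fintype.card_fin]
    calc ((M:ℝ≥0∞)+1) * volume (G M)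
        = ∑ l ∈ Finset.range (M+1), volume (H l) := by
          simp only [hHvol, Finset.sum_const, Finset.card_range, nsmul_eq_mul]
          congr 1
          push_cast
          ring
      _ = volume (⋃ l ∈ Finset.range (M+1), H l) :=
          (measure_biUnion_finset hHdisj fun l _ => hHmeas l).symm
      _ ≤ volume bigbox := measure_mono (Set.iUnion₂_subset hHsub)
      _ = _ := hvol_bigbox
  -- pass to the limit M → ∞
  have hGne : ∀ M, volume (G M) ≠ ⊤ := by
    intro M
    exact ne_top_of_le_ne_top (volume_SS_ne_top hδ.le hx (k+1))
      (measure_mono Set.diff_subset)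
  have hPne : volume P ≠ ⊤ := by
    refine ne_top_of_le_ne_top (volume_SS_ne_top hδ.le hx (k+1)) (measure_mono ?_)
    exact fun p hp => hp.1
  have hpow : (0:ℝ) ≤ (4*r+2*δ)^(d-1) := by positivity
  have hreal : ∀ M : ℕ, ((M:ℝ)+1) * (volume P).toReal
      ≤ ((4*r+2*δ)*(4*r+2*δ)^(d-1)) + M * (δ*(4*r+2*δ)^(d-1)) := by
    intro M
    have h1 : volume P ≤ volume (G M) := measure_mono (hPG M)
    have h2 := key M
    have h3 : ((M:ℝ≥0∞)+1) * volume P ≤ ENNReal.ofReal (4*r+2*δ + M*δ)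
        * ENNReal.ofReal (4*r+2*δ) ^ (d-1) :=
      le_trans (mul_le_mul_right h1 _) h2
    have h4 := ENNReal.toReal_mono (by
      exact ENNReal.mul_ne_top ENNReal.ofReal_ne_top
        (ENNReal.pow_ne_top ENNReal.ofReal_ne_top)) h3
    rw [ENNReal.toReal_mul, ENNReal.toReal_mul, ENNReal.toReal_pow,
      ENNReal.toReal_ofReal (by positivity), ENNReal.toReal_ofReal (by positivity)] at h4
    have h5 : ((M:ℝ≥0∞)+1).toReal = (M:ℝ)+1 := by
      rw [ENNReal.toReal_add (by simp) (by simp)]; simp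
    rw [h5] at h4
    calc ((M:ℝ)+1) * (volume P).toReal ≤ (4*r+2*δ + M*δ) * (4*r+2*δ)^(d-1) := h4
      _ = ((4*r+2*δ)*(4*r+2*δ)^(d-1)) + M * (δ*(4*r+2*δ)^(d-1)) := by ring
  have hfin : (volume P).toReal ≤ δ*(4*r+2*δ)^(d-1) := real_aux hreal
  exact (ENNReal.le_ofReal_iff_toReal_le hPne (by positivity)).mpr hfin


lemma step {r δ : ℝ} (hr : 0 < r) (hδ : 0 < δ)
    {x : Fin (N+1) → EuclideanSpace ℝ (Fin d)} (hx : ∀ i j, |x i j - x 0 j| ≤ r) (k : ℕ) :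
    volume (SS r δ x (k+1)) ≤ volume (SS r δ x k)
      + 2 * ENNReal.ofReal (δ * (4*r + 2*δ) ^ (d-1)) := by
  by_cases hk : k < d
  · have hcov := cover hδ hx hk
    have hside1 := side_bound (ε := 1) hr hδ hx hk (Or.inl rfl)
    have hside2 := side_bound (ε := -1) hr hδ hx hk (Or.inr rfl)
    calc volume (SS r δ x (k+1)) ≤ volume ((SS r δ x k
          ∪ {p | p ∈ SS r δ x (k+1) ∧
              p + (-((1:ℝ)*δ)) • EuclideanSpace.single (⟨k,hk⟩ : Fin d) (1:ℝ) ∉ SS r δ x (k+1)})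
          ∪ {p | p ∈ SS r δ x (k+1) ∧
              p + (-((-1:ℝ)*δ)) • EuclideanSpace.single (⟨k,hk⟩ : Fin d) (1:ℝ) ∉ SS r δ x (k+1)}) :=
        measure_mono hcov
      _ ≤ volume (SS r δ x k
          ∪ {p | p ∈ SS r δ x (k+1) ∧
              p + (-((1:ℝ)*δ)) • EuclideanSpace.single (⟨k,hk⟩ : Fin d) (1:ℝ) ∉ SS r δ x (k+1)})
          + volume {p | p ∈ SS r δ x (k+1) ∧
              p + (-((-1:ℝ)*δ)) • EuclideanSpace.single (⟨k,hk⟩ : Fin d) (1:ℝ) ∉ SS r δ x (k+1)} :=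
        measure_union_le _ _
      _ ≤ (volume (SS r δ x k)
          + volume {p | p ∈ SS r δ x (k+1) ∧
              p + (-((1:ℝ)*δ)) • EuclideanSpace.single (⟨k,hk⟩ : Fin d) (1:ℝ) ∉ SS r δ x (k+1)})
          + volume {p | p ∈ SS r δ x (k+1) ∧
              p + (-((-1:ℝ)*δ)) • EuclideanSpace.single (⟨k,hk⟩ : Fin d) (1:ℝ) ∉ SS r δ x (k+1)} :=
        add_le_add_left (measure_union_le _ _) _
      _ ≤ (volume (SS r δ x k) + ENNReal.ofReal (δ * (4*r + 2*δ) ^ (d-1)))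
          + ENNReal.ofReal (δ * (4*r + 2*δ) ^ (d-1)) :=
        add_le_add (add_le_add_right hside1 _) hside2
      _ = volume (SS r δ x k) + 2 * ENNReal.ofReal (δ * (4*r + 2*δ) ^ (d-1)) := by ring
  · have hs : sfun (d := d) r δ (k+1) = sfun r δ k := by
      funext j
      have hj : (j:ℕ) < d := j.isLt
      have h1 : (j:ℕ) < k + 1 := by omega
      have h2 : (j:ℕ) < k := by omega
      rw [sfun_apply_lt r δ h1, sfun_apply_lt r δ h2]
    have : SS r δ x (k+1) = SS r δ x k := by
      unfold SS; rw [hs]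
    rw [this]
    exact self_le_add_right _ _

lemma total {r δ : ℝ} (hr : 0 < r) (hδ : 0 < δ)
    {x : Fin (N+1) → EuclideanSpace ℝ (Fin d)} (hx : ∀ i j, |x i j - x 0 j| ≤ r) (n : ℕ) :
    volume (SS r δ x n) ≤ volume (SS r δ x 0)
      + (n : ℝ≥0∞) * (2 * ENNReal.ofReal (δ * (4*r + 2*δ) ^ (d-1))) := by
  induction n with
  | zero => simp
  | succ n ih =>
    calc volume (SS r δ x (n+1))
        ≤ volume (SS r δ x n) + 2 * ENNReal.ofReal (δ * (4*r + 2*δ) ^ (d-1)) :=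
          step hr hδ hx n
      _ ≤ (volume (SS r δ x 0) + (n : ℝ≥0∞) * (2 * ENNReal.ofReal (δ * (4*r + 2*δ) ^ (d-1))))
          + 2 * ENNReal.ofReal (δ * (4*r + 2*δ) ^ (d-1)) := add_le_add_left ih _
      _ = volume (SS r δ x 0)
          + ((n:ℕ)+1 : ℝ≥0∞) * (2 * ENNReal.ofReal (δ * (4*r + 2*δ) ^ (d-1))) := by ring
      _ = _ := by push_cast; ring

lemma mem_smul_cube {c : ℝ} (hc : 0 < c) {y : EuclideanSpace ℝ (Fin d)} :
    y ∈ c • unitCube d ↔ ∀ j, |y j| ≤ c := by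
  constructor
  · rintro ⟨z, hz, rfl⟩
    intro j
    show |(c • z) j| ≤ c
    have hzz : (c • z) j = c * z j := by simp
    rw [hzz, abs_mul, abs_of_pos hc]
    calc c * |z j| ≤ c * 1 := mul_le_mul_of_nonneg_left (hz j) hc.le
      _ = c := mul_one c
  · intro h
    refine ⟨c⁻¹ • y, fun j => ?_, ?_⟩
    · have hzz : (c⁻¹ • y) j = c⁻¹ * y j := by simp
      rw [hzz, abs_mul, abs_inv, abs_of_pos hc]
      rw [inv_mul_le_iff₀ hc, mul_one]
      exact h j
    · show c • c⁻¹ • y = y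
      rw [smul_smul, mul_inv_cancel₀ hc.ne', one_smul]

lemma A_eq {r : ℝ} (δ : ℝ) (hr : 0 < r) (x : Fin (N+1) → EuclideanSpace ℝ (Fin d)) :
    Set.range x + r • unitCube d = SS r δ x 0 := by
  ext p
  constructor
  · rintro ⟨q, ⟨i, rfl⟩, w, hw, rfl⟩
    refine Set.mem_iUnion.mpr ⟨i, fun j => ?_⟩
    rw [sfun_apply_ge r δ (by omega)]
    have hq : (x i + w) j - x i j = w j := by simp
    rw [hq]
    exact (mem_smul_cube hr).mp hw j
  · intro hp
    obtain ⟨i, hi⟩ := Set.mem_iUnion.mp hp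
    refine ⟨x i, ⟨i, rfl⟩, p - x i, (mem_smul_cube hr).mpr fun j => ?_, by module⟩
    have := hi j
    rw [sfun_apply_ge r δ (by omega)] at this
    have hq : (p - x i) j = p j - x i j := by simp
    rw [hq]
    exact this

lemma add_cube_subset {r δ : ℝ} (hr : 0 < r) (hδ : 0 < δ)
    (x : Fin (N+1) → EuclideanSpace ℝ (Fin d)) :
    (Set.range x + r • unitCube d) + δ • unitCube d ⊆ SS r δ x d := by
  rintro p ⟨q, hq, w, hw, rfl⟩
  rw [A_eq δ hr x] at hq
  obtain ⟨i, hi⟩ := Set.mem_iUnion.mp hq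
  refine Set.mem_iUnion.mpr ⟨i, fun j => ?_⟩
  rw [sfun_apply_lt r δ j.isLt]
  have h1 := hi j
  rw [sfun_apply_ge r δ (by omega)] at h1
  have h2 := (mem_smul_cube hδ).mp hw j
  have hq : (q + w) j - x i j = (q j - x i j) + w j := by
    have : (q + w) j = q j + w j := by simp
    rw [this]; ring
  rw [hq]
  calc |(q j - x i j) + w j| ≤ |q j - x i j| + |w j| := abs_add_le _ _
    _ ≤ r + δ := add_le_add h1 h2

lemma unitBall_subset : unitBall d ⊆ unitCube d := by
  intro y hy j
  have h1 : |y j| ≤ ‖y‖ := by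
    rw [EuclideanSpace.norm_eq]
    have h2 : |y j| = Real.sqrt (‖y j‖^2) := by
      rw [Real.sqrt_sq_eq_abs, Real.norm_eq_abs, abs_abs]
    rw [h2]
    apply Real.sqrt_le_sqrt
    exact Finset.single_le_sum (fun i _ => sq_nonneg ‖y i‖) (Finset.mem_univ j)
  have h2 : ‖y‖ ≤ 1 := by
    simpa [unitBall, Metric.mem_closedBall, dist_zero_right] using hy
  linarith

lemma limsup_helper {K A' : Set (EuclideanSpace ℝ (Fin d))} {r : ℝ} (hr : 0 < r)
    (h : ∀ δ : ℝ, 0 < δ → volume (A' + δ • K) ≤ volume A'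
        + ENNReal.ofReal ((2*(d:ℝ)*(4*r+2*δ)^(d-1)) * δ)) :
    upperSurf K A' ≤ ENNReal.ofReal (2*(d:ℝ)*(4*r)^(d-1)) := by
  have h1 : ∀ᶠ δ in (nhdsWithin (0:ℝ) (Set.Ioi 0)),
      (volume (A' + δ • K) - volume A') / ENNReal.ofReal δ
        ≤ ENNReal.ofReal (2*(d:ℝ)*(4*r+2*δ)^(d-1)) := by
    filter_upwards [self_mem_nhdsWithin] with δ hδ
    rw [Set.mem_Ioi] at hδ
    have h2 : volume (A' + δ • K) - volume A'
        ≤ ENNReal.ofReal ((2*(d:ℝ)*(4*r+2*δ)^(d-1)) * δ) :=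
      tsub_le_iff_left.mpr (h δ hδ)
    have h3 := ENNReal.div_le_div_right h2 (ENNReal.ofReal δ)
    refine h3.trans (le_of_eq ?_)
    rw [← ENNReal.ofReal_div_of_pos hδ, mul_div_assoc, div_self hδ.ne', mul_one]
  have h4 : Tendsto (fun δ : ℝ => ENNReal.ofReal (2*(d:ℝ)*(4*r+2*δ)^(d-1)))
      (nhdsWithin 0 (Set.Ioi 0)) (nhds (ENNReal.ofReal (2*(d:ℝ)*(4*r)^(d-1)))) := by
    have hc : Continuous fun δ : ℝ => (2*(d:ℝ)*(4*r+2*δ)^(d-1)) := by continuity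
    have h5 := (ENNReal.continuous_ofReal.comp hc).tendsto 0
    simp only [Function.comp] at h5
    have h0 : 2*(d:ℝ)*(4*r+2*(0:ℝ))^(d-1) = 2*(d:ℝ)*(4*r)^(d-1) := by norm_num
    rw [h0] at h5
    exact h5.mono_left nhdsWithin_le_nhds
  exact le_trans (limsup_le_limsup h1) (le_of_eq h4.limsup_eq)

end SurfProof


/-- For `d ≥ 1`, `r > 0`, `N ≥ 1` and points `x_0, …, x_N ∈ ℝ^d` with
`‖x_i − x_0‖_∞ ≤ r`, both the upper `C`-surface area and the upper (Euclidean) surface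
area of `A_{⊞r}` (where `A = {x_0, …, x_N}`) are at most `2d(4r)^{d−1}`. -/
theorem upperSurf_cube_parallel_set_le
    (d : ℕ) (hd : 1 ≤ d) (r : ℝ) (hr : 0 < r) (N : ℕ) (hN : 1 ≤ N)
    (x : Fin (N + 1) → EuclideanSpace ℝ (Fin d))
    (hx : ∀ i j, |x i j - x 0 j| ≤ r) :
    upperSurf (unitCube d) (Set.range x + r • unitCube d) ≤
        ENNReal.ofReal (2 * d * (4 * r) ^ (d - 1)) ∧
    upperSurf (unitBall d) (Set.range x + r • unitCube d) ≤
        ENNReal.ofReal (2 * d * (4 * r) ^ (d - 1)) := by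
  have hcube : ∀ δ : ℝ, 0 < δ →
      volume ((Set.range x + r • unitCube d) + δ • unitCube d)
      ≤ volume (Set.range x + r • unitCube d)
        + ENNReal.ofReal ((2*(d:ℝ)*(4*r+2*δ)^(d-1)) * δ) := by
    intro δ hδ
    have e1 := SurfProof.A_eq (d := d) (N := N) δ hr x
    calc volume ((Set.range x + r • unitCube d) + δ • unitCube d)
        ≤ volume (SurfProof.SS r δ x d) :=
          measure_mono (SurfProof.add_cube_subset hr hδ x)
      _ ≤ volume (SurfProof.SS r δ x 0)
          + (d : ℝ≥0∞) * (2 * ENNReal.ofReal (δ * (4*r + 2*δ) ^ (d-1))) :=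
          SurfProof.total hr hδ hx d
      _ = volume (Set.range x + r • unitCube d)
          + ENNReal.ofReal ((2*(d:ℝ)*(4*r+2*δ)^(d-1)) * δ) := by
          rw [← e1]
          congr 1
          rw [← ENNReal.ofReal_natCast d, ← ENNReal.ofReal_ofNat 2,
            ← ENNReal.ofReal_mul (by positivity), ← ENNReal.ofReal_mul (by positivity)]
          congr 1
          ring
  constructor
  · exact SurfProof.limsup_helper hr hcube
  · refine SurfProof.limsup_helper hr fun δ hδ => ?_
    refine le_trans (measure_mono (Set.add_subset_add_left
      (Set.smul_set_mono SurfProof.unitBall_subset))) (hcube δ hδ)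
end

section
/- Let d ≥ 1, r > 0, δ > 0, and N ≥ 1. Let x_0, x_1, …, x_N ∈ ℝ^d satisfy ‖x_i − x_0‖_∞ ≤ r for all 0 ≤ i ≤ N, and let A = {x_0, x_1, …, x_N}. Then λ(A_{⊞(r+δ)} \ A_{⊞r}) ≤ 2^{2d−1} ((r+δ)^d − r^d). -/
set_option maxHeartbeats 1000000


open MeasureTheory Set Filter
open scoped ENNReal Pointwise

namespace CubeAnnulus

variable {n : ℕ}

def box (u w : Fin n → ℝ) (s : ℝ) : Set (Fin n → ℝ) :=
  {z | ∀ k, u k - s ≤ z k ∧ z k ≤ w k + s}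

lemma box_eq_pi (u w : Fin n → ℝ) (s : ℝ) :
    box u w s = Set.pi Set.univ (fun k => Icc (u k - s) (w k + s)) := by
  ext z; simp only [box, mem_setOf_eq, Set.mem_pi, Set.mem_univ, Set.mem_Icc, true_implies]

lemma measurableSet_box (u w : Fin n → ℝ) (s : ℝ) : MeasurableSet (box u w s) := by
  rw [box_eq_pi]; exact MeasurableSet.univ_pi fun k => measurableSet_Icc

lemma box_mono (u w : Fin n → ℝ) {a b : ℝ} (h : a ≤ b) : box u w a ⊆ box u w b := by
  intro z hz k
  exact ⟨by linarith [(hz k).1], by linarith [(hz k).2]⟩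

lemma volume_box (p : Fin n → ℝ) {s : ℝ} (hs : 0 ≤ s) :
    volume (box p p s) = ENNReal.ofReal ((2*s)^n) := by
  rw [box_eq_pi, volume_pi_pi]
  have h : ∀ k : Fin n, volume (Icc (p k - s) (p k + s)) = ENNReal.ofReal (2*s) := by
    intro k; rw [Real.volume_Icc]; congr 1; ring
  rw [Finset.prod_congr rfl (fun k _ => h k), Finset.prod_const, Finset.card_univ,
    Fintype.card_fin, ← ENNReal.ofReal_pow (by linarith)]

lemma box_inter (u₁ w₁ u₂ w₂ : Fin n → ℝ) (s : ℝ) :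
    box (fun k => max (u₁ k) (u₂ k)) (fun k => min (w₁ k) (w₂ k)) s
      = box u₁ w₁ s ∩ box u₂ w₂ s := by
  ext z
  simp only [box, mem_inter_iff, mem_setOf_eq]
  constructor
  · intro h
    refine ⟨fun k => ⟨?_, ?_⟩, fun k => ⟨?_, ?_⟩⟩
    · have h1 := (h k).1; have h2 := le_max_left (u₁ k) (u₂ k); linarith
    · have h1 := (h k).2; have h2 := min_le_left (w₁ k) (w₂ k); linarith
    · have h1 := (h k).1; have h2 := le_max_right (u₁ k) (u₂ k); linarith
    · have h1 := (h k).2; have h2 := min_le_right (w₁ k) (w₂ k); linarith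
  · rintro ⟨h₁, h₂⟩ k
    constructor
    · have h := max_le_iff.mpr ⟨(by linarith [(h₁ k).1] : u₁ k ≤ z k + s),
        (by linarith [(h₂ k).1] : u₂ k ≤ z k + s)⟩
      linarith
    · have h := le_min_iff.mpr ⟨(by linarith [(h₁ k).2] : z k - s ≤ w₁ k),
        (by linarith [(h₂ k).2] : z k - s ≤ w₂ k)⟩
      linarith

def fam (ι : Type) [Fintype ι] (u w : ι → Fin n → ℝ) (s : ℝ) : Set (Fin n → ℝ) :=
  ⋃ α, box (u α) (w α) s

lemma measurableSet_fam (ι : Type) [Fintype ι] (u w : ι → Fin n → ℝ) (s : ℝ) :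
    MeasurableSet (fam ι u w s) :=
  MeasurableSet.iUnion fun α => measurableSet_box _ _ _

lemma fam_mono (ι : Type) [Fintype ι] (u w : ι → Fin n → ℝ) {a b : ℝ} (h : a ≤ b) :
    fam ι u w a ⊆ fam ι u w b :=
  iUnion_mono fun α => box_mono _ _ h

lemma fam_subset_box (ι : Type) [Fintype ι] (u w : ι → Fin n → ℝ) (p : Fin n → ℝ) (r : ℝ)
    (hu : ∀ α k, |u α k - p k| ≤ r) (hw : ∀ α k, |w α k - p k| ≤ r) (s : ℝ) :
    fam ι u w s ⊆ box p p (r + s) := by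
  intro z hz
  obtain ⟨α, hα⟩ := mem_iUnion.1 hz
  intro k
  have h1 := abs_le.1 (hu α k); have h2 := abs_le.1 (hw α k)
  have h3 := hα k
  exact ⟨by linarith [h3.1, h1.2], by linarith [h3.2, h2.1]⟩

lemma iUnion_Icc_eq {ι : Type} (F : Finset ι) (hF : F.Nonempty)
    (l r : ι → ℝ) (c : ℝ) (h : ∀ α ∈ F, l α ≤ c ∧ c ≤ r α) :
    (⋃ α ∈ F, Icc (l α) (r α)) = Icc (F.inf' hF l) (F.sup' hF r) := by
  apply Subset.antisymm
  · exact iUnion₂_subset fun α hα => Icc_subset_Icc (Finset.inf'_le _ hα) (Finset.le_sup' _ hα)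
  · intro t ht
    rcases le_total t c with htc | htc
    · obtain ⟨α, hα, hαe⟩ := Finset.exists_mem_eq_inf' hF l
      exact mem_iUnion₂.2 ⟨α, hα, ⟨by rw [← hαe]; exact ht.1, le_trans htc (h α hα).2⟩⟩
    · obtain ⟨α, hα, hαe⟩ := Finset.exists_mem_eq_sup' hF r
      exact mem_iUnion₂.2 ⟨α, hα, ⟨le_trans (h α hα).1 htc, by rw [← hαe]; exact ht.2⟩⟩

lemma insertNth_mem_box_iff (u w : Fin (n+1) → ℝ) (s t : ℝ) (zh : Fin n → ℝ) :
    Fin.insertNth 0 t zh ∈ box u w s ↔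
      ((u 0 - s ≤ t ∧ t ≤ w 0 + s) ∧
        zh ∈ box (fun j => u j.succ) (fun j => w j.succ) s) := by
  constructor
  · intro h
    refine ⟨by simpa using h 0, fun j => ?_⟩
    have hj := h j.succ
    rwa [← Fin.zero_succAbove j, Fin.insertNth_apply_succAbove] at hj
  · rintro ⟨h0, hrest⟩ k
    refine Fin.cases ?_ (fun j => ?_) k
    · simpa using h0
    · rw [← Fin.zero_succAbove j, Fin.insertNth_apply_succAbove]
      exact hrest j

lemma two_pow_mul_pow_diff_le (d : ℕ) (hd : 1 ≤ d) {r δ : ℝ} (hr : 0 ≤ r) (hδ : 0 ≤ δ) :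
    2 ^ d * ((2*r + δ) ^ d - (2*r) ^ d) ≤ 2 ^ (2*d - 1) * ((r + δ) ^ d - r ^ d) := by
  have key : (2*r + δ) ^ d - (2*r) ^ d ≤ 2 ^ (d-1) * ((r + δ) ^ d - r ^ d) := by
    have e1 : (2*r + δ) ^ d = ∑ m ∈ Finset.range (d+1), (2*r) ^ m * δ ^ (d - m) * (d.choose m) :=
      add_pow (2*r) δ d
    have e2 : (r + δ) ^ d = ∑ m ∈ Finset.range (d+1), r ^ m * δ ^ (d - m) * (d.choose m) :=
      add_pow r δ d
    have l1 : (2*r + δ) ^ d - (2*r) ^ d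
        = ∑ m ∈ Finset.range d, (2*r) ^ m * δ ^ (d - m) * (d.choose m) := by
      rw [e1, Finset.sum_range_succ]; simp
    have l2 : (r + δ) ^ d - r ^ d
        = ∑ m ∈ Finset.range d, r ^ m * δ ^ (d - m) * (d.choose m) := by
      rw [e2, Finset.sum_range_succ]; simp
    rw [l1, l2, Finset.mul_sum]
    apply Finset.sum_le_sum
    intro m hm
    have hm' : m ≤ d - 1 := by have := Finset.mem_range.1 hm; omega
    have h2 : (2:ℝ)^m ≤ 2^(d-1) := pow_le_pow_right₀ (by norm_num) hm'
    have he : (2*r)^m * δ^(d-m) * (d.choose m : ℝ)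
        = 2^m * (r^m * δ^(d-m) * (d.choose m : ℝ)) := by ring
    rw [he]
    exact mul_le_mul_of_nonneg_right h2 (by positivity)
  calc 2^d * ((2*r+δ)^d - (2*r)^d) ≤ 2^d * (2^(d-1) * ((r+δ)^d - r^d)) :=
        mul_le_mul_of_nonneg_left key (by positivity)
    _ = 2^(2*d-1) * ((r+δ)^d - r^d) := by
        rw [← mul_assoc, ← pow_add]
        congr 2
        omega


lemma inf'_sub_const {ι : Type} (F : Finset ι) (hF : F.Nonempty) (f : ι → ℝ) (c : ℝ) :
    F.inf' hF (fun α => f α - c) = F.inf' hF f - c := by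
  apply le_antisymm
  · obtain ⟨α, hα, he⟩ := Finset.exists_mem_eq_inf' hF f
    calc F.inf' hF (fun α => f α - c) ≤ f α - c := Finset.inf'_le _ hα
      _ = F.inf' hF f - c := by rw [he]
  · apply Finset.le_inf'
    intro α hα
    have := Finset.inf'_le f hα
    linarith

lemma sup'_add_const {ι : Type} (F : Finset ι) (hF : F.Nonempty) (f : ι → ℝ) (c : ℝ) :
    F.sup' hF (fun α => f α + c) = F.sup' hF f + c := by
  apply le_antisymm
  · apply Finset.sup'_le
    intro α hα
    have := Finset.le_sup' f hα
    linarith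
  · obtain ⟨α, hα, he⟩ := Finset.exists_mem_eq_sup' hF f
    calc F.sup' hF f + c = f α + c := by rw [he]
      _ ≤ F.sup' hF (fun α => f α + c) := Finset.le_sup' (fun α => f α + c) hα

lemma main_ineq : ∀ (n : ℕ) (ι : Type) [Fintype ι] [Nonempty ι]
    (u w : ι → Fin n → ℝ) (p : Fin n → ℝ) (r a b : ℝ),
    0 < r → (∀ α k, |u α k - p k| ≤ r) → (∀ α k, |w α k - p k| ≤ r) →
    r ≤ a → a ≤ b →
    volume (fam ι u w b \ fam ι u w a)
      ≤ ENNReal.ofReal (2 ^ n * ((r + b) ^ n - (r + a) ^ n)) := by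
  intro n
  induction n with
  | zero =>
    intro ι _ _ u w p r a b hr hu hw hra hab
    have huniv : fam ι u w a = univ := by
      obtain ⟨α⟩ := (inferInstance : Nonempty ι)
      exact eq_univ_of_forall fun z => mem_iUnion.2 ⟨α, fun k => k.elim0⟩
    rw [huniv, diff_univ]
    simp
  | succ n IH =>
    intro ι _ _ u w p r a b hr hu hw hra hab
    classical
    set V : ℝ → ℝ → Set (Fin n → ℝ) := fun s t =>
      {zh | ∃ α β : ι, t ≤ w α 0 - u β 0
        ∧ zh ∈ box (fun j => u α j.succ) (fun j => w α j.succ) s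
        ∧ zh ∈ box (fun j => u β j.succ) (fun j => w β j.succ) s} with hV
    set Θf : ℝ → Set (ℝ × (Fin n → ℝ)) := fun s =>
      ⋃ α : ι, ⋃ β : ι, (Iic (w α 0 - u β 0)) ×ˢ
        (box (fun j => u α j.succ) (fun j => w α j.succ) s
          ∩ box (fun j => u β j.succ) (fun j => w β j.succ) s) with hΘf
    have hΘf_mem : ∀ s t zh, ((t, zh) ∈ Θf s ↔ zh ∈ V s t) := by
      intro s t zh
      simp only [hΘf, hV, mem_iUnion, Set.mem_prod, mem_Iic, mem_inter_iff, mem_setOf_eq]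
    have hΘfm : ∀ s, MeasurableSet (Θf s) := fun s =>
      MeasurableSet.iUnion fun α => MeasurableSet.iUnion fun β =>
        measurableSet_Iic.prod ((measurableSet_box _ _ _).inter (measurableSet_box _ _ _))
    set Θ : Set (ℝ × (Fin n → ℝ)) :=
      ((Ioc (-(2*r)) (2*r)) ×ˢ (univ : Set (Fin n → ℝ))) ∩ (Θf b \ Θf a) with hΘ
    have hΘm : MeasurableSet Θ :=
      (measurableSet_Ioc.prod MeasurableSet.univ).inter ((hΘfm b).diff (hΘfm a))
    have hΘ_mem : ∀ t zh,
        ((t, zh) ∈ Θ ↔ ((-(2*r) < t ∧ t ≤ 2*r) ∧ zh ∈ V b t ∧ zh ∉ V a t)) := by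
      intro t zh
      simp only [hΘ, mem_inter_iff, Set.mem_prod, mem_Ioc, mem_univ, and_true, mem_diff,
        hΘf_mem]
    have ht_bound : ∀ t : ℝ, volume (V b t \ V a t)
        ≤ ENNReal.ofReal (2 ^ n * ((r + b) ^ n - (r + a) ^ n)) := by
      intro t
      by_cases hP : ∃ q : ι × ι, t ≤ w q.1 0 - u q.2 0
      · obtain ⟨q0, hq0⟩ := hP
        haveI : Nonempty {q : ι × ι // t ≤ w q.1 0 - u q.2 0} := ⟨⟨q0, hq0⟩⟩
        have hVfam : ∀ s, V s t
            = fam {q : ι × ι // t ≤ w q.1 0 - u q.2 0}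
                (fun q j => max (u q.1.1 j.succ) (u q.1.2 j.succ))
                (fun q j => min (w q.1.1 j.succ) (w q.1.2 j.succ)) s := by
          intro s
          ext zh
          simp only [hV, mem_setOf_eq, fam, mem_iUnion]
          constructor
          · rintro ⟨α, β, h1, h2, h3⟩
            refine ⟨⟨(α, β), h1⟩, ?_⟩
            rw [box_inter]
            exact ⟨h2, h3⟩
          · rintro ⟨⟨⟨α, β⟩, h1⟩, h2⟩
            rw [box_inter] at h2
            exact ⟨α, β, h1, h2.1, h2.2⟩
        rw [hVfam, hVfam]
        refine IH {q : ι × ι // t ≤ w q.1 0 - u q.2 0}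
          (fun (q : {q : ι × ι // t ≤ w q.1 0 - u q.2 0}) j => max (u q.1.1 j.succ) (u q.1.2 j.succ))
          (fun (q : {q : ι × ι // t ≤ w q.1 0 - u q.2 0}) j => min (w q.1.1 j.succ) (w q.1.2 j.succ))
          (fun j => p j.succ) r a b hr ?_ ?_ hra hab
        · intro q j
          have h1 := abs_le.1 (hu q.1.1 j.succ); have h2 := abs_le.1 (hu q.1.2 j.succ)
          rw [abs_le]
          constructor
          · have := le_max_left (u q.1.1 j.succ) (u q.1.2 j.succ); linarith [h1.1]
          · have hm : max (u q.1.1 j.succ) (u q.1.2 j.succ) ≤ p j.succ + r :=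
              max_le (by linarith [h1.2]) (by linarith [h2.2])
            linarith
        · intro q j
          have h1 := abs_le.1 (hw q.1.1 j.succ); have h2 := abs_le.1 (hw q.1.2 j.succ)
          rw [abs_le]
          constructor
          · have hm : p j.succ - r ≤ min (w q.1.1 j.succ) (w q.1.2 j.succ) :=
              le_min (by linarith [h1.1]) (by linarith [h2.1])
            linarith
          · have := min_le_left (w q.1.1 j.succ) (w q.1.2 j.succ); linarith [h1.2]
      · have hVb : V b t = ∅ :=
          eq_empty_iff_forall_notMem.2 (by rintro zh ⟨α, β, h1, -, -⟩; exact hP ⟨(α, β), h1⟩)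
        rw [hVb, empty_diff, measure_empty]
        exact zero_le
    set S : Set (Fin (n+1) → ℝ) := fam ι u w b \ fam ι u w a with hS
    have hSm : MeasurableSet S := (measurableSet_fam _ _ _ _).diff (measurableSet_fam _ _ _ _)
    set e := MeasurableEquiv.piFinSuccAbove (fun _ : Fin (n+1) => ℝ) 0 with he
    set T : Set (ℝ × (Fin n → ℝ)) := ⇑e.symm ⁻¹' S with hT
    have hTm : MeasurableSet T := e.symm.measurable hSm
    have hpres := measurePreserving_piFinSuccAbove (fun _ : Fin (n+1) => (volume : Measure ℝ)) 0
    simp only [← volume_pi] at hpres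
    have hvol : volume S = ((volume : Measure ℝ).prod (volume : Measure (Fin n → ℝ))) T := by
      have hpre : ⇑e ⁻¹' T = S := by
        ext z; simp [hT]
      rw [← hpre]
      exact hpres.measure_preimage hTm.nullMeasurableSet
    rw [Measure.prod_apply_symm hTm] at hvol
    have hsec : ∀ zh : Fin n → ℝ, (fun t => (t, zh)) ⁻¹' T
        = {t : ℝ | Fin.insertNth 0 t zh ∈ fam ι u w b}
            \ {t : ℝ | Fin.insertNth 0 t zh ∈ fam ι u w a} := by
      intro zh
      ext t
      have hins : e.symm (t, zh) = Fin.insertNth 0 t zh := by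
        simp [he, MeasurableEquiv.piFinSuccAbove, Fin.consEquiv, Fin.insertNth_zero]
      simp [hT, hS, hins, mem_diff]
    have hpoint : ∀ zh : Fin n → ℝ, volume ((fun t => (t, zh)) ⁻¹' T)
        ≤ volume ((fun t => (t, zh)) ⁻¹' Θ)
          + (fam ι (fun α j => u α j.succ) (fun α j => w α j.succ) b).indicator
              (fun _ => ENNReal.ofReal (2*(b-a))) zh
          + ((fam ι (fun α j => u α j.succ) (fun α j => w α j.succ) b
              \ fam ι (fun α j => u α j.succ) (fun α j => w α j.succ) a).indicator
              (fun _ => ENNReal.ofReal (2*a - 2*r)) zh) := by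
      intro zh
      rw [hsec zh]
      set F : ℝ → Finset ι := fun s =>
        Finset.univ.filter (fun α : ι =>
          zh ∈ box (fun j => u α j.succ) (fun j => w α j.succ) s) with hF
      have hσ : ∀ s : ℝ, {t : ℝ | Fin.insertNth 0 t zh ∈ fam ι u w s}
          = ⋃ α ∈ F s, Icc (u α 0 - s) (w α 0 + s) := by
        intro s
        ext t
        constructor
        · intro ht
          obtain ⟨α, hα⟩ := mem_iUnion.1 ht
          rw [insertNth_mem_box_iff] at hα
          exact mem_iUnion₂.2 ⟨α, Finset.mem_filter.2 ⟨Finset.mem_univ _, hα.2⟩,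
            mem_Icc.2 ⟨hα.1.1, hα.1.2⟩⟩
        · intro ht
          obtain ⟨α, hα, htI⟩ := mem_iUnion₂.1 ht
          have h2 := (Finset.mem_filter.1 hα).2
          exact mem_iUnion.2 ⟨α, (insertNth_mem_box_iff _ _ _ _ _).2
            ⟨⟨(mem_Icc.1 htI).1, (mem_Icc.1 htI).2⟩, h2⟩⟩
      have hfamF : ∀ s : ℝ,
          zh ∈ fam ι (fun α j => u α j.succ) (fun α j => w α j.succ) s ↔ (F s).Nonempty := by
        intro s
        constructor
        · intro h
          obtain ⟨α, hα⟩ := mem_iUnion.1 h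
          exact ⟨α, Finset.mem_filter.2 ⟨Finset.mem_univ _, hα⟩⟩
        · rintro ⟨α, hα⟩
          exact mem_iUnion.2 ⟨α, (Finset.mem_filter.1 hα).2⟩
      have hcomm : ∀ s : ℝ, r ≤ s → ∀ α ∈ F s, u α 0 - s ≤ p 0 ∧ p 0 ≤ w α 0 + s := by
        intro s hs α _
        have h1 := abs_le.1 (hu α 0); have h2 := abs_le.1 (hw α 0)
        exact ⟨by linarith [h1.2], by linarith [h2.1]⟩
      have hFmono : F a ⊆ F b := by
        intro α hα
        have h2 := (Finset.mem_filter.1 hα).2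
        exact Finset.mem_filter.2 ⟨Finset.mem_univ _, box_mono _ _ hab h2⟩
      by_cases hFb : (F b).Nonempty
      · set Mb := (F b).sup' hFb (fun α => w α 0) with hMbdef
        set μb := (F b).inf' hFb (fun α => u α 0) with hμbdef
        have hσb : {t : ℝ | Fin.insertNth 0 t zh ∈ fam ι u w b} = Icc (μb - b) (Mb + b) := by
          rw [hσ b, iUnion_Icc_eq (F b) hFb _ _ (p 0) (hcomm b (le_trans hra hab))]
          rw [inf'_sub_const (F b) hFb (fun α => u α 0) b,
            sup'_add_const (F b) hFb (fun α => w α 0) b]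
        obtain ⟨α0, hα0⟩ := id hFb
        have hMb_le : Mb ≤ p 0 + r :=
          Finset.sup'_le _ _ fun α _ => by linarith [(abs_le.1 (hw α 0)).2]
        have hμb_ge : p 0 - r ≤ μb :=
          Finset.le_inf' _ _ fun α _ => by linarith [(abs_le.1 (hu α 0)).1]
        have hMb_ge : p 0 - r ≤ Mb := by
          have h1 := Finset.le_sup' (fun α => w α 0) hα0
          have h2 := (abs_le.1 (hw α0 0)).1
          linarith
        have hμb_le : μb ≤ p 0 + r := by
          have h1 := Finset.inf'_le (fun α => u α 0) hα0
          have h2 := (abs_le.1 (hu α0 0)).2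
          linarith
        have hzhVb : ∀ t : ℝ, t ≤ Mb - μb → zh ∈ V b t := by
          intro t ht
          obtain ⟨αM, hαM, hMe⟩ := Finset.exists_mem_eq_sup' hFb (fun α => w α 0)
          obtain ⟨αμ, hαμ, hμe⟩ := Finset.exists_mem_eq_inf' hFb (fun α => u α 0)
          rw [← hMbdef] at hMe
          rw [← hμbdef] at hμe
          refine ⟨αM, αμ, ?_, (Finset.mem_filter.1 hαM).2, (Finset.mem_filter.1 hαμ).2⟩
          rw [hMe, hμe] at ht
          exact ht
        by_cases hFa : (F a).Nonempty
        · set Ma := (F a).sup' hFa (fun α => w α 0) with hMadef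
          set μa := (F a).inf' hFa (fun α => u α 0) with hμadef
          have hσa : {t : ℝ | Fin.insertNth 0 t zh ∈ fam ι u w a} = Icc (μa - a) (Ma + a) := by
            rw [hσ a, iUnion_Icc_eq (F a) hFa _ _ (p 0) (hcomm a hra)]
            rw [inf'_sub_const (F a) hFa (fun α => u α 0) a,
              sup'_add_const (F a) hFa (fun α => w α 0) a]
          obtain ⟨β0, hβ0⟩ := id hFa
          have hMa_ge : p 0 - r ≤ Ma := by
            have h1 := Finset.le_sup' (fun α => w α 0) hβ0
            have h2 := (abs_le.1 (hw β0 0)).1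
            linarith
          have hμa_le : μa ≤ p 0 + r := by
            have h1 := Finset.inf'_le (fun α => u α 0) hβ0
            have h2 := (abs_le.1 (hu β0 0)).2
            linarith
          have hMab : Ma ≤ Mb := by
            apply Finset.sup'_le
            intro α hα
            exact Finset.le_sup' (fun α => w α 0) (hFmono hα)
          have hμab : μb ≤ μa := by
            apply Finset.le_inf'
            intro α hα
            exact Finset.inf'_le (fun α => u α 0) (hFmono hα)
          have hsub : Icc (μb - b) (Mb + b) \ Icc (μa - a) (Ma + a)
              ⊆ Ico (μb - b) (μa - a) ∪ Ioc (Ma + a) (Mb + b) := by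
            rintro t ⟨htb, hta⟩
            rw [mem_Icc] at htb
            by_cases h1 : t < μa - a
            · exact Or.inl ⟨htb.1, h1⟩
            · push_neg at h1
              have h2 : Ma + a < t := by
                by_contra h3
                push_neg at h3
                exact hta (mem_Icc.2 ⟨h1, h3⟩)
              exact Or.inr ⟨h2, htb.2⟩
          have hIoc : ENNReal.ofReal ((Mb - μb) - (Ma - μa))
              ≤ volume ((fun t => (t, zh)) ⁻¹' Θ) := by
            rw [← Real.volume_Ioc (a := Ma - μa) (b := Mb - μb)]
            apply measure_mono
            intro t ht
            rw [mem_Ioc] at ht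
            rw [mem_preimage, hΘ_mem]
            refine ⟨⟨by linarith, by linarith⟩, hzhVb t ht.2, ?_⟩
            rintro ⟨γ, ρ, hγρ, hbγ, hbρ⟩
            have hγ : γ ∈ F a := Finset.mem_filter.2 ⟨Finset.mem_univ _, hbγ⟩
            have hρ : ρ ∈ F a := Finset.mem_filter.2 ⟨Finset.mem_univ _, hbρ⟩
            have h5 := Finset.le_sup' (fun α => w α 0) hγ
            have h6 := Finset.inf'_le (fun α => u α 0) hρ
            linarith
          rw [hσb, hσa]
          calc volume (Icc (μb - b) (Mb + b) \ Icc (μa - a) (Ma + a))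
              ≤ volume (Ico (μb - b) (μa - a) ∪ Ioc (Ma + a) (Mb + b)) := measure_mono hsub
            _ ≤ volume (Ico (μb - b) (μa - a)) + volume (Ioc (Ma + a) (Mb + b)) :=
                measure_union_le _ _
            _ = ENNReal.ofReal ((μa - a) - (μb - b)) + ENNReal.ofReal ((Mb + b) - (Ma + a)) := by
                rw [Real.volume_Ico, Real.volume_Ioc]
            _ = ENNReal.ofReal (((Mb - μb) - (Ma - μa)) + (2*(b-a))) := by
                rw [← ENNReal.ofReal_add (by linarith) (by linarith)]
                congr 1
                ring
            _ = ENNReal.ofReal ((Mb - μb) - (Ma - μa)) + ENNReal.ofReal (2*(b-a)) := by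
                rw [← ENNReal.ofReal_add (by linarith) (by linarith)]
            _ ≤ volume ((fun t => (t, zh)) ⁻¹' Θ) + ENNReal.ofReal (2*(b-a)) :=
                add_le_add_left hIoc _
            _ ≤ _ := by
                rw [indicator_of_mem ((hfamF b).2 ⟨α0, hα0⟩)]
                exact le_self_add
        · have hσa_empty : {t : ℝ | Fin.insertNth 0 t zh ∈ fam ι u w a} = ∅ := by
            rw [hσ a, Finset.not_nonempty_iff_eq_empty.1 hFa]
            simp
          rw [hσb, hσa_empty, diff_empty, Real.volume_Icc]
          have hsplit : (Mb + b) - (μb - b) = ((Mb - μb) + 2*r) + (2*(b-a)) + (2*a - 2*r) := by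
            ring
          rw [hsplit, ENNReal.ofReal_add (by linarith) (by linarith),
            ENNReal.ofReal_add (by linarith) (by linarith)]
          have h1 : ENNReal.ofReal ((Mb - μb) + 2*r) ≤ volume ((fun t => (t, zh)) ⁻¹' Θ) := by
            have hveq : ENNReal.ofReal ((Mb - μb) + 2*r) = volume (Ioc (-(2*r)) (Mb - μb)) := by
              rw [Real.volume_Ioc]
              congr 1
              ring
            rw [hveq]
            apply measure_mono
            intro t ht
            rw [mem_Ioc] at ht
            rw [mem_preimage, hΘ_mem]
            refine ⟨⟨ht.1, by linarith⟩, hzhVb t ht.2, ?_⟩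
            rintro ⟨γ, ρ, hγρ, hbγ, hbρ⟩
            exact hFa ⟨γ, Finset.mem_filter.2 ⟨Finset.mem_univ _, hbγ⟩⟩
          have h2 : ((fam ι (fun α j => u α j.succ) (fun α j => w α j.succ) b
              \ fam ι (fun α j => u α j.succ) (fun α j => w α j.succ) a).indicator
              (fun _ => ENNReal.ofReal (2*a - 2*r)) zh) = ENNReal.ofReal (2*a - 2*r) := by
            refine indicator_of_mem ?_ _
            rw [mem_diff]
            exact ⟨(hfamF b).2 ⟨α0, hα0⟩, fun hmem => hFa ((hfamF a).1 hmem)⟩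
          rw [h2, indicator_of_mem ((hfamF b).2 ⟨α0, hα0⟩)]
          exact add_le_add (add_le_add h1 le_rfl) le_rfl
      · have hempty : {t : ℝ | Fin.insertNth 0 t zh ∈ fam ι u w b} = ∅ := by
          rw [hσ b, Finset.not_nonempty_iff_eq_empty.1 hFb]
          simp
        rw [hempty, empty_diff, measure_empty]
        exact zero_le
    -- put everything together
    rw [show volume (fam ι u w b \ fam ι u w a) = volume S from rfl, hvol]
    have hGmeas : Measurable fun zh : Fin n → ℝ => volume ((fun t => (t, zh)) ⁻¹' Θ) :=
      measurable_measure_prodMk_right hΘm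
    have hi1meas : Measurable ((fam ι (fun α j => u α j.succ) (fun α j => w α j.succ) b).indicator
        (fun _ => ENNReal.ofReal (2*(b-a)))) :=
      measurable_const.indicator (measurableSet_fam _ _ _ _)
    refine le_trans (lintegral_mono hpoint) ?_
    rw [lintegral_add_left (f := fun zh => volume ((fun t => (t, zh)) ⁻¹' Θ) + (fam ι (fun α j => u α j.succ) (fun α j => w α j.succ) b).indicator (fun _ => ENNReal.ofReal (2*(b-a))) zh) (hGmeas.add hi1meas), lintegral_add_left hGmeas]
    have hGint : ∫⁻ zh : Fin n → ℝ, volume ((fun t => (t, zh)) ⁻¹' Θ)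
        ≤ ENNReal.ofReal (2 ^ n * ((r + b) ^ n - (r + a) ^ n))
          * ENNReal.ofReal (2*r - -(2*r)) := by
      rw [← Measure.prod_apply_symm hΘm, Measure.prod_apply hΘm]
      have hb : ∀ t : ℝ, volume (Prod.mk t ⁻¹' Θ)
          ≤ (Ioc (-(2*r)) (2*r)).indicator
              (fun _ => ENNReal.ofReal (2 ^ n * ((r + b) ^ n - (r + a) ^ n))) t := by
        intro t
        by_cases htI : t ∈ Ioc (-(2*r)) (2*r)
        · rw [indicator_of_mem htI]
          refine le_trans (measure_mono ?_) (ht_bound t)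
          intro zh hzh
          have h := (hΘ_mem t zh).1 hzh
          exact ⟨h.2.1, h.2.2⟩
        · have hemp : Prod.mk t ⁻¹' Θ = ∅ := by
            apply eq_empty_iff_forall_notMem.2
            intro zh hzh
            have h := (hΘ_mem t zh).1 hzh
            exact htI (mem_Ioc.2 h.1)
          rw [hemp, measure_empty, indicator_of_notMem htI]
      refine le_trans (lintegral_mono hb) (le_of_eq ?_)
      rw [lintegral_indicator_const measurableSet_Ioc, Real.volume_Ioc]
    have hi1int : (∫⁻ zh, (fam ι (fun α j => u α j.succ) (fun α j => w α j.succ) b).indicator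
          (fun _ => ENNReal.ofReal (2*(b-a))) zh)
        = ENNReal.ofReal (2*(b-a))
          * volume (fam ι (fun α j => u α j.succ) (fun α j => w α j.succ) b) :=
      lintegral_indicator_const (measurableSet_fam _ _ _ _) _
    have hi2int : (∫⁻ zh, ((fam ι (fun α j => u α j.succ) (fun α j => w α j.succ) b
            \ fam ι (fun α j => u α j.succ) (fun α j => w α j.succ) a).indicator
          (fun _ => ENNReal.ofReal (2*a - 2*r)) zh))
        = ENNReal.ofReal (2*a - 2*r)
          * volume (fam ι (fun α j => u α j.succ) (fun α j => w α j.succ) b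
              \ fam ι (fun α j => u α j.succ) (fun α j => w α j.succ) a) :=
      lintegral_indicator_const ((measurableSet_fam _ _ _ _).diff (measurableSet_fam _ _ _ _)) _
    rw [hi1int, hi2int]
    have hUb : volume (fam ι (fun α j => u α j.succ) (fun α j => w α j.succ) b)
        ≤ ENNReal.ofReal ((2*(r+b))^n) := by
      refine le_trans (measure_mono (fam_subset_box _ _ _ (fun j => p j.succ) r
        (fun α j => hu α j.succ) (fun α j => hw α j.succ) b)) ?_
      rw [volume_box _ (by linarith : (0:ℝ) ≤ r + b)]
    have hUdiff : volume (fam ι (fun α j => u α j.succ) (fun α j => w α j.succ) b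
          \ fam ι (fun α j => u α j.succ) (fun α j => w α j.succ) a)
        ≤ ENNReal.ofReal (2 ^ n * ((r + b) ^ n - (r + a) ^ n)) :=
      IH ι (fun α j => u α j.succ) (fun α j => w α j.succ) (fun j => p j.succ) r a b hr
        (fun α j => hu α j.succ) (fun α j => hw α j.succ) hra hab
    refine le_trans (add_le_add (add_le_add hGint (mul_le_mul_right hUb _))
      (mul_le_mul_right hUdiff _)) ?_
    have hΔ : (0:ℝ) ≤ (r+b)^n - (r+a)^n :=
      sub_nonneg.2 (pow_le_pow_left₀ (by linarith) (by linarith) n)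
    have hX : (0:ℝ) ≤ 2^n * ((r+b)^n - (r+a)^n) := mul_nonneg (by positivity) hΔ
    rw [← ENNReal.ofReal_mul hX, ← ENNReal.ofReal_mul (by linarith : (0:ℝ) ≤ 2*(b-a)),
      ← ENNReal.ofReal_mul (by linarith : (0:ℝ) ≤ 2*a-2*r),
      ← ENNReal.ofReal_add (mul_nonneg hX (by linarith))
        (mul_nonneg (by linarith) (pow_nonneg (by linarith) n)),
      ← ENNReal.ofReal_add (add_nonneg (mul_nonneg hX (by linarith))
        (mul_nonneg (by linarith) (pow_nonneg (by linarith) n))) (mul_nonneg (by linarith) hX)]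
    exact ENNReal.ofReal_le_ofReal (le_of_eq (by rw [mul_pow]; ring))
lemma mem_fam_iff {n m : ℕ} (y : Fin m → Fin n → ℝ) (s : ℝ) (z : Fin n → ℝ) :
    z ∈ fam (Fin m) y y s ↔ ∃ i, ∀ k, |z k - y i k| ≤ s := by
  unfold fam
  rw [mem_iUnion]
  apply exists_congr; intro i
  constructor
  · intro h k
    have h1 := h k
    rw [abs_le]
    constructor <;> linarith [h1.1, h1.2]
  · intro h k
    have h1 := abs_le.1 (h k)
    constructor <;> linarith [h1.1, h1.2]

end CubeAnnulus

lemma mem_add_smul_unitCube {d m : ℕ} (x : Fin m → EuclideanSpace ℝ (Fin d)) {s : ℝ} (hs : 0 < s)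
    (z : EuclideanSpace ℝ (Fin d)) :
    z ∈ Set.range x + s • unitCube d ↔ ∃ i, ∀ k, |z k - x i k| ≤ s := by
  constructor
  · intro hz
    obtain ⟨a, ha, c, hc, hsum⟩ := Set.mem_add.1 hz
    obtain ⟨i, rfl⟩ := ha
    obtain ⟨c₀, hc₀, rfl⟩ := Set.mem_smul_set.1 hc
    refine ⟨i, fun k => ?_⟩
    have hzk : z k = x i k + s * c₀ k := by
      rw [← hsum]
      simp [PiLp.add_apply, PiLp.smul_apply, smul_eq_mul]
    rw [hzk, add_sub_cancel_left, abs_mul, abs_of_pos hs]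
    calc s * |c₀ k| ≤ s * 1 := mul_le_mul_of_nonneg_left (hc₀ k) hs.le
      _ = s := mul_one s
  · rintro ⟨i, hi⟩
    refine Set.mem_add.2 ⟨x i, Set.mem_range_self i, s • (s⁻¹ • (z - x i)), ?_, ?_⟩
    · refine Set.smul_mem_smul_set (fun k => ?_)
      have hck : (s⁻¹ • (z - x i)) k = s⁻¹ * (z k - x i k) := by
        simp [PiLp.smul_apply, PiLp.sub_apply, smul_eq_mul]
      rw [hck, abs_mul, abs_of_pos (inv_pos.2 hs)]
      calc s⁻¹ * |z k - x i k| ≤ s⁻¹ * s :=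
            mul_le_mul_of_nonneg_left (hi k) (inv_pos.2 hs).le
        _ = 1 := inv_mul_cancel₀ hs.ne'
    · rw [smul_inv_smul₀ hs.ne']
      abel

/-- For `d ≥ 1`, `r, δ > 0`, `N ≥ 1` and points `x_0, …, x_N ∈ ℝ^d` with
`‖x_i − x_0‖_∞ ≤ r`, setting `A = {x_0, …, x_N}` we have
`λ(A_{⊞(r+δ)} \ A_{⊞r}) ≤ 2^{2d−1} ((r+δ)^d − r^d)`. -/
theorem volume_annulus_cube_parallel_set_le
    (d : ℕ) (hd : 1 ≤ d) (r δ : ℝ) (hr : 0 < r) (hδ : 0 < δ) (N : ℕ) (hN : 1 ≤ N)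
    (x : Fin (N + 1) → EuclideanSpace ℝ (Fin d))
    (hx : ∀ i j, |x i j - x 0 j| ≤ r) :
    volume ((Set.range x + (r + δ) • unitCube d) \ (Set.range x + r • unitCube d)) ≤
      ENNReal.ofReal (2 ^ (2 * d - 1) * ((r + δ) ^ d - r ^ d)) := by
  classical
  have hδ0 : (0:ℝ) ≤ δ := hδ.le
  set y : Fin (N+1) → Fin d → ℝ := fun i k => x i k with hy
  set T : Set (Fin d → ℝ) :=
    CubeAnnulus.fam (Fin (N+1)) y y (r+δ) \ CubeAnnulus.fam (Fin (N+1)) y y r with hTdef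
  have hTm : MeasurableSet T :=
    (CubeAnnulus.measurableSet_fam _ _ _ _).diff (CubeAnnulus.measurableSet_fam _ _ _ _)
  have hpre : (⇑(MeasurableEquiv.toLp 2 (Fin d → ℝ)).symm) ⁻¹' T
      = (Set.range x + (r + δ) • unitCube d) \ (Set.range x + r • unitCube d) := by
    ext z
    simp only [mem_preimage, hTdef, mem_diff]
    rw [CubeAnnulus.mem_fam_iff, CubeAnnulus.mem_fam_iff,
      mem_add_smul_unitCube x (by linarith : (0:ℝ) < r + δ) z,
      mem_add_smul_unitCube x hr z]
    exact Iff.rfl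
  have hvol : volume ((Set.range x + (r + δ) • unitCube d) \ (Set.range x + r • unitCube d))
      = volume T := by
    rw [← hpre]
    exact (EuclideanSpace.volume_preserving_symm_measurableEquiv_toLp (Fin d)).measure_preimage
      hTm.nullMeasurableSet
  rw [hvol]
  have hbound := CubeAnnulus.main_ineq d (Fin (N+1)) y y (y 0) r r (r+δ) hr
    (fun i k => hx i k) (fun i k => hx i k) le_rfl (by linarith)
  refine le_trans hbound ?_
  have h1 : r + (r + δ) = 2*r + δ := by ring
  have h2 : r + r = 2*r := by ring
  rw [h1, h2]
  exact ENNReal.ofReal_le_ofReal (CubeAnnulus.two_pow_mul_pow_diff_le d hd hr.le hδ0)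
end

section
/- Let d ≥ 1, r > 0, δ > 0, and let A = {x_1, …, x_N} be a nonempty finite set of points in ℝ^d. Then λ(A_{⊞(r+δ)} \ A_{⊞r}) ≤ N_C(A; r) · 2^{2d−1} ((r+δ)^d − r^d), where N_C(A; r) is the r-packing number of A with respect to the ℓ∞ metric. -/
open MeasureTheory Set Filter
open scoped ENNReal Pointwise

/-- The `ℓ∞` distance on `ℝ^d` (the sup norm of the coordinatewise difference). -/
noncomputable def distInf {d : ℕ} (x y : EuclideanSpace ℝ (Fin d)) : ℝ :=
  ‖(fun i => x i - y i : Fin d → ℝ)‖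

/-- The `ε`-packing number of `A` with respect to the metric `dist'`: the maximal
cardinality of a subset of `A` whose points have pairwise distances `> ε`. -/
noncomputable def packingNum {d : ℕ}
    (dist' : EuclideanSpace ℝ (Fin d) → EuclideanSpace ℝ (Fin d) → ℝ)
    (A : Set (EuclideanSpace ℝ (Fin d))) (ε : ℝ) : ℕ :=
  sSup {n : ℕ | ∃ S : Finset (EuclideanSpace ℝ (Fin d)), ↑S ⊆ A ∧ S.card = n ∧
    ∀ x ∈ S, ∀ y ∈ S, x ≠ y → ε < dist' x y}

lemma pi_fin0_univ' (g : Fin 0 → Set ℝ) : Set.univ.pi g = univ := by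
  ext y; simp [Set.mem_pi]

lemma box_core' (n : ℕ) : ∀ {α : Type} (L δ : ℝ), 0 ≤ L → 0 ≤ δ →
    ∀ (J : Finset α) (b : α → Fin n → ℝ),
    (∀ j ∈ J, ∀ i, 0 ≤ b j i ∧ b j i ≤ L) →
    volume (⋃ j ∈ J, Set.univ.pi fun i => Icc 0 (b j i + δ)) ≤
      volume (⋃ j ∈ J, Set.univ.pi fun i => Icc 0 (b j i)) +
        ENNReal.ofReal ((L + δ) ^ n - L ^ n) := by
  induction n with
  | zero =>
    intro α L δ hL hδ J b hb
    have h0 : ∀ (g : α → Fin 0 → ℝ), (⋃ j ∈ J, Set.univ.pi fun i => Icc 0 (g j i))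
        = ⋃ j ∈ J, (univ : Set (Fin 0 → ℝ)) := by
      intro g
      exact iUnion_congr fun j => iUnion_congr fun _ => pi_fin0_univ' _
    rw [h0 (fun j i => b j i + δ), h0 b]
    norm_num
  | succ n IH =>
    intro α L δ hL hδ J b hb
    classical
    set e := MeasurableEquiv.piFinSuccAbove (fun _ : Fin (n+1) => ℝ) 0 with he_def
    have he : MeasurePreserving e volume volume :=
      volume_preserving_piFinSuccAbove (fun _ : Fin (n+1) => ℝ) 0
    have heapp : ∀ y : Fin (n+1) → ℝ, e y = (y 0, fun i : Fin n => y i.succ) := by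
      intro y
      have h1 : e y = (y 0, fun i : Fin n => y (Fin.succAbove 0 i)) := rfl
      rw [h1]
      simp [Fin.succAbove_zero]
    set c : α → ℝ := fun j => b j 0 with hc_def
    set B : α → Fin n → ℝ := fun j i => b j i.succ with hB_def
    set X' : Set (ℝ × (Fin n → ℝ)) :=
      ⋃ j ∈ J, (Icc (0:ℝ) (c j + δ)) ×ˢ (Set.univ.pi fun i => Icc 0 (B j i + δ)) with hX'_def
    set X : Set (ℝ × (Fin n → ℝ)) :=
      ⋃ j ∈ J, (Icc (0:ℝ) (c j)) ×ˢ (Set.univ.pi fun i => Icc 0 (B j i)) with hX_def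
    set W : Set (ℝ × (Fin n → ℝ)) :=
      ⋃ j ∈ J, (Icc (-δ) (c j)) ×ˢ (Set.univ.pi fun i => Icc 0 (B j i)) with hW_def
    have hX'm : MeasurableSet X' :=
      J.measurableSet_biUnion fun j _ =>
        measurableSet_Icc.prod (MeasurableSet.univ_pi fun i => measurableSet_Icc)
    have hXm : MeasurableSet X :=
      J.measurableSet_biUnion fun j _ =>
        measurableSet_Icc.prod (MeasurableSet.univ_pi fun i => measurableSet_Icc)
    have hWm : MeasurableSet W :=
      J.measurableSet_biUnion fun j _ =>
        measurableSet_Icc.prod (MeasurableSet.univ_pi fun i => measurableSet_Icc)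
    have hpre' : (⋃ j ∈ J, Set.univ.pi fun i => Icc 0 (b j i + δ)) = e ⁻¹' X' := by
      ext y
      simp only [hX'_def, mem_iUnion, mem_preimage, heapp, Set.mem_prod, Set.mem_pi,
        mem_univ, forall_true_left, Set.mem_Icc]
      constructor
      · rintro ⟨j, hj, h⟩
        exact ⟨j, hj, ⟨(h 0).1, (h 0).2⟩, fun i => ⟨(h i.succ).1, (h i.succ).2⟩⟩
      · rintro ⟨j, hj, h0, hs⟩
        refine ⟨j, hj, fun i => ?_⟩
        rcases Fin.eq_zero_or_eq_succ i with rfl | ⟨i', rfl⟩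
        · exact h0
        · exact hs i'
    have hpre : (⋃ j ∈ J, Set.univ.pi fun i => Icc 0 (b j i)) = e ⁻¹' X := by
      ext y
      simp only [hX_def, mem_iUnion, mem_preimage, heapp, Set.mem_prod, Set.mem_pi,
        mem_univ, forall_true_left, Set.mem_Icc]
      constructor
      · rintro ⟨j, hj, h⟩
        exact ⟨j, hj, ⟨(h 0).1, (h 0).2⟩, fun i => ⟨(h i.succ).1, (h i.succ).2⟩⟩
      · rintro ⟨j, hj, h0, hs⟩
        refine ⟨j, hj, fun i => ?_⟩
        rcases Fin.eq_zero_or_eq_succ i with rfl | ⟨i', rfl⟩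
        · exact h0
        · exact hs i'
    rw [hpre', hpre, he.measure_preimage hX'm.nullMeasurableSet,
      he.measure_preimage hXm.nullMeasurableSet]
    rw [Measure.volume_eq_prod, Measure.prod_apply hX'm, Measure.prod_apply hXm]
    have hLd : (0:ℝ) ≤ L + δ := by linarith
    have hpow : (0:ℝ) ≤ (L + δ) ^ n - L ^ n := by
      have h := pow_le_pow_left₀ hL (by linarith : L ≤ L + δ) n
      linarith
    set Δ : ℝ≥0∞ := ENNReal.ofReal ((L + δ) ^ n - L ^ n) with hΔ_def
    have hsliceX' : ∀ t : ℝ, Prod.mk t ⁻¹' X'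
        = ⋃ j ∈ J.filter (fun j => t ∈ Icc (0:ℝ) (c j + δ)),
            (Set.univ.pi fun i => Icc 0 (B j i + δ)) := by
      intro t; ext y
      simp only [hX'_def, Set.mem_preimage, mem_iUnion, Set.mem_prod, Finset.mem_filter,
        exists_prop]
      tauto
    have hsliceX : ∀ t : ℝ, Prod.mk t ⁻¹' X
        = ⋃ j ∈ J.filter (fun j => t ∈ Icc (0:ℝ) (c j)),
            (Set.univ.pi fun i => Icc 0 (B j i)) := by
      intro t; ext y
      simp only [hX_def, Set.mem_preimage, mem_iUnion, Set.mem_prod, Finset.mem_filter,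
        exists_prop]
      tauto
    have hsliceW : ∀ t : ℝ, Prod.mk t ⁻¹' W
        = ⋃ j ∈ J.filter (fun j => t ∈ Icc (-δ) (c j)),
            (Set.univ.pi fun i => Icc 0 (B j i)) := by
      intro t; ext y
      simp only [hW_def, Set.mem_preimage, mem_iUnion, Set.mem_prod, Finset.mem_filter,
        exists_prop]
      tauto
    have hfilter : ∀ t : ℝ, J.filter (fun j => t ∈ Icc (0:ℝ) (c j + δ))
        = J.filter (fun j => t - δ ∈ Icc (-δ) (c j)) := by
      intro t
      apply Finset.filter_congr
      intro j _
      simp only [Set.mem_Icc, eq_iff_iff]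
      constructor <;> rintro ⟨h1, h2⟩ <;> constructor <;> linarith
    have key : ∀ t : ℝ, volume (Prod.mk t ⁻¹' X')
        ≤ volume (Prod.mk (t - δ) ⁻¹' W) + (Icc (0:ℝ) (L + δ)).indicator (fun _ => Δ) t := by
      intro t
      by_cases ht : t ∈ Icc (0:ℝ) (L + δ)
      · rw [Set.indicator_of_mem ht, hsliceX' t, hsliceW (t - δ), ← hfilter t]
        exact IH L δ hL hδ _ B (fun j hj i => hb j (Finset.mem_filter.mp hj).1 i.succ)
      · have hempty : Prod.mk t ⁻¹' X' = ∅ := by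
          rw [hsliceX' t]
          apply Set.eq_empty_of_forall_notMem
          intro y hy
          rw [mem_iUnion] at hy
          obtain ⟨j, hy⟩ := hy
          rw [mem_iUnion] at hy
          obtain ⟨hj, -⟩ := hy
          have hj2 := (Finset.mem_filter.mp hj).2
          have hcL := (hb j (Finset.mem_filter.mp hj).1 0).2
          rw [Set.mem_Icc] at hj2
          exact ht ⟨hj2.1, by simpa using le_trans hj2.2 (by linarith)⟩
        rw [hempty]
        simp
    have hWmeas : Measurable fun u : ℝ => volume (Prod.mk u ⁻¹' W) :=
      measurable_measure_prodMk_left hWm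
    calc ∫⁻ t, volume (Prod.mk t ⁻¹' X')
        ≤ ∫⁻ t, (volume (Prod.mk (t - δ) ⁻¹' W)
            + (Icc (0:ℝ) (L + δ)).indicator (fun _ => Δ) t) := lintegral_mono key
      _ = (∫⁻ t, volume (Prod.mk (t - δ) ⁻¹' W))
            + ∫⁻ t, (Icc (0:ℝ) (L + δ)).indicator (fun _ => Δ) t :=
          lintegral_add_left (hWmeas.comp (measurable_id.sub measurable_const)) _
      _ = (volume : Measure ℝ).prod volume W + Δ * volume (Icc (0:ℝ) (L + δ)) := by
          rw [lintegral_indicator_const measurableSet_Icc,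
            (measurePreserving_sub_right (volume : Measure ℝ) δ).lintegral_comp hWmeas,
            ← Measure.prod_apply hWm]
      _ ≤ ((volume : Measure ℝ).prod volume X + ENNReal.ofReal δ * ENNReal.ofReal L ^ n)
            + Δ * ENNReal.ofReal (L + δ) := by
          gcongr
          · -- W ⊆ (Icc (-δ) 0 ×ˢ cube) ∪ X
            have hWsub : W ⊆ (Icc (-δ) (0:ℝ) ×ˢ (Set.univ.pi fun i => Icc (0:ℝ) L)) ∪ X := by
              intro p hp
              rw [hW_def, mem_iUnion] at hp
              obtain ⟨j, hp⟩ := hp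
              rw [mem_iUnion] at hp
              obtain ⟨hj, hp1, hp2⟩ := hp
              rcases le_total p.1 0 with h0 | h0
              · left
                refine ⟨⟨hp1.1, h0⟩, fun i hi => ?_⟩
                have := hp2 i hi
                have hbd := (hb j hj i.succ).2
                exact ⟨(this).1, le_trans this.2 hbd⟩
              · right
                rw [hX_def, mem_iUnion]
                refine ⟨j, ?_⟩
                rw [mem_iUnion]
                exact ⟨hj, ⟨h0, hp1.2⟩, hp2⟩
            calc (volume : Measure ℝ).prod volume W
                ≤ (volume : Measure ℝ).prod volume
                    ((Icc (-δ) (0:ℝ) ×ˢ (Set.univ.pi fun i => Icc (0:ℝ) L)) ∪ X) :=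
                  measure_mono hWsub
              _ ≤ (volume : Measure ℝ).prod volume
                    (Icc (-δ) (0:ℝ) ×ˢ (Set.univ.pi fun i => Icc (0:ℝ) L))
                    + (volume : Measure ℝ).prod volume X := measure_union_le _ _
              _ = ENNReal.ofReal δ * ENNReal.ofReal L ^ n
                    + (volume : Measure ℝ).prod volume X := by
                  rw [Measure.prod_prod, Real.volume_Icc, volume_pi_pi]
                  simp [Real.volume_Icc]
              _ = _ := by rw [add_comm]
          · rw [Real.volume_Icc, sub_zero]
      _ = (∫⁻ t, volume (Prod.mk t ⁻¹' X)) + ENNReal.ofReal ((L + δ) ^ (n + 1) - L ^ (n + 1)) := by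
          rw [← Measure.prod_apply hXm, add_assoc]
          congr 1
          rw [hΔ_def, ← ENNReal.ofReal_pow hL, ← ENNReal.ofReal_mul hδ,
            ← ENNReal.ofReal_mul hpow,
            ← ENNReal.ofReal_add (mul_nonneg hδ (pow_nonneg hL n)) (mul_nonneg hpow hLd)]
          congr 1
          ring

lemma distInf_symm' {d : ℕ} (a b : EuclideanSpace ℝ (Fin d)) : distInf a b = distInf b a := by
  unfold distInf
  rw [← norm_neg]
  congr 1
  funext i
  simp [Pi.neg_apply]

lemma distInf_self' {d : ℕ} (a : EuclideanSpace ℝ (Fin d)) : distInf a a = 0 := by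
  unfold distInf
  have : (fun i => a i - a i : Fin d → ℝ) = 0 := by funext i; simp
  rw [this, norm_zero]

lemma distInf_coord' {d : ℕ} {a s : EuclideanSpace ℝ (Fin d)} {r : ℝ}
    (h : distInf a s ≤ r) (i : Fin d) : |a i - s i| ≤ r := by
  have h1 : |(fun i => a i - s i : Fin d → ℝ) i| ≤ ‖(fun i => a i - s i : Fin d → ℝ)‖ := by
    simpa [Real.norm_eq_abs] using norm_le_pi_norm (fun i => a i - s i : Fin d → ℝ) i
  exact le_trans h1 h

lemma mem_cube_sum' {d N : ℕ} {ρ : ℝ} (hρ : 0 < ρ) (x : Fin N → EuclideanSpace ℝ (Fin d))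
    (y : EuclideanSpace ℝ (Fin d)) :
    y ∈ Set.range x + ρ • unitCube d ↔ ∃ k, ∀ i, |y i - x k i| ≤ ρ := by
  constructor
  · rintro ⟨a, ⟨k, rfl⟩, z, hz, rfl⟩
    obtain ⟨c, hc, rfl⟩ := hz
    refine ⟨k, fun i => ?_⟩
    have h1 : (x k + ρ • c) i - x k i = ρ * c i := by
      simp [PiLp.add_apply, PiLp.smul_apply, smul_eq_mul]
    rw [h1, abs_mul, abs_of_pos hρ]
    calc ρ * |c i| ≤ ρ * 1 := by
          have := hc i
          nlinarith
      _ = ρ := mul_one ρ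
  · rintro ⟨k, h⟩
    refine ⟨x k, ⟨k, rfl⟩, ρ • (ρ⁻¹ • (y - x k)), ?_, ?_⟩
    · refine Set.mem_smul_set.mpr ⟨ρ⁻¹ • (y - x k), fun i => ?_, rfl⟩
      have h1 : (ρ⁻¹ • (y - x k)) i = ρ⁻¹ * (y i - x k i) := by
        simp [PiLp.smul_apply, PiLp.sub_apply, smul_eq_mul]
      rw [h1, abs_mul, abs_of_pos (inv_pos.mpr hρ)]
      rw [inv_mul_le_iff₀ hρ, mul_one]
      exact h i
    · rw [smul_smul, mul_inv_cancel₀ (ne_of_gt hρ), one_smul]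
      exact add_sub_cancel _ _

lemma pow_step' (d : ℕ) (hd : 1 ≤ d) (r δ : ℝ) (hr : 0 < r) (hδ : 0 < δ) :
    (2:ℝ)^d * ((2*r + δ)^d - (2*r)^d) ≤ 2^(2*d-1) * ((r+δ)^d - r^d) := by
  obtain ⟨m, rfl⟩ : ∃ m, d = m + 1 := ⟨d - 1, by omega⟩
  rw [show 2*(m+1)-1 = 2*m+1 from by omega]
  have key : (2*r+δ)^(m+1) ≤ 2^m * ((r+δ)^(m+1) + r^(m+1)) := by
    have h := add_pow_le (by linarith : (0:ℝ) ≤ r + δ) hr.le (m+1)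
    rw [show r + δ + r = 2*r + δ from by ring] at h
    exact h
  have hW : (2*r)^(m+1) = 2^(m+1) * r^(m+1) := by rw [mul_pow]
  have he1 : (2:ℝ)^(2*m+1) = 2^m * 2^(m+1) := by rw [← pow_add]; congr 1; omega
  have he2 : (2:ℝ)^(m+1) = 2^m * 2 := pow_succ 2 m
  rw [hW, he1, he2]
  have ha : (0:ℝ) < 2^m := by positivity
  nlinarith [mul_le_mul_of_nonneg_left key (by positivity : (0:ℝ) ≤ 2 * 2^m), ha, key]

/-- For `d ≥ 1`, `r, δ > 0` and a nonempty finite set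
`A = {x_1, …, x_N} ⊆ ℝ^d`,
`λ(A_{⊞(r+δ)} \ A_{⊞r}) ≤ N_C(A; r) · 2^{2d−1} ((r+δ)^d − r^d)`,
where `N_C(A; r)` is the `r`-packing number of `A` in the `ℓ∞` metric. -/
theorem volume_annulus_le_packing_cube
    (d : ℕ) (hd : 1 ≤ d) (r δ : ℝ) (hr : 0 < r) (hδ : 0 < δ) (N : ℕ) (hN : 1 ≤ N)
    (x : Fin N → EuclideanSpace ℝ (Fin d)) :
    volume ((Set.range x + (r + δ) • unitCube d) \ (Set.range x + r • unitCube d)) ≤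
      ENNReal.ofReal ((packingNum distInf (Set.range x) r : ℝ) *
        (2 ^ (2 * d - 1) * ((r + δ) ^ d - r ^ d))) := by
  classical
  set P : ℕ := packingNum distInf (Set.range x) r with hP_def
  -- the set defining the packing number
  set PSet : Set ℕ := {n : ℕ | ∃ S : Finset (EuclideanSpace ℝ (Fin d)),
      ↑S ⊆ Set.range x ∧ S.card = n ∧
      ∀ a ∈ S, ∀ b ∈ S, a ≠ b → r < distInf a b} with hPSet_def
  have hP0 : 0 ∈ PSet := ⟨∅, by simp⟩
  have hPbdd : ∀ n ∈ PSet, n ≤ N := by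
    rintro n ⟨S, hsub, hcard, -⟩
    have hS : S ⊆ Finset.univ.image x := by
      intro a ha
      obtain ⟨k, hk⟩ := hsub ha
      exact Finset.mem_image.mpr ⟨k, Finset.mem_univ k, hk⟩
    calc n = S.card := hcard.symm
      _ ≤ (Finset.univ.image x).card := Finset.card_le_card hS
      _ ≤ (Finset.univ : Finset (Fin N)).card := Finset.card_image_le
      _ = N := Finset.card_fin N
  have hPmem : P ∈ PSet := by
    have : sSup PSet ∈ PSet := Nat.sSup_mem ⟨0, hP0⟩ ⟨N, fun n hn => hPbdd n hn⟩
    exact this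
  obtain ⟨S, hSsub, hScard, hSpack⟩ := hPmem
  -- maximality of the packing
  have hmax : ∀ k : Fin N, ∃ s ∈ S, distInf (x k) s ≤ r := by
    intro k
    by_contra hcon
    push_neg at hcon
    have hfar : ∀ s ∈ S, r < distInf (x k) s := hcon
    have hxk : x k ∉ S := by
      intro hk
      have := hfar _ hk
      rw [distInf_self'] at this
      linarith
    have hmem' : P + 1 ∈ PSet := by
      refine ⟨insert (x k) S, ?_, ?_, ?_⟩
      · rw [Finset.coe_insert]
        exact Set.insert_subset ⟨k, rfl⟩ hSsub
      · rw [Finset.card_insert_of_notMem hxk, hScard]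
      · intro a ha b hb hab
        rcases Finset.mem_insert.mp ha with rfl | ha' <;>
          rcases Finset.mem_insert.mp hb with rfl | hb'
        · exact absurd rfl hab
        · exact hfar b hb'
        · rw [distInf_symm']; exact hfar a ha'
        · exact hSpack a ha' b hb' hab
    have h2 : P + 1 ≤ sSup PSet := le_csSup ⟨N, fun n hn => hPbdd n hn⟩ hmem'
    have hsup : sSup PSet = P := rfl
    omega
  -- per packing point and orthant data
  set bfun : EuclideanSpace ℝ (Fin d) → (Fin d → Bool) → Fin N → Fin d → ℝ :=
    fun s σ k i => (if σ i then x k i - s i else -(x k i - s i)) + r with hbfun_def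
  set clu : EuclideanSpace ℝ (Fin d) → Finset (Fin N) :=
    fun s => Finset.univ.filter (fun k => distInf (x k) s ≤ r) with hclu_def
  set Θ : EuclideanSpace ℝ (Fin d) → (Fin d → Bool) →
      EuclideanSpace ℝ (Fin d) → (Fin d → ℝ) :=
    fun s σ => (fun z : Fin d → ℝ => fun i => if σ i then z i else -(z i)) ∘
      (fun z : Fin d → ℝ => z - (fun i => s i)) ∘ (MeasurableEquiv.toLp 2 (Fin d → ℝ)).symm
    with hΘ_def
  have hΘapp : ∀ s σ y i, Θ s σ y i = if σ i then y i - s i else -(y i - s i) := by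
    intro s σ y i
    rfl
  set T : EuclideanSpace ℝ (Fin d) → (Fin d → Bool) → Set (Fin d → ℝ) := fun s σ =>
    (⋃ k ∈ clu s, Set.univ.pi fun i => Icc 0 (bfun s σ k i + δ)) \
      (⋃ k ∈ clu s, Set.univ.pi fun i => Icc 0 (bfun s σ k i)) with hT_def
  have hTmeas : ∀ s σ, MeasurableSet (T s σ) := by
    intro s σ
    exact MeasurableSet.diff
      ((clu s).measurableSet_biUnion fun k _ => MeasurableSet.univ_pi fun i => measurableSet_Icc)
      ((clu s).measurableSet_biUnion fun k _ => MeasurableSet.univ_pi fun i => measurableSet_Icc)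
  have hΘmp : ∀ s σ, MeasurePreserving (Θ s σ) volume volume := by
    intro s σ
    have h1 : MeasurePreserving (MeasurableEquiv.toLp 2 (Fin d → ℝ)).symm volume volume :=
      EuclideanSpace.volume_preserving_symm_measurableEquiv_toLp (Fin d)
    have h2 : MeasurePreserving (fun z : Fin d → ℝ => z - (fun i => s i)) volume volume :=
      measurePreserving_sub_right volume _
    have h3 : MeasurePreserving
        (fun z : Fin d → ℝ => fun i => if σ i then z i else -(z i)) volume volume := by
      apply volume_preserving_pi (f := fun (i : Fin d) (t : ℝ) => if σ i then t else -t)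
      intro i
      cases hσ : σ i
      · simpa using Measure.measurePreserving_neg (volume : Measure ℝ)
      · convert MeasurePreserving.id (volume : Measure ℝ) using 1
        funext t; simp [hσ]
    exact h3.comp (h2.comp h1)
  -- bounds on the box data
  have hbbound : ∀ s σ, ∀ k ∈ clu s, ∀ i, 0 ≤ bfun s σ k i ∧ bfun s σ k i ≤ 2 * r := by
    intro s σ k hk i
    have hdist : distInf (x k) s ≤ r := by
      rw [hclu_def] at hk
      simpa using (Finset.mem_filter.mp hk).2
    have h1 := abs_le.mp (distInf_coord' hdist i)
    rw [hbfun_def]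
    cases hσ : σ i <;> simp [hσ] <;> constructor <;> linarith [h1.1, h1.2]
  -- volume bound for each T s σ
  have hTvol : ∀ s σ, volume (T s σ) ≤ ENNReal.ofReal ((2*r + δ)^d - (2*r)^d) := by
    intro s σ
    have hsub : (⋃ k ∈ clu s, Set.univ.pi fun i => Icc 0 (bfun s σ k i))
        ⊆ ⋃ k ∈ clu s, Set.univ.pi fun i => Icc (0:ℝ) (bfun s σ k i + δ) := by
      refine Set.iUnion₂_mono fun k hk => Set.pi_mono fun i _ => ?_
      exact Icc_subset_Icc le_rfl (by linarith)
    have hfin : volume (⋃ k ∈ clu s, Set.univ.pi fun i => Icc (0:ℝ) (bfun s σ k i)) ≠ ⊤ := by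
      have hcube : (⋃ k ∈ clu s, Set.univ.pi fun i => Icc (0:ℝ) (bfun s σ k i))
          ⊆ Set.univ.pi fun i : Fin d => Icc (0:ℝ) (2*r) := by
        refine Set.iUnion₂_subset fun k hk => Set.pi_mono fun i _ => ?_
        exact Icc_subset_Icc le_rfl (hbbound s σ k hk i).2
      refine ne_of_lt (lt_of_le_of_lt (measure_mono hcube) ?_)
      rw [volume_pi_pi]
      simp only [Real.volume_Icc, sub_zero]
      rw [Finset.prod_const]
      exact lt_of_le_of_lt (le_of_eq (by rw [Finset.card_univ, Fintype.card_fin]))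
        (ENNReal.pow_lt_top (n := d) ENNReal.ofReal_lt_top)
    have hcore := box_core' d (2*r) δ (by linarith) (le_of_lt hδ) (clu s) (bfun s σ)
      (hbbound s σ)
    rw [hT_def]
    rw [measure_diff hsub
      (((clu s).measurableSet_biUnion fun k _ =>
        MeasurableSet.univ_pi fun i => measurableSet_Icc).nullMeasurableSet) hfin]
    rw [tsub_le_iff_right, add_comm]
    exact hcore
  -- covering
  have hcover : (Set.range x + (r + δ) • unitCube d) \ (Set.range x + r • unitCube d)
      ⊆ ⋃ s ∈ S, ⋃ σ ∈ (Finset.univ : Finset (Fin d → Bool)), (Θ s σ) ⁻¹' (T s σ) := by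
    intro y hy
    obtain ⟨k, hk⟩ := (mem_cube_sum' (by linarith : (0:ℝ) < r + δ) x y).mp hy.1
    obtain ⟨s, hsS, hsr⟩ := hmax k
    set σ : Fin d → Bool := fun i => decide (s i ≤ y i) with hσ_def
    have hη : ∀ i, 0 ≤ Θ s σ y i := by
      intro i
      rw [hΘapp]
      by_cases h : s i ≤ y i
      · simp [hσ_def, h]
      · simp [hσ_def, h]
        push_neg at h
        linarith
    refine Set.mem_biUnion hsS ?_
    refine Set.mem_biUnion (Finset.mem_univ σ) ?_
    rw [Set.mem_preimage, hT_def]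
    constructor
    · -- in the enlarged union
      refine Set.mem_biUnion (show k ∈ clu s by
        rw [hclu_def]; exact Finset.mem_filter.mpr ⟨Finset.mem_univ k, hsr⟩) ?_
      intro i _
      refine ⟨hη i, ?_⟩
      rw [hΘapp, hbfun_def]
      have h1 := abs_le.mp (hk i)
      cases hσi : σ i
      · simp only [hσi, Bool.false_eq_true, if_false]
        linarith [h1.1, h1.2]
      · simp only [hσi, if_true]
        linarith [h1.1, h1.2]
    · -- not in the smaller union
      intro hmem
      rw [Set.mem_iUnion₂] at hmem
      obtain ⟨k', hk', hmem⟩ := hmem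
      have hk'r : distInf (x k') s ≤ r := by
        rw [hclu_def] at hk'
        simpa using (Finset.mem_filter.mp hk').2
      have hclose : ∀ i, |y i - x k' i| ≤ r := by
        intro i
        have h2 := hmem i (Set.mem_univ i)
        rw [Set.mem_Icc, hΘapp s σ y i] at h2
        simp only [hbfun_def] at h2
        obtain ⟨h2a, h2b⟩ := h2
        have h3 := abs_le.mp (distInf_coord' hk'r i)
        rw [abs_le]
        cases hσi : σ i
        · rw [hσi] at h2a h2b
          simp only [Bool.false_eq_true, if_false] at h2a h2b
          constructor <;> linarith [h3.1, h3.2]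
        · rw [hσi] at h2a h2b
          simp only [if_true] at h2a h2b
          constructor <;> linarith [h3.1, h3.2]
      exact hy.2 ((mem_cube_sum' hr x y).mpr ⟨k', hclose⟩)
  -- put everything together
  have hfinal : volume ((Set.range x + (r + δ) • unitCube d) \ (Set.range x + r • unitCube d))
      ≤ (P : ℝ≥0∞) * (((2:ℝ≥0∞))^d * ENNReal.ofReal ((2*r + δ)^d - (2*r)^d)) := by
    calc volume ((Set.range x + (r + δ) • unitCube d) \ (Set.range x + r • unitCube d))
        ≤ volume (⋃ s ∈ S, ⋃ σ ∈ (Finset.univ : Finset (Fin d → Bool)),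
            (Θ s σ) ⁻¹' (T s σ)) := measure_mono hcover
      _ ≤ ∑ s ∈ S, volume (⋃ σ ∈ (Finset.univ : Finset (Fin d → Bool)),
            (Θ s σ) ⁻¹' (T s σ)) := measure_biUnion_finset_le S _
      _ ≤ ∑ s ∈ S, ∑ σ ∈ (Finset.univ : Finset (Fin d → Bool)),
            volume ((Θ s σ) ⁻¹' (T s σ)) :=
          Finset.sum_le_sum fun s _ => measure_biUnion_finset_le _ _
      _ = ∑ s ∈ S, ∑ σ ∈ (Finset.univ : Finset (Fin d → Bool)), volume (T s σ) := by
          refine Finset.sum_congr rfl fun s _ => Finset.sum_congr rfl fun σ _ => ?_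
          exact (hΘmp s σ).measure_preimage (hTmeas s σ).nullMeasurableSet
      _ ≤ ∑ s ∈ S, ∑ σ ∈ (Finset.univ : Finset (Fin d → Bool)),
            ENNReal.ofReal ((2*r + δ)^d - (2*r)^d) :=
          Finset.sum_le_sum fun s _ => Finset.sum_le_sum fun σ _ => hTvol s σ
      _ = (P : ℝ≥0∞) * (((2:ℝ≥0∞))^d * ENNReal.ofReal ((2*r + δ)^d - (2*r)^d)) := by
          rw [Finset.sum_const, Finset.sum_const, Finset.card_univ, Fintype.card_fun,
            Fintype.card_bool, Fintype.card_fin, hScard, nsmul_eq_mul, nsmul_eq_mul]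
          push_cast
          ring
  refine le_trans hfinal ?_
  have hpownn : (0:ℝ) ≤ (2*r + δ)^d - (2*r)^d := by
    have := pow_le_pow_left₀ (by linarith : (0:ℝ) ≤ 2*r) (by linarith : 2*r ≤ 2*r + δ) d
    linarith
  have hcast : (P : ℝ≥0∞) * (((2:ℝ≥0∞))^d * ENNReal.ofReal ((2*r + δ)^d - (2*r)^d))
      = ENNReal.ofReal ((P:ℝ) * ((2:ℝ)^d * ((2*r + δ)^d - (2*r)^d))) := by
    rw [ENNReal.ofReal_mul (Nat.cast_nonneg P), ENNReal.ofReal_mul (by positivity : (0:ℝ) ≤ (2:ℝ)^d),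
      ENNReal.ofReal_natCast, ENNReal.ofReal_pow (by norm_num : (0:ℝ) ≤ 2)]
    norm_num
  rw [hcast]
  refine ENNReal.ofReal_le_ofReal ?_
  have hkey := pow_step' d hd r δ hr hδ
  calc (P:ℝ) * ((2:ℝ)^d * ((2*r + δ)^d - (2*r)^d))
      ≤ (P:ℝ) * (2^(2*d-1) * ((r+δ)^d - r^d)) :=
        mul_le_mul_of_nonneg_left hkey (Nat.cast_nonneg P)
    _ = (P:ℝ) * (2^(2*d-1) * ((r + δ)^d - r^d)) := by ring
end

section
/- Let d ≥ 2, r > 0, δ > 0, V > 0, and let A ⊆ ℝ^d be a nonempty closed set such that λ(A_{⊕r}) ≤ V. Then λ(A_{⊕(r+δ)} \ A_{⊕r}) ≤ (V/r^d) · 2^{2d−1} ((r+δ)^d − r^d), and the upper surface area of A_{⊕r} satisfies λ̄(∂A_{⊕r}) ≤ (V/r) · 2^{2d−1} d. -/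
open MeasureTheory Set Filter
open scoped ENNReal Pointwise

/-! ### Auxiliary lemmas -/

lemma smul_unitBall_eq {d : ℕ} {s : ℝ} (hs : 0 ≤ s) :
    s • unitBall d = Metric.closedBall (0 : EuclideanSpace ℝ (Fin d)) s := by
  rw [unitBall, _root_.smul_closedBall _ _ zero_le_one, smul_zero, Real.norm_eq_abs,
    abs_of_nonneg hs, mul_one]

lemma add_smul_unitBall_eq {d : ℕ} {A : Set (EuclideanSpace ℝ (Fin d))} (hA : IsClosed A)
    (hAne : A.Nonempty) {s : ℝ} (hs : 0 ≤ s) :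
    A + s • unitBall d = {x | Metric.infDist x A ≤ s} := by
  rw [smul_unitBall_eq hs]
  ext x
  constructor
  · rw [Set.mem_add]
    rintro ⟨a, ha, b, hb, rfl⟩
    have hb' : ‖b‖ ≤ s := by simpa [Metric.mem_closedBall, dist_zero_right] using hb
    calc Metric.infDist (a + b) A ≤ dist (a + b) a := Metric.infDist_le_dist_of_mem ha
    _ = ‖b‖ := by rw [dist_eq_norm, add_sub_cancel_left]
    _ ≤ s := hb'
  · intro h
    obtain ⟨a, haA, hda⟩ := hA.exists_infDist_eq_dist hAne x
    rw [Set.mem_add]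
    refine ⟨a, haA, x - a, ?_, by abel⟩
    simp only [Set.mem_setOf_eq] at h
    rw [hda] at h
    simp only [Metric.mem_closedBall, dist_zero_right, ← dist_eq_norm, dist_comm]
    exact h

lemma closed_infDist_le {d : ℕ} (A : Set (EuclideanSpace ℝ (Fin d))) (s : ℝ) :
    IsClosed {x | Metric.infDist x A ≤ s} :=
  isClosed_le (Metric.continuous_infDist_pt A) continuous_const

/-- Kneser-type inequality: the volume of the `R`-neighborhood of a closed set is at most
`(R/r)^d` times the volume of the `r`-neighborhood, for `0 < r ≤ R`. -/
lemma kneser_neighborhood {d : ℕ} {A : Set (EuclideanSpace ℝ (Fin d))} (hA : IsClosed A)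
    (hAne : A.Nonempty) {r R : ℝ} (hr : 0 < r) (hrR : r ≤ R) :
    volume {x | Metric.infDist x A ≤ R}
      ≤ ENNReal.ofReal ((R / r) ^ d) * volume {x | Metric.infDist x A ≤ r} := by
  have hR : 0 < R := hr.trans_le hrR
  choose n hnA hnd using fun x => hA.exists_infDist_eq_dist hAne x
  set θ : ℝ := r / R with hθdef
  have hθ0 : 0 < θ := by positivity
  have hθ1 : θ ≤ 1 := by rw [div_le_one hR]; exact hrR
  set Φ : EuclideanSpace ℝ (Fin d) → EuclideanSpace ℝ (Fin d) :=
    fun x => n x + θ • (x - n x) with hΦ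
  -- key monotonicity of the nearest-point map
  have key : ∀ x y, (0:ℝ) ≤ inner ℝ (x - y) (n x - n y) := by
    intro x y
    have h1 : ‖x - n x‖ ≤ ‖(x - n x) + (n x - n y)‖ := by
      have e : (x - n x) + (n x - n y) = x - n y := by abel
      rw [e, ← dist_eq_norm, ← dist_eq_norm, ← hnd x]
      exact Metric.infDist_le_dist_of_mem (hnA y)
    have h2 : ‖y - n y‖ ≤ ‖(y - n y) - (n x - n y)‖ := by
      have e : (y - n y) - (n x - n y) = y - n x := by abel
      rw [e, ← dist_eq_norm, ← dist_eq_norm, ← hnd y]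
      exact Metric.infDist_le_dist_of_mem (hnA x)
    have h1' : ‖x - n x‖ ^ 2 ≤ ‖(x - n x) + (n x - n y)‖ ^ 2 :=
      pow_le_pow_left₀ (norm_nonneg _) h1 2
    have h2' : ‖y - n y‖ ^ 2 ≤ ‖(y - n y) - (n x - n y)‖ ^ 2 :=
      pow_le_pow_left₀ (norm_nonneg _) h2 2
    have e1 := norm_add_sq_real (x - n x) (n x - n y)
    have e2 := norm_sub_sq_real (y - n y) (n x - n y)
    have hxy : x - y = (x - n x) - (y - n y) + (n x - n y) := by abel
    rw [hxy, inner_add_left, inner_sub_left, real_inner_self_eq_norm_sq]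
    linarith
  -- the contraction expands distances at rate at least θ
  have hexp : ∀ x y, θ * dist x y ≤ dist (Φ x) (Φ y) := by
    intro x y
    have hdiff : Φ x - Φ y = θ • (x - y) + (1 - θ) • (n x - n y) := by
      simp only [hΦ]
      module
    have hnorm : ‖θ • (x - y) + (1 - θ) • (n x - n y)‖ ^ 2
        = θ ^ 2 * ‖x - y‖ ^ 2 + 2 * (θ * (1 - θ)) * (inner ℝ (x - y) (n x - n y) : ℝ)
          + (1 - θ) ^ 2 * ‖n x - n y‖ ^ 2 := by
      rw [norm_add_sq_real, real_inner_smul_left, real_inner_smul_right, norm_smul, norm_smul,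
        Real.norm_eq_abs, Real.norm_eq_abs, abs_of_nonneg hθ0.le,
        abs_of_nonneg (by linarith : (0:ℝ) ≤ 1 - θ)]
      ring
    have hsq : (θ * dist x y) ^ 2 ≤ dist (Φ x) (Φ y) ^ 2 := by
      rw [dist_eq_norm, dist_eq_norm, hdiff, hnorm]
      have t1 : (0:ℝ) ≤ 2 * (θ * (1 - θ)) * (inner ℝ (x - y) (n x - n y) : ℝ) :=
        mul_nonneg (mul_nonneg (by norm_num) (mul_nonneg hθ0.le (by linarith))) (key x y)
      have t2 : (0:ℝ) ≤ (1 - θ) ^ 2 * ‖n x - n y‖ ^ 2 := by positivity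
      nlinarith
    have hd1 : (0:ℝ) ≤ dist (Φ x) (Φ y) := dist_nonneg
    have hd2 : (0:ℝ) ≤ dist x y := dist_nonneg
    nlinarith [hd1, mul_nonneg hθ0.le hd2]
  set K : NNReal := (R / r).toNNReal with hK
  have hKcoe : (K : ℝ) = R / r := Real.coe_toNNReal _ (by positivity)
  have hanti : AntilipschitzWith K Φ := by
    apply AntilipschitzWith.of_le_mul_dist
    intro x y
    rw [hKcoe]
    calc dist x y = (R / r) * (θ * dist x y) := by
          rw [hθdef]; field_simp
    _ ≤ (R / r) * dist (Φ x) (Φ y) := by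
          exact mul_le_mul_of_nonneg_left (hexp x y) (by positivity)
  have himg : Φ '' {x | Metric.infDist x A ≤ R} ⊆ {x | Metric.infDist x A ≤ r} := by
    rintro _ ⟨x, hx, rfl⟩
    simp only [Set.mem_setOf_eq] at hx ⊢
    have hΦn : dist (Φ x) (n x) = θ * dist x (n x) := by
      have e : Φ x - n x = θ • (x - n x) := by simp only [hΦ]; abel
      rw [dist_eq_norm, e, norm_smul, Real.norm_eq_abs, abs_of_nonneg hθ0.le, ← dist_eq_norm]
    calc Metric.infDist (Φ x) A ≤ dist (Φ x) (n x) := Metric.infDist_le_dist_of_mem (hnA x)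
    _ = θ * dist x (n x) := hΦn
    _ = θ * Metric.infDist x A := by rw [← hnd x]
    _ ≤ θ * R := mul_le_mul_of_nonneg_left hx hθ0.le
    _ = r := by rw [hθdef]; field_simp
  -- Hausdorff measure comparison
  have hcomp : (μH[((Module.finrank ℝ (EuclideanSpace ℝ (Fin d))) : ℝ)] :
        Measure (EuclideanSpace ℝ (Fin d))) {x | Metric.infDist x A ≤ R}
      ≤ (K : ℝ≥0∞) ^ ((Module.finrank ℝ (EuclideanSpace ℝ (Fin d))) : ℝ)
        * (μH[((Module.finrank ℝ (EuclideanSpace ℝ (Fin d))) : ℝ)] :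
            Measure (EuclideanSpace ℝ (Fin d))) {x | Metric.infDist x A ≤ r} :=
    le_trans (hanti.le_hausdorffMeasure_image (by positivity) _)
      (mul_le_mul_right (measure_mono himg) _)
  have hHaar : (μH[((Module.finrank ℝ (EuclideanSpace ℝ (Fin d))) : ℝ)] :
        Measure (EuclideanSpace ℝ (Fin d)))
      = (Measure.addHaarScalarFactor
          (μH[((Module.finrank ℝ (EuclideanSpace ℝ (Fin d))) : ℝ)] :
            Measure (EuclideanSpace ℝ (Fin d))) volume) • volume :=
    Measure.isAddLeftInvariant_eq_smul _ volume
  have hc0 : 0 < Measure.addHaarScalarFactor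
      (μH[((Module.finrank ℝ (EuclideanSpace ℝ (Fin d))) : ℝ)] :
        Measure (EuclideanSpace ℝ (Fin d))) volume :=
    Measure.addHaarScalarFactor_pos_of_isAddHaarMeasure _ volume
  have hKpow : (K : ℝ≥0∞) ^ ((Module.finrank ℝ (EuclideanSpace ℝ (Fin d))) : ℝ)
      = ENNReal.ofReal ((R / r) ^ d) := by
    rw [finrank_euclideanSpace_fin, ENNReal.rpow_natCast,
      ENNReal.ofReal_pow (by positivity)]
    rfl
  rw [hHaar, hKpow] at hcomp
  simp only [Measure.smul_apply, ENNReal.smul_def, smul_eq_mul] at hcomp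
  rw [mul_left_comm] at hcomp
  exact (ENNReal.mul_le_mul_iff_right (by exact_mod_cast hc0.ne') ENNReal.coe_ne_top).mp hcomp

/-- The shell estimate derived from the Kneser inequality. -/
lemma shell_bound {d : ℕ} {A : Set (EuclideanSpace ℝ (Fin d))} (hA : IsClosed A)
    (hAne : A.Nonempty) {r R V : ℝ} (hr : 0 < r) (hrR : r ≤ R)
    (hvol : volume {x | Metric.infDist x A ≤ r} ≤ ENNReal.ofReal V) :
    volume {x | Metric.infDist x A ≤ R} - volume {x | Metric.infDist x A ≤ r}
      ≤ ENNReal.ofReal (((R / r) ^ d - 1) * V) := by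
  have ha1 : 1 ≤ (R / r) ^ d := one_le_pow₀ ((one_le_div hr).mpr hrR)
  have hfin : volume {x | Metric.infDist x A ≤ r} ≠ ∞ :=
    (lt_of_le_of_lt hvol ENNReal.ofReal_lt_top).ne
  have hsplit : ENNReal.ofReal ((R / r) ^ d) = ENNReal.ofReal ((R / r) ^ d - 1) + 1 := by
    rw [← ENNReal.ofReal_one, ← ENNReal.ofReal_add (by linarith) (by norm_num), sub_add_cancel]
  calc volume {x | Metric.infDist x A ≤ R} - volume {x | Metric.infDist x A ≤ r}
      ≤ ENNReal.ofReal ((R / r) ^ d) * volume {x | Metric.infDist x A ≤ r}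
        - volume {x | Metric.infDist x A ≤ r} :=
        tsub_le_tsub_right (kneser_neighborhood hA hAne hr hrR) _
  _ = ENNReal.ofReal ((R / r) ^ d - 1) * volume {x | Metric.infDist x A ≤ r} := by
        rw [hsplit, add_mul, one_mul, ENNReal.add_sub_cancel_right hfin]
  _ ≤ ENNReal.ofReal ((R / r) ^ d - 1) * ENNReal.ofReal V := mul_le_mul_right hvol _
  _ = ENNReal.ofReal (((R / r) ^ d - 1) * V) := (ENNReal.ofReal_mul (by linarith)).symm

/-- Elementary binomial-type estimate. -/
lemma pow_add_le_aux {r x : ℝ} (hr : 0 < r) (hx : 0 ≤ x) (hxr : x ≤ r) (k : ℕ) :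
    (r + x) ^ (k + 1) ≤ r ^ (k + 1) + x * ((k:ℝ) + 1) * (2 * r) ^ k := by
  induction k with
  | zero => simp
  | succ m ih =>
    have h2 : r + x ≤ 2 * r := by linarith
    have hrx : 0 ≤ r + x := by linarith
    have hp : (0:ℝ) ≤ (2 * r) ^ m := by positivity
    calc (r + x) ^ (m + 2) = (r + x) * (r + x) ^ (m + 1) := by ring
    _ ≤ (r + x) * (r ^ (m + 1) + x * ((m:ℝ) + 1) * (2 * r) ^ m) :=
        mul_le_mul_of_nonneg_left ih hrx
    _ = r * r ^ (m + 1) + x * r ^ (m + 1) + (r + x) * (x * ((m:ℝ) + 1) * (2 * r) ^ m) := by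
        ring
    _ ≤ r * r ^ (m + 1) + x * (2 * r) ^ (m + 1) + (2 * r) * (x * ((m:ℝ) + 1) * (2 * r) ^ m) := by
        have b1 : x * r ^ (m + 1) ≤ x * (2 * r) ^ (m + 1) :=
          mul_le_mul_of_nonneg_left (pow_le_pow_left₀ hr.le (by linarith) _) hx
        have b2 : (r + x) * (x * ((m:ℝ) + 1) * (2 * r) ^ m)
            ≤ (2 * r) * (x * ((m:ℝ) + 1) * (2 * r) ^ m) := by
          apply mul_le_mul_of_nonneg_right h2
          positivity
        linarith
    _ = r ^ (m + 2) + x * ((m:ℝ) + 1 + 1) * (2 * r) ^ (m + 1) := by ring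
    _ = r ^ (m + 2) + x * ((↑(m+1):ℝ) + 1) * (2 * r) ^ (m + 1) := by push_cast; ring

/-- For `d ≥ 2`, `r, δ, V > 0` and a nonempty closed `A ⊆ ℝ^d` with
`λ(A_{⊕r}) ≤ V`:
`λ(A_{⊕(r+δ)} \ A_{⊕r}) ≤ (V/r^d) · 2^{2d−1}((r+δ)^d − r^d)` and
`λ̄(∂A_{⊕r}) ≤ (V/r) · 2^{2d−1} d`. -/
theorem reverse_isoperimetric_ball
    (d : ℕ) (hd : 2 ≤ d) (r δ V : ℝ) (hr : 0 < r) (hδ : 0 < δ) (hV : 0 < V)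
    (A : Set (EuclideanSpace ℝ (Fin d))) (hA : IsClosed A) (hAne : A.Nonempty)
    (hvol : volume (A + r • unitBall d) ≤ ENNReal.ofReal V) :
    volume ((A + (r + δ) • unitBall d) \ (A + r • unitBall d)) ≤
      ENNReal.ofReal (V / r ^ d * (2 ^ (2 * d - 1) * ((r + δ) ^ d - r ^ d))) ∧
    upperSurf (unitBall d) (A + r • unitBall d) ≤
      ENNReal.ofReal (V / r * (2 ^ (2 * d - 1) * d)) := by
  rw [add_smul_unitBall_eq hA hAne hr.le] at hvol
  have hfin : volume {x | Metric.infDist x A ≤ r} ≠ ∞ :=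
    (lt_of_le_of_lt hvol ENNReal.ofReal_lt_top).ne
  obtain ⟨k, rfl⟩ : ∃ k, d = k + 1 := ⟨d - 1, by omega⟩
  have h21 : 2 * (k + 1) - 1 = 2 * k + 1 := by omega
  have hone_le : (1:ℝ) ≤ 2 ^ (2 * k + 1) := one_le_pow₀ (by norm_num)
  constructor
  · -- Part 1
    rw [add_smul_unitBall_eq hA hAne (by positivity : (0:ℝ) ≤ r + δ),
      add_smul_unitBall_eq hA hAne hr.le]
    have hsub : {x : EuclideanSpace ℝ (Fin (k+1)) | Metric.infDist x A ≤ r}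
        ⊆ {x | Metric.infDist x A ≤ r + δ} := by
      intro x hx
      simp only [Set.mem_setOf_eq] at hx ⊢
      linarith
    rw [measure_diff hsub ((closed_infDist_le A r).measurableSet.nullMeasurableSet) hfin]
    refine le_trans (shell_bound hA hAne hr (by linarith) hvol) ?_
    apply ENNReal.ofReal_le_ofReal
    have hP : (0:ℝ) ≤ (r + δ) ^ (k+1) - r ^ (k+1) := by
      have := pow_le_pow_left₀ hr.le (by linarith : r ≤ r + δ) (k+1)
      linarith
    have e1 : (((r + δ) / r) ^ (k+1) - 1) * V
        = V / r ^ (k+1) * ((r + δ) ^ (k+1) - r ^ (k+1)) := by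
      rw [div_pow]
      field_simp
    rw [e1, h21]
    have : ((r + δ) ^ (k+1) - r ^ (k+1)) ≤ 2 ^ (2*k+1) * ((r + δ) ^ (k+1) - r ^ (k+1)) :=
      le_mul_of_one_le_left hP hone_le
    have hVr : (0:ℝ) ≤ V / r ^ (k+1) := by positivity
    exact mul_le_mul_of_nonneg_left this hVr
  · -- Part 2
    refine Filter.limsup_le_of_le ?_ ?_
    · exact Filter.isCobounded_le_of_bot
    · have hIoc : Set.Ioc (0:ℝ) r ∈ nhdsWithin (0:ℝ) (Set.Ioi 0) :=
        Ioc_mem_nhdsGT_of_mem ⟨le_refl 0, hr⟩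
      filter_upwards [hIoc] with t ht
      obtain ⟨ht0, htr⟩ := ht
      have e1 : A + r • unitBall (k+1) + t • unitBall (k+1)
          = A + (r + t) • unitBall (k+1) := by
        rw [add_assoc, smul_unitBall_eq hr.le, smul_unitBall_eq ht0.le,
          closedBall_add_closedBall hr.le ht0.le, add_zero, ← smul_unitBall_eq (by positivity)]
      rw [e1, add_smul_unitBall_eq hA hAne (by positivity : (0:ℝ) ≤ r + t),
        add_smul_unitBall_eq hA hAne hr.le]
      apply ENNReal.div_le_of_le_mul
      refine le_trans (shell_bound hA hAne hr (by linarith) hvol) ?_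
      rw [← ENNReal.ofReal_mul (by positivity)]
      apply ENNReal.ofReal_le_ofReal
      -- real inequality
      have hkey := pow_add_le_aux hr ht0.le htr k
      have hrk : (0:ℝ) < r ^ (k+1) := by positivity
      have e2 : (((r + t) / r) ^ (k+1) - 1) * V
          = V / r ^ (k+1) * ((r + t) ^ (k+1) - r ^ (k+1)) := by
        rw [div_pow]
        field_simp
      rw [e2, h21]
      calc V / r ^ (k+1) * ((r + t) ^ (k+1) - r ^ (k+1))
          ≤ V / r ^ (k+1) * (t * ((k:ℝ) + 1) * (2 * r) ^ k) := by
            apply mul_le_mul_of_nonneg_left _ (by positivity)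
            linarith
      _ = V / r * (2 ^ k * ((k:ℝ) + 1)) * t := by
            rw [mul_pow]
            field_simp
            ring
      _ ≤ V / r * (2 ^ (2*k+1) * ((k:ℝ) + 1)) * t := by
            have h2k : (2:ℝ) ^ k ≤ 2 ^ (2*k+1) := pow_le_pow_right₀ (by norm_num) (by omega)
            have : V / r * (2 ^ k * ((k:ℝ) + 1)) ≤ V / r * (2 ^ (2*k+1) * ((k:ℝ) + 1)) := by
              apply mul_le_mul_of_nonneg_left _ (by positivity)
              apply mul_le_mul_of_nonneg_right h2k (by positivity)
            exact mul_le_mul_of_nonneg_right this ht0.le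
      _ = V / r * (2 ^ (2*k+1) * (↑(k+1):ℝ)) * t := by push_cast; ring
end

section
/- Let d ≥ 1, r > 0, δ > 0, V > 0, and let A ⊆ ℝ^d be a nonempty closed set such that λ(A_{⊞r}) ≤ V. Then λ(A_{⊞(r+δ)} \ A_{⊞r}) ≤ (V/r^d) · 2^{2d−1} ((r+δ)^d − r^d), and the upper C-surface area of A_{⊞r} satisfies λ̄_C(∂A_{⊞r}) ≤ (V/r) · 2^{2d−1} d. -/
open MeasureTheory Set Filter
open scoped ENNReal Pointwise

def segS {n : ℕ} (i : Fin n) (a : ℝ) : Set (EuclideanSpace ℝ (Fin n)) :=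
  {x | (∀ j, j ≠ i → x j = 0) ∧ |x i| ≤ a}

def QS {k : ℕ} (s : Finset (Fin k)) (a : ℝ) : Set (EuclideanSpace ℝ (Fin k)) :=
  {x | (∀ j ∉ s, x j = 0) ∧ ∀ j, |x j| ≤ a}

lemma oneD_plus {S : Set ℝ} (hS : IsClosed S) {r δ : ℝ} (hr : 0 < r) (hδ : 0 < δ)
    (h2 : ∀ b ∈ S, ∃ t, b ∈ Icc t (t + 2*r) ∧ Icc t (t + 2*r) ⊆ S) :
    volume ((S + Icc (0:ℝ) δ) \ S) ≤ ENNReal.ofReal (δ/(2*r)) * volume S := by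
  by_cases hSvol : volume S = ⊤
  · rw [hSvol, ENNReal.mul_top (by simp; positivity)]
    exact le_top
  set D := (S + Icc (0:ℝ) δ) \ S with hD
  set f : ℝ → ℝ := fun x => sSup (S ∩ Iic x) with hf
  have hbdd : ∀ x : ℝ, BddAbove (S ∩ Iic x) := fun x => ⟨x, fun y hy => hy.2⟩
  have hne : ∀ x ∈ D, (S ∩ Iic x).Nonempty := by
    rintro x ⟨hx1, hx2⟩
    rw [Set.mem_add] at hx1
    obtain ⟨s, hs, u, hu, rfl⟩ := hx1
    exact ⟨s, hs, mem_Iic.mpr (by linarith [hu.1])⟩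
  have hmem : ∀ x ∈ D, f x ∈ S ∩ Iic x := fun x hx =>
    (hS.inter isClosed_Iic).csSup_mem (hne x hx) (hbdd x)
  have hgap : ∀ x ∈ D, ∀ s' ∈ S, s' ≤ x → s' ≤ f x := fun x hx s' hs' hle =>
    le_csSup (hbdd x) ⟨hs', hle⟩
  have hlt : ∀ x ∈ D, f x < x := by
    intro x hx
    rcases lt_or_eq_of_le (mem_Iic.mp (hmem x hx).2) with h | h
    · exact h
    · exact absurd ((h ▸ (hmem x hx).1) : x ∈ S) hx.2
  have hge : ∀ x ∈ D, x - δ ≤ f x := by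
    rintro x hx
    obtain ⟨hx1, hx2⟩ := hx
    rw [Set.mem_add] at hx1
    obtain ⟨s, hs, u, hu, rfl⟩ := hx1
    have := hgap _ ⟨by rw [Set.mem_add]; exact ⟨s, hs, u, hu, rfl⟩, hx2⟩ s hs (by linarith [hu.1])
    linarith [hu.2]
  have hIcc : ∀ x ∈ D, Icc (f x - 2*r) (f x) ⊆ S := by
    intro x hxD
    obtain ⟨t, htmem, htsub⟩ := h2 (f x) (hmem x hxD).1
    by_cases hc : t + 2*r ≤ x
    · have h1 : t + 2*r ≤ f x :=
        hgap x hxD _ (htsub ⟨by linarith, le_rfl⟩) hc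
      have h2' : f x = t + 2*r := le_antisymm htmem.2 h1
      intro y hy
      exact htsub ⟨by simp only [mem_Icc] at hy; linarith, by simp only [mem_Icc] at hy; linarith [htmem.1]⟩
    · exact absurd (htsub ⟨by linarith [htmem.1, hlt x hxD], by linarith⟩) hxD.2
  have hsep : ∀ x ∈ D, ∀ x' ∈ D, f x < f x' → f x + 2*r < f x' := by
    intro x hx x' hx' hlt'
    have hx'S : f x' ∈ S := (hmem x' hx').1
    have h1 : x < f x' := by
      by_contra h
      push_neg at h
      exact absurd (hgap x hx _ hx'S h) (not_le.mpr hlt')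
    by_contra h
    push_neg at h
    exact hx.2 (hIcc x' hx' ⟨by linarith [hlt x hx], le_of_lt h1⟩)
  set T := f '' D with hT
  have hTsub : ∀ τ ∈ T, Icc (τ - 2*r) τ ⊆ S := by
    rintro τ ⟨x, hx, rfl⟩
    exact hIcc x hx
  have hdisj : T.PairwiseDisjoint (fun τ => Icc (τ - 2*r) τ) := by
    rintro τ ⟨x, hx, rfl⟩ τ' ⟨x', hx', rfl⟩ hne'
    rcases lt_or_gt_of_ne hne' with h | h
    · have := hsep x hx x' hx' h
      exact Set.disjoint_left.mpr (fun y hy hy' => by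
        simp only [mem_Icc] at hy hy'; linarith [hy.2, hy'.1])
    · have := hsep x' hx' x hx h
      exact Set.disjoint_left.mpr (fun y hy hy' => by
        simp only [mem_Icc] at hy hy'; linarith [hy.1, hy'.2])
  have hUsub : (⋃ τ ∈ T, Icc (τ - 2*r) τ) ⊆ S := by
    simp only [iUnion_subset_iff]
    exact hTsub
  have hTc : T.Countable := by
    have hdisj' : Pairwise (Function.onFun Disjoint
        (fun τ : T => Icc ((τ : ℝ) - 2*r) (τ : ℝ))) := by
      rintro ⟨τ, hτ⟩ ⟨τ', hτ'⟩ hne'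
      exact hdisj hτ hτ' (fun hcontr => hne' (Subtype.ext hcontr))
    have hU : volume (⋃ τ : T, Icc ((τ : ℝ) - 2*r) (τ : ℝ)) ≠ ⊤ := by
      refine ne_top_of_le_ne_top hSvol (measure_mono ?_)
      rw [iUnion_subset_iff]
      exact fun τ => hTsub τ τ.2
    have hcnt := MeasureTheory.Measure.countable_meas_pos_of_disjoint_of_meas_iUnion_ne_top
      volume (fun _ => measurableSet_Icc) hdisj' hU
    have huniv : {τ : T | 0 < volume (Icc ((τ : ℝ) - 2*r) (τ : ℝ))} = univ := by
      ext τ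
      simp [Real.volume_Icc]
      linarith
    rw [huniv] at hcnt
    have : Countable T := Set.countable_univ_iff.mp hcnt
    exact Set.countable_coe_iff.mp this
  have hcover : D ⊆ ⋃ τ ∈ T, Ioc τ (τ + δ) := by
    intro x hx
    exact Set.mem_biUnion ⟨x, hx, rfl⟩ ⟨hlt x hx, by linarith [hge x hx]⟩
  calc volume D ≤ volume (⋃ τ ∈ T, Ioc τ (τ + δ)) := measure_mono hcover
    _ ≤ ∑' τ : T, volume (Ioc (τ : ℝ) ((τ : ℝ) + δ)) := measure_biUnion_le volume hTc _
    _ = ∑' τ : T, ENNReal.ofReal (δ/(2*r)) * volume (Icc ((τ : ℝ) - 2*r) (τ : ℝ)) := by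
        refine tsum_congr (fun τ => ?_)
        rw [Real.volume_Ioc, Real.volume_Icc, ← ENNReal.ofReal_mul (by positivity)]
        congr 1
        field_simp
        ring
    _ = ENNReal.ofReal (δ/(2*r)) * ∑' τ : T, volume (Icc ((τ : ℝ) - 2*r) (τ : ℝ)) :=
        ENNReal.tsum_mul_left
    _ = ENNReal.ofReal (δ/(2*r)) * volume (⋃ τ ∈ T, Icc (τ - 2*r) τ) := by
        rw [measure_biUnion hTc hdisj (fun _ _ => measurableSet_Icc)]
    _ ≤ ENNReal.ofReal (δ/(2*r)) * volume S := mul_le_mul_right (measure_mono hUsub) _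

lemma oneD_minus {S : Set ℝ} (hS : IsClosed S) {r δ : ℝ} (hr : 0 < r) (hδ : 0 < δ)
    (h2 : ∀ b ∈ S, ∃ t, b ∈ Icc t (t + 2*r) ∧ Icc t (t + 2*r) ⊆ S) :
    volume ((S + Icc (-δ) (0:ℝ)) \ S) ≤ ENNReal.ofReal (δ/(2*r)) * volume S := by
  by_cases hSvol : volume S = ⊤
  · rw [hSvol, ENNReal.mul_top (by simp; positivity)]
    exact le_top
  set D := (S + Icc (-δ) (0:ℝ)) \ S with hD
  set f : ℝ → ℝ := fun x => sInf (S ∩ Ici x) with hf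
  have hbdd : ∀ x : ℝ, BddBelow (S ∩ Ici x) := fun x => ⟨x, fun y hy => hy.2⟩
  have hne : ∀ x ∈ D, (S ∩ Ici x).Nonempty := by
    rintro x ⟨hx1, hx2⟩
    rw [Set.mem_add] at hx1
    obtain ⟨s, hs, u, hu, rfl⟩ := hx1
    exact ⟨s, hs, mem_Ici.mpr (by linarith [hu.2])⟩
  have hmem : ∀ x ∈ D, f x ∈ S ∩ Ici x := fun x hx =>
    (hS.inter isClosed_Ici).csInf_mem (hne x hx) (hbdd x)
  have hgap : ∀ x ∈ D, ∀ s' ∈ S, x ≤ s' → f x ≤ s' := fun x hx s' hs' hle =>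
    csInf_le (hbdd x) ⟨hs', hle⟩
  have hlt : ∀ x ∈ D, x < f x := by
    intro x hx
    rcases lt_or_eq_of_le (mem_Ici.mp (hmem x hx).2) with h | h
    · exact h
    · exact absurd ((h ▸ (hmem x hx).1) : x ∈ S) hx.2
  have hge : ∀ x ∈ D, f x ≤ x + δ := by
    rintro x hx
    obtain ⟨hx1, hx2⟩ := hx
    rw [Set.mem_add] at hx1
    obtain ⟨s, hs, u, hu, rfl⟩ := hx1
    have := hgap _ ⟨by rw [Set.mem_add]; exact ⟨s, hs, u, hu, rfl⟩, hx2⟩ s hs (by linarith [hu.2])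
    linarith [hu.1]
  have hIcc : ∀ x ∈ D, Icc (f x) (f x + 2*r) ⊆ S := by
    intro x hxD
    obtain ⟨t, htmem, htsub⟩ := h2 (f x) (hmem x hxD).1
    by_cases hc : x ≤ t
    · have h1 : f x ≤ t := hgap x hxD _ (htsub ⟨le_rfl, by linarith⟩) hc
      have h2' : f x = t := le_antisymm h1 htmem.1
      intro y hy
      exact htsub ⟨by simp only [mem_Icc] at hy; linarith, by simp only [mem_Icc] at hy; linarith⟩
    · exact absurd (htsub ⟨by linarith, by linarith [htmem.2, hlt x hxD]⟩) hxD.2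
  have hsep : ∀ x ∈ D, ∀ x' ∈ D, f x < f x' → f x + 2*r < f x' := by
    intro x hx x' hx' hlt'
    have hxS : f x ∈ S := (hmem x hx).1
    have h1 : f x < x' := by
      by_contra h
      push_neg at h
      exact absurd (hgap x' hx' _ hxS h) (not_le.mpr hlt')
    by_contra h
    push_neg at h
    have h3 : x' ≤ f x + 2*r := by linarith [hlt x' hx']
    exact hx'.2 (hIcc x hx ⟨le_of_lt h1, h3⟩)
  set T := f '' D with hT
  have hTsub : ∀ τ ∈ T, Icc τ (τ + 2*r) ⊆ S := by
    rintro τ ⟨x, hx, rfl⟩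
    exact hIcc x hx
  have hdisj : T.PairwiseDisjoint (fun τ => Icc τ (τ + 2*r)) := by
    rintro τ ⟨x, hx, rfl⟩ τ' ⟨x', hx', rfl⟩ hne'
    rcases lt_or_gt_of_ne hne' with h | h
    · have := hsep x hx x' hx' h
      exact Set.disjoint_left.mpr (fun y hy hy' => by
        simp only [mem_Icc] at hy hy'; linarith [hy.2, hy'.1])
    · have := hsep x' hx' x hx h
      exact Set.disjoint_left.mpr (fun y hy hy' => by
        simp only [mem_Icc] at hy hy'; linarith [hy.1, hy'.2])
  have hUsub : (⋃ τ ∈ T, Icc τ (τ + 2*r)) ⊆ S := by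
    simp only [iUnion_subset_iff]
    exact hTsub
  have hTc : T.Countable := by
    have hdisj' : Pairwise (Function.onFun Disjoint
        (fun τ : T => Icc (τ : ℝ) ((τ : ℝ) + 2*r))) := by
      rintro ⟨τ, hτ⟩ ⟨τ', hτ'⟩ hne'
      exact hdisj hτ hτ' (fun hcontr => hne' (Subtype.ext hcontr))
    have hU : volume (⋃ τ : T, Icc (τ : ℝ) ((τ : ℝ) + 2*r)) ≠ ⊤ := by
      refine ne_top_of_le_ne_top hSvol (measure_mono ?_)
      rw [iUnion_subset_iff]
      exact fun τ => hTsub τ τ.2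
    have hcnt := MeasureTheory.Measure.countable_meas_pos_of_disjoint_of_meas_iUnion_ne_top
      volume (fun _ => measurableSet_Icc) hdisj' hU
    have huniv : {τ : T | 0 < volume (Icc (τ : ℝ) ((τ : ℝ) + 2*r))} = univ := by
      ext τ
      simp [Real.volume_Icc]
      linarith
    rw [huniv] at hcnt
    have : Countable T := Set.countable_univ_iff.mp hcnt
    exact Set.countable_coe_iff.mp this
  have hcover : D ⊆ ⋃ τ ∈ T, Ico (τ - δ) τ := by
    intro x hx
    exact Set.mem_biUnion ⟨x, hx, rfl⟩ ⟨by linarith [hge x hx], hlt x hx⟩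
  calc volume D ≤ volume (⋃ τ ∈ T, Ico (τ - δ) τ) := measure_mono hcover
    _ ≤ ∑' τ : T, volume (Ico ((τ : ℝ) - δ) (τ : ℝ)) := measure_biUnion_le volume hTc _
    _ = ∑' τ : T, ENNReal.ofReal (δ/(2*r)) * volume (Icc (τ : ℝ) ((τ : ℝ) + 2*r)) := by
        refine tsum_congr (fun τ => ?_)
        rw [Real.volume_Ico, Real.volume_Icc, ← ENNReal.ofReal_mul (by positivity)]
        congr 1
        field_simp
        ring
    _ = ENNReal.ofReal (δ/(2*r)) * ∑' τ : T, volume (Icc (τ : ℝ) ((τ : ℝ) + 2*r)) :=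
        ENNReal.tsum_mul_left
    _ = ENNReal.ofReal (δ/(2*r)) * volume (⋃ τ ∈ T, Icc τ (τ + 2*r)) := by
        rw [measure_biUnion hTc hdisj (fun _ _ => measurableSet_Icc)]
    _ ≤ ENNReal.ofReal (δ/(2*r)) * volume S := mul_le_mul_right (measure_mono hUsub) _

lemma oneD {S : Set ℝ} (hS : IsClosed S) {r δ : ℝ} (hr : 0 < r) (hδ : 0 < δ)
    (h2 : ∀ b ∈ S, ∃ t, b ∈ Icc t (t + 2*r) ∧ Icc t (t + 2*r) ⊆ S) :
    volume (S + Icc (-δ) δ) ≤ ENNReal.ofReal (1 + δ/r) * volume S := by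
  have hsplit : S + Icc (-δ) δ ⊆
      S ∪ (((S + Icc (0:ℝ) δ) \ S) ∪ ((S + Icc (-δ) (0:ℝ)) \ S)) := by
    rintro x hx
    rw [Set.mem_add] at hx
    obtain ⟨s, hs, u, hu, rfl⟩ := hx
    by_cases hxS : s + u ∈ S
    · exact Or.inl hxS
    · refine Or.inr ?_
      rcases le_or_gt u 0 with h | h
      · exact Or.inr ⟨by rw [Set.mem_add]; exact ⟨s, hs, u, ⟨hu.1, h⟩, rfl⟩, hxS⟩
      · exact Or.inl ⟨by rw [Set.mem_add]; exact ⟨s, hs, u, ⟨le_of_lt h, hu.2⟩, rfl⟩, hxS⟩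
  have hadd : ENNReal.ofReal (δ/(2*r)) * volume S + ENNReal.ofReal (δ/(2*r)) * volume S
      = ENNReal.ofReal (δ/r) * volume S := by
    rw [← add_mul, ← ENNReal.ofReal_add (by positivity) (by positivity)]
    congr 2
    field_simp
    ring
  calc volume (S + Icc (-δ) δ)
      ≤ volume S + (volume ((S + Icc (0:ℝ) δ) \ S) + volume ((S + Icc (-δ) (0:ℝ)) \ S)) :=
        le_trans (measure_mono hsplit)
          (le_trans (measure_union_le _ _) (add_le_add_right (measure_union_le _ _) _))
    _ ≤ volume S + (ENNReal.ofReal (δ/(2*r)) * volume S + ENNReal.ofReal (δ/(2*r)) * volume S) :=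
        add_le_add_right (add_le_add (oneD_plus hS hr hδ h2) (oneD_minus hS hr hδ h2)) _
    _ = (1 + ENNReal.ofReal (δ/r)) * volume S := by rw [hadd, add_mul, one_mul]
    _ = ENNReal.ofReal (1 + δ/r) * volume S := by
        rw [ENNReal.ofReal_add (by norm_num) (by positivity), ENNReal.ofReal_one]

lemma segS_eq {n : ℕ} (i : Fin n) (a : ℝ) :
    segS i a = (fun t => EuclideanSpace.single i t) '' Icc (-a) a := by
  ext x
  constructor
  · rintro ⟨h0, hb⟩
    refine ⟨x i, abs_le.mp hb, ?_⟩
    ext j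
    by_cases hj : j = i
    · subst hj; simp [EuclideanSpace.single_apply]
    · simp [EuclideanSpace.single_apply, hj, h0 j hj]
  · rintro ⟨t, ht, rfl⟩
    refine ⟨fun j hj => by simp [EuclideanSpace.single_apply, hj], ?_⟩
    simpa [EuclideanSpace.single_apply] using abs_le.mpr ht

lemma isCompact_segS {n : ℕ} (i : Fin n) (a : ℝ) : IsCompact (segS i a) := by
  rw [segS_eq]
  refine isCompact_Icc.image ?_
  have : Continuous (fun t : ℝ => (Pi.single i t : Fin n → ℝ)) := by
    refine continuous_pi (fun j => ?_)
    by_cases hj : j = i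
    · subst hj; simpa [Pi.single_apply] using continuous_id'
    · simpa [Pi.single_apply, hj] using continuous_const
  have h2 : Continuous (⇑(WithLp.equiv 2 (Fin n → ℝ)).symm) := by
    rw [WithLp.equiv_symm_apply, ← PiLp.coe_symm_continuousLinearEquiv 2 ℝ]
    exact (PiLp.continuousLinearEquiv 2 ℝ _).symm.continuous
  exact h2.comp this

lemma stepE {n : ℕ} (i : Fin (n+1)) {B : Set (EuclideanSpace ℝ (Fin (n+1)))}
    (hB : IsClosed B) {r δ : ℝ} (hr : 0 < r) (hδ : 0 < δ)
    (h2 : ∀ x ∈ B, ∃ t : ℝ, x i ∈ Icc t (t + 2*r) ∧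
      ∀ u ∈ Icc t (t + 2*r), (WithLp.toLp 2 (Function.update (WithLp.ofLp x) i u) : EuclideanSpace ℝ (Fin (n+1))) ∈ B) :
    volume (B + segS i δ) ≤ ENNReal.ofReal (1 + δ/r) * volume B := by
  have hBseg : IsClosed (B + segS i δ) := hB.add_right_of_isCompact (isCompact_segS i δ)
  set m : EuclideanSpace ℝ (Fin (n+1)) ≃ᵐ ℝ × (Fin n → ℝ) :=
    (MeasurableEquiv.toLp 2 (Fin (n+1) → ℝ)).symm.trans
      (MeasurableEquiv.piFinSuccAbove (fun _ : Fin (n+1) => ℝ) i) with hm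
  have hmx : ∀ x : EuclideanSpace ℝ (Fin (n+1)), m x = (x i, fun j => x (i.succAbove j)) :=
    fun _ => rfl
  have hmsymm : ∀ p : ℝ × (Fin n → ℝ),
      m.symm p = (WithLp.toLp 2 (i.insertNth p.1 p.2) : EuclideanSpace ℝ (Fin (n+1))) := fun _ => rfl
  have hmp : MeasurePreserving m volume ((volume : Measure ℝ).prod (volume : Measure (Fin n → ℝ))) := by
    have h1 := EuclideanSpace.volume_preserving_symm_measurableEquiv_toLp (Fin (n+1))
    have hpi := measurePreserving_piFinSuccAbove (fun _ : Fin (n+1) => (volume : Measure ℝ)) i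
    have h2' : MeasurePreserving (MeasurableEquiv.piFinSuccAbove (fun _ : Fin (n+1) => ℝ) i)
        (volume : Measure (Fin (n+1) → ℝ))
        ((volume : Measure ℝ).prod (volume : Measure (Fin n → ℝ))) := by
      rw [show (volume : Measure (Fin (n+1) → ℝ)) = Measure.pi (fun _ => volume) from volume_pi,
        show (volume : Measure (Fin n → ℝ)) = Measure.pi (fun _ => volume) from volume_pi]
      exact hpi
    rw [hm, MeasurableEquiv.coe_trans]
    exact h2'.comp h1
  have key : ∀ E : Set (EuclideanSpace ℝ (Fin (n+1))),
      volume E = ((volume : Measure ℝ).prod (volume : Measure (Fin n → ℝ))) (m '' E) := by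
    intro E
    rw [← hmp.map_eq, MeasurableEquiv.map_apply, Set.preimage_image_eq _ m.injective]
  have hmsymm_cont : Continuous (⇑m.symm) := by
    have hins : Continuous (fun p : ℝ × (Fin n → ℝ) => (i.insertNth p.1 p.2 : Fin (n+1) → ℝ)) :=
      Continuous.finInsertNth (A := fun _ => ℝ) i continuous_fst continuous_snd
    have hP : Continuous (⇑(WithLp.equiv 2 (Fin (n+1) → ℝ)).symm) := by
      rw [WithLp.equiv_symm_apply, ← PiLp.coe_symm_continuousLinearEquiv 2 ℝ]
      exact (PiLp.continuousLinearEquiv 2 ℝ _).symm.continuous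
    have : ⇑m.symm = (⇑(WithLp.equiv 2 (Fin (n+1) → ℝ)).symm) ∘
        (fun p : ℝ × (Fin n → ℝ) => (i.insertNth p.1 p.2 : Fin (n+1) → ℝ)) := rfl
    rw [this]
    exact hP.comp hins
  have himg : ∀ E : Set (EuclideanSpace ℝ (Fin (n+1))), m '' E = m.symm ⁻¹' E :=
    fun E => m.toEquiv.image_eq_preimage_symm E
  have hclosed_img : ∀ E : Set (EuclideanSpace ℝ (Fin (n+1))), IsClosed E → IsClosed (m '' E) := by
    intro E hE
    rw [himg]
    exact hE.preimage hmsymm_cont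
  -- fiber identity
  have hfib : ∀ y : Fin n → ℝ,
      (fun t => (t, y)) ⁻¹' (m '' (B + segS i δ))
        = ((fun t => (t, y)) ⁻¹' (m '' B)) + Icc (-δ) δ := by
    intro y
    ext t
    constructor
    · rintro ⟨x, hx, hmx'⟩
      rw [Set.mem_add] at hx
      obtain ⟨b, hb, s, hs, rfl⟩ := hx
      rw [hmx] at hmx'
      have ht : b i + s i = t := by
        have := congrArg Prod.fst hmx'
        simpa using this
      have hy : (fun j => b (i.succAbove j)) = y := by
        have := congrArg Prod.snd hmx'
        funext j
        have hsj : s (i.succAbove j) = 0 := hs.1 _ (i.succAbove_ne j)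
        calc b (i.succAbove j) = (b + s) (i.succAbove j) := by simp [hsj]
          _ = y j := congrFun this j
      rw [Set.mem_add]
      refine ⟨b i, ⟨b, hb, ?_⟩, s i, abs_le.mp hs.2, ht⟩
      rw [hmx, hy]
    · intro ht
      rw [Set.mem_add] at ht
      obtain ⟨t0, ht0, u, hu, rfl⟩ := ht
      obtain ⟨b, hb, hmb⟩ := ht0
      rw [hmx] at hmb
      have hbi : b i = t0 := congrArg Prod.fst hmb
      have hby : (fun j => b (i.succAbove j)) = y := congrArg Prod.snd hmb
      refine ⟨b + EuclideanSpace.single i u, ?_, ?_⟩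
      · rw [Set.mem_add]
        refine ⟨b, hb, EuclideanSpace.single i u, ?_, rfl⟩
        exact ⟨fun j hj => by simp [EuclideanSpace.single_apply, hj],
          by simpa [EuclideanSpace.single_apply] using abs_le.mpr hu⟩
      · rw [hmx]
        refine Prod.ext ?_ ?_
        · simp [EuclideanSpace.single_apply, hbi]
        · simp only
          rw [← hby]
          funext j
          simp [EuclideanSpace.single_apply, (i.succAbove_ne j).symm,
            Fin.succAbove_ne i j]
    -- end hfib
  have hfibB_closed : ∀ y, IsClosed ((fun t => (t, y)) ⁻¹' (m '' B)) := by
    intro y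
    exact (hclosed_img B hB).preimage (Continuous.prodMk_left y)
  have hfibB_prop : ∀ y, ∀ b ∈ ((fun t : ℝ => (t, y)) ⁻¹' (m '' B)),
      ∃ t, b ∈ Icc t (t + 2*r) ∧ Icc t (t + 2*r) ⊆ ((fun t : ℝ => (t, y)) ⁻¹' (m '' B)) := by
    intro y b hb
    obtain ⟨x, hx, hmx'⟩ := hb
    rw [hmx] at hmx'
    have hxi : x i = b := congrArg Prod.fst hmx'
    have hxy : (fun j => x (i.succAbove j)) = y := congrArg Prod.snd hmx'
    obtain ⟨t, htmem, htupd⟩ := h2 x hx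
    refine ⟨t, hxi ▸ htmem, ?_⟩
    intro u hu
    refine ⟨WithLp.toLp 2 (Function.update x.ofLp i u), htupd u hu, ?_⟩
    rw [hmx]
    have hq : (fun j => Function.update x i u (i.succAbove j)) = y := by
      rw [← hxy]
      funext j
      exact Function.update_of_ne (i.succAbove_ne j) u x.ofLp
    exact Prod.ext (by simp) hq
  -- measurabilities
  have hms1 : MeasurableSet (m '' (B + segS i δ)) := (hclosed_img _ hBseg).measurableSet
  have hms2 : MeasurableSet (m '' B) := (hclosed_img _ hB).measurableSet
  calc volume (B + segS i δ)
      = ((volume : Measure ℝ).prod (volume : Measure (Fin n → ℝ))) (m '' (B + segS i δ)) := key _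
    _ = ∫⁻ y, volume ((fun t => (t, y)) ⁻¹' (m '' (B + segS i δ))) ∂(volume : Measure (Fin n → ℝ)) :=
        Measure.prod_apply_symm hms1
    _ = ∫⁻ y, volume (((fun t => (t, y)) ⁻¹' (m '' B)) + Icc (-δ) δ) ∂(volume : Measure (Fin n → ℝ)) := by
        refine lintegral_congr (fun y => ?_)
        rw [hfib y]
    _ ≤ ∫⁻ y, ENNReal.ofReal (1 + δ/r) * volume ((fun t => (t, y)) ⁻¹' (m '' B)) ∂(volume : Measure (Fin n → ℝ)) := by
        refine lintegral_mono (fun y => ?_)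
        exact oneD (hfibB_closed y) hr hδ (hfibB_prop y)
    _ = ENNReal.ofReal (1 + δ/r) * ∫⁻ y, volume ((fun t => (t, y)) ⁻¹' (m '' B)) ∂(volume : Measure (Fin n → ℝ)) :=
        lintegral_const_mul' _ _ ENNReal.ofReal_ne_top
    _ = ENNReal.ofReal (1 + δ/r) * volume B := by
        rw [← Measure.prod_apply_symm hms2, ← key]

lemma convex_unitCube (d : ℕ) : Convex ℝ (unitCube d) := by
  intro x hx y hy a b ha hb hab
  intro i
  have : (a • x + b • y) i = a * x i + b * y i := rfl
  rw [this]
  calc |a * x i + b * y i| ≤ |a * x i| + |b * y i| := abs_add_le _ _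
    _ = a * |x i| + b * |y i| := by rw [abs_mul, abs_mul, abs_of_nonneg ha, abs_of_nonneg hb]
    _ ≤ a * 1 + b * 1 := by gcongr; exacts [hx i, hy i]
    _ = 1 := by rw [mul_one, mul_one, hab]

lemma isCompact_pi_image {k : ℕ} (F : Fin k → Set ℝ) (hF : ∀ j, IsCompact (F j)) :
    IsCompact ((⇑(WithLp.equiv 2 (Fin k → ℝ)).symm) '' (Set.pi univ F)) := by
  refine (isCompact_univ_pi hF).image ?_
  rw [WithLp.equiv_symm_apply, ← PiLp.coe_symm_continuousLinearEquiv 2 ℝ]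
  exact (PiLp.continuousLinearEquiv 2 ℝ _).symm.continuous

lemma isCompact_unitCube (d : ℕ) : IsCompact (unitCube d) := by
  have h := isCompact_pi_image (fun _ : Fin d => Icc (-1 : ℝ) 1) (fun _ => isCompact_Icc)
  convert h using 1
  ext x
  simp only [unitCube, mem_setOf_eq, Set.mem_image]
  constructor
  · intro hx
    exact ⟨x, Set.mem_univ_pi.mpr (fun i => mem_Icc.mpr (abs_le.mp (hx i))), rfl⟩
  · rintro ⟨z, hz, rfl⟩
    intro i
    exact abs_le.mpr (mem_Icc.mp (Set.mem_univ_pi.mp hz i))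

lemma isCompact_QS {k : ℕ} (s : Finset (Fin k)) {a : ℝ} (ha : 0 ≤ a) : IsCompact (QS s a) := by
  classical
  have h := isCompact_pi_image (fun j : Fin k => if j ∈ s then Icc (-a) a else {0})
    (fun j => by by_cases hj : j ∈ s <;> simp [hj, isCompact_Icc, isCompact_singleton])
  convert h using 1
  ext x
  simp only [QS, mem_setOf_eq, Set.mem_image]
  constructor
  · intro hx
    refine ⟨x, ?_, rfl⟩
    intro j _
    by_cases hj : j ∈ s
    · simp [hj, mem_Icc, abs_le.mp (hx.2 j)]
    · simp [hj, hx.1 j hj]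
  · rintro ⟨z, hz, rfl⟩
    have hz' : ∀ j, z j ∈ (if j ∈ s then Icc (-a) a else ({0} : Set ℝ)) :=
      fun j => hz j (mem_univ j)
    constructor
    · intro j hj
      have := hz' j
      rw [if_neg hj] at this
      simp only [mem_singleton_iff] at this
      show z j = 0
      exact this
    · intro j
      by_cases hj : j ∈ s
      · have := hz' j
        rw [if_pos hj] at this
        show |z j| ≤ a
        exact abs_le.mpr this
      · have := hz' j
        rw [if_neg hj] at this
        simp only [mem_singleton_iff] at this
        show |z j| ≤ a
        rw [this]
        simpa using ha

lemma isCompact_smul_unitCube (d : ℕ) (c : ℝ) : IsCompact (c • unitCube d) := by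
  rw [← Set.image_smul]
  exact (isCompact_unitCube d).image (continuous_const_smul c)

lemma QS_empty {k : ℕ} {a : ℝ} (ha : 0 ≤ a) : QS (∅ : Finset (Fin k)) a = 0 := by
  ext x
  constructor
  · rintro ⟨h0, _⟩
    have : x = 0 := PiLp.ext (fun j => h0 j (Finset.notMem_empty j))
    simpa [Set.mem_zero] using this
  · intro hx
    rw [Set.mem_zero] at hx
    subst hx
    refine ⟨fun j _ => rfl, fun j => ?_⟩
    show |(0:ℝ)| ≤ a
    simpa using ha

lemma QS_insert {k : ℕ} {s : Finset (Fin k)} {i : Fin k} (hi : i ∉ s) {a : ℝ} (ha : 0 ≤ a) :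
    QS (insert i s) a = QS s a + segS i a := by
  classical
  ext z
  constructor
  · rintro ⟨h0, hb⟩
    rw [Set.mem_add]
    refine ⟨(WithLp.toLp 2 (Function.update z.ofLp i 0) : EuclideanSpace ℝ (Fin k)), ⟨?_, ?_⟩,
      EuclideanSpace.single i (z i), ⟨fun j hj => by simp [EuclideanSpace.single_apply, hj], ?_⟩, ?_⟩
    · intro j hj
      by_cases hji : j = i
      · subst hji; simp
      · rw [WithLp.ofLp_toLp, Function.update_of_ne hji]
        exact h0 j (by simp [hji, hj])
    · intro j
      by_cases hji : j = i
      · subst hji; simpa using ha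
      · rw [WithLp.ofLp_toLp, Function.update_of_ne hji]
        exact hb j
    · simpa [EuclideanSpace.single_apply] using hb i
    · ext j
      by_cases hji : j = i
      · subst hji
        simp [EuclideanSpace.single_apply]
      · simp [Function.update_of_ne hji, EuclideanSpace.single_apply, hji]
  · intro hz
    rw [Set.mem_add] at hz
    obtain ⟨x, hx, y, hy, rfl⟩ := hz
    constructor
    · intro j hj
      have hjs : j ∉ s := fun h => hj (Finset.mem_insert_of_mem h)
      have hji : j ≠ i := fun h => hj (h ▸ Finset.mem_insert_self i s)
      have : (x + y) j = x j + y j := rfl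
      rw [this, hx.1 j hjs, hy.1 j hji, add_zero]
    · intro j
      have : (x + y) j = x j + y j := rfl
      rw [this]
      by_cases hji : j = i
      · rw [hji, hx.1 i hi, zero_add]
        exact hy.2
      · rw [hy.1 j hji, add_zero]
        exact hx.2 j

lemma QS_univ {k : ℕ} {a : ℝ} (ha : 0 < a) :
    QS (Finset.univ : Finset (Fin k)) a = a • unitCube k := by
  ext x
  constructor
  · rintro ⟨_, hb⟩
    refine Set.mem_smul_set.mpr ⟨a⁻¹ • x, fun i => ?_, smul_inv_smul₀ (ne_of_gt ha) x⟩
    have : (a⁻¹ • x) i = a⁻¹ * x i := rfl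
    rw [this, abs_mul, abs_of_nonneg (inv_nonneg.mpr ha.le)]
    rw [inv_mul_le_iff₀ ha, mul_one]
    exact hb i
  · intro hx
    obtain ⟨c, hc, rfl⟩ := Set.mem_smul_set.mp hx
    refine ⟨fun j hj => absurd (Finset.mem_univ j) hj, fun j => ?_⟩
    have : (a • c) j = a * c j := rfl
    rw [this, abs_mul, abs_of_nonneg ha.le]
    calc a * |c j| ≤ a * 1 := by gcongr; exact hc j
      _ = a := mul_one a

lemma prop_shape {k : ℕ} (A W : Set (EuclideanSpace ℝ (Fin k))) {r : ℝ} (hr : 0 < r) (i : Fin k) :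
    ∀ x ∈ A + r • unitCube k + W, ∃ t : ℝ, x i ∈ Icc t (t + 2*r) ∧
      ∀ u ∈ Icc t (t + 2*r),
        (WithLp.toLp 2 (Function.update (WithLp.ofLp x) i u) : EuclideanSpace ℝ (Fin k)) ∈ A + r • unitCube k + W := by
  intro x hx
  rw [Set.mem_add] at hx
  obtain ⟨p, hp, w, hw, rfl⟩ := hx
  rw [Set.mem_add] at hp
  obtain ⟨a, ha, q, hq, rfl⟩ := hp
  obtain ⟨c, hc, rfl⟩ := Set.mem_smul_set.mp hq
  refine ⟨a i + w i - r, ?_, ?_⟩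
  · have h1 : (a + r • c + w) i = a i + r * c i + w i := rfl
    rw [h1]
    have := abs_le.mp (hc i)
    constructor
    · nlinarith [this.1]
    · nlinarith [this.2]
  · intro u hu
    obtain ⟨hu1, hu2⟩ := hu
    set c' : EuclideanSpace ℝ (Fin k) := WithLp.toLp 2 (Function.update c.ofLp i ((u - (a i + w i))/r)) with hc'
    have hc'mem : c' ∈ unitCube k := by
      intro j
      by_cases hji : j = i
      · rw [hc', hji]
        show |Function.update c.ofLp i ((u - (a.ofLp i + w.ofLp i))/r) i| ≤ 1
        rw [Function.update_self, abs_div, abs_of_pos hr, div_le_one hr, abs_le]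
        constructor <;> [linarith; linarith]
      · rw [hc']
        show |Function.update c.ofLp i ((u - (a.ofLp i + w.ofLp i))/r) j| ≤ 1
        rw [Function.update_of_ne hji]
        exact hc j
    have heq : (WithLp.toLp 2 (Function.update (a + r • c + w).ofLp i u) : EuclideanSpace ℝ (Fin k))
        = a + r • c' + w := by
      ext j
      by_cases hji : j = i
      · rw [hji]
        show Function.update (a + r • c + w).ofLp i u i
          = a.ofLp i + r * (Function.update c.ofLp i ((u - (a.ofLp i + w.ofLp i))/r) i) + w.ofLp i
        rw [Function.update_self, Function.update_self]
        field_simp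
        ring
      · show Function.update (a + r • c + w).ofLp i u j
          = a.ofLp j + r * (Function.update c.ofLp i ((u - (a.ofLp i + w.ofLp i))/r) j) + w.ofLp j
        rw [Function.update_of_ne hji, Function.update_of_ne hji]
        rfl
    rw [heq]
    exact Set.add_mem_add (Set.add_mem_add ha (Set.smul_mem_smul_set hc'mem)) hw

lemma growth {n : ℕ} {A : Set (EuclideanSpace ℝ (Fin (n+1)))} (hA : IsClosed A)
    {r δ : ℝ} (hr : 0 < r) (hδ : 0 < δ) :
    volume (A + r • unitCube (n+1) + δ • unitCube (n+1))
      ≤ ENNReal.ofReal ((1 + δ/r)^(n+1)) * volume (A + r • unitCube (n+1)) := by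
  classical
  have hQclosed : ∀ (s : Finset (Fin (n+1))), IsClosed (A + r • unitCube (n+1) + QS s δ) := by
    intro s
    rw [add_assoc]
    exact hA.add_right_of_isCompact ((isCompact_smul_unitCube _ r).add (isCompact_QS s hδ.le))
  have main : ∀ s : Finset (Fin (n+1)),
      volume (A + r • unitCube (n+1) + QS s δ)
        ≤ ENNReal.ofReal ((1 + δ/r)^s.card) * volume (A + r • unitCube (n+1)) := by
    intro s
    induction s using Finset.induction_on with
    | empty =>
        rw [QS_empty hδ.le, add_zero, Finset.card_empty, pow_zero, ENNReal.ofReal_one, one_mul]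
    | @insert i s hi ih =>
        rw [QS_insert hi hδ.le, ← add_assoc]
        calc volume (A + r • unitCube (n+1) + QS s δ + segS i δ)
            ≤ ENNReal.ofReal (1 + δ/r) * volume (A + r • unitCube (n+1) + QS s δ) :=
              stepE i (hQclosed s) hr hδ (prop_shape A (QS s δ) hr i)
          _ ≤ ENNReal.ofReal (1 + δ/r) *
              (ENNReal.ofReal ((1 + δ/r)^s.card) * volume (A + r • unitCube (n+1))) :=
              mul_le_mul_right ih _
          _ = ENNReal.ofReal ((1 + δ/r)^(insert i s).card) * volume (A + r • unitCube (n+1)) := by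
              rw [Finset.card_insert_of_notMem hi, ← mul_assoc,
                ← ENNReal.ofReal_mul (by positivity)]
              congr 2
              rw [pow_succ]
              ring
  have hres := main Finset.univ
  rwa [QS_univ hδ, Finset.card_univ, Fintype.card_fin] at hres

lemma pow_bound (k : ℕ) {u : ℝ} (h0 : 0 ≤ u) (h1 : u ≤ 1) :
    (1+u)^k ≤ 1 + k*u*2^k := by
  induction k with
  | zero => simp
  | succ k ih =>
      have h2k : (1:ℝ) ≤ 2^k := one_le_pow₀ one_le_two
      have hpos : (0:ℝ) ≤ (k:ℝ) := Nat.cast_nonneg k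
      have hp2 : (0:ℝ) ≤ 2^k := by positivity
      have hu2k : u ≤ u * 2^k := by nlinarith
      push_cast
      calc (1+u)^(k+1) = (1+u)^k * (1+u) := pow_succ _ _
        _ ≤ (1 + (k:ℝ)*u*2^k) * (1+u) := by
            refine mul_le_mul_of_nonneg_right ih (by linarith)
        _ ≤ 1 + ((k:ℝ)+1)*u*2^(k+1) := by
            have hk2 : (0:ℝ) ≤ (k:ℝ)*u*2^k := by positivity
            have hmul : (k:ℝ)*u*2^k*u ≤ (k:ℝ)*u*2^k*1 :=
              mul_le_mul_of_nonneg_left h1 hk2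
            have hu0 : (0:ℝ) ≤ u*2^k := mul_nonneg h0 hp2
            have hps : (2:ℝ)^(k+1) = 2^k*2 := pow_succ 2 k
            nlinarith [hu2k, hmul, hu0, hk2, hps]

/-- For `d ≥ 1`, `r, δ, V > 0` and a nonempty closed `A ⊆ ℝ^d` with
`λ(A_{⊞r}) ≤ V`:
`λ(A_{⊞(r+δ)} \ A_{⊞r}) ≤ (V/r^d) · 2^{2d−1}((r+δ)^d − r^d)` and
`λ̄_C(∂A_{⊞r}) ≤ (V/r) · 2^{2d−1} d`. -/
theorem reverse_isoperimetric_cube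
    (d : ℕ) (hd : 1 ≤ d) (r δ V : ℝ) (hr : 0 < r) (hδ : 0 < δ) (hV : 0 < V)
    (A : Set (EuclideanSpace ℝ (Fin d))) (hA : IsClosed A) (hAne : A.Nonempty)
    (hvol : volume (A + r • unitCube d) ≤ ENNReal.ofReal V) :
    volume ((A + (r + δ) • unitCube d) \ (A + r • unitCube d)) ≤
      ENNReal.ofReal (V / r ^ d * (2 ^ (2 * d - 1) * ((r + δ) ^ d - r ^ d))) ∧
    upperSurf (unitCube d) (A + r • unitCube d) ≤
      ENNReal.ofReal (V / r * (2 ^ (2 * d - 1) * d)) := by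
  obtain ⟨n, rfl⟩ : ∃ n, d = n + 1 := ⟨d - 1, (Nat.succ_pred_eq_of_pos hd).symm⟩
  set Q := unitCube (n+1) with hQ
  set B := A + r • Q with hB
  have hBclosed : IsClosed B := hA.add_right_of_isCompact (isCompact_smul_unitCube _ r)
  have hBm : MeasurableSet B := hBclosed.measurableSet
  have hBne : volume B ≠ ⊤ := by
    refine ne_top_of_le_ne_top ENNReal.ofReal_ne_top hvol
  -- expansions
  have hsplitQ : ∀ δ' : ℝ, 0 < δ' → A + (r + δ') • Q = B + δ' • Q := by
    intro δ' hδ'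
    rw [hB, (convex_unitCube (n+1)).add_smul hr.le hδ'.le, ← add_assoc]
  have hgrow : ∀ δ' : ℝ, 0 < δ' →
      volume (B + δ' • Q) ≤ ENNReal.ofReal ((1 + δ'/r)^(n+1)) * volume B := by
    intro δ' hδ'
    rw [hB]
    exact growth hA hr hδ'
  have hsub : ∀ δ' : ℝ, 0 < δ' → B ⊆ B + δ' • Q := by
    intro δ' hδ' b hb
    have h0Q : (0 : EuclideanSpace ℝ (Fin (n+1))) ∈ δ' • Q := by
      refine Set.mem_smul_set.mpr ⟨0, fun i => ?_, smul_zero δ'⟩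
      show |(0:ℝ)| ≤ 1
      simp
    rw [Set.mem_add]
    exact ⟨b, hb, 0, h0Q, add_zero b⟩
  -- key diff bound
  have hdiff : ∀ δ' : ℝ, 0 < δ' →
      volume ((B + δ' • Q) \ B) ≤ ENNReal.ofReal ((1 + δ'/r)^(n+1) - 1) * volume B := by
    intro δ' hδ'
    have hc1 : (1:ℝ) ≤ (1 + δ'/r)^(n+1) := one_le_pow₀ (by nlinarith [div_nonneg hδ'.le hr.le])
    have hkey : volume ((B + δ' • Q) \ B) + volume B ≤
        ENNReal.ofReal ((1 + δ'/r)^(n+1) - 1) * volume B + volume B := by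
      have heq : volume ((B + δ' • Q) \ B) + volume B = volume (B + δ' • Q) := by
        have := measure_diff_add_inter (μ := volume) (B + δ' • Q) hBm
        rwa [Set.inter_eq_self_of_subset_right (hsub δ' hδ')] at this
      rw [heq]
      calc volume (B + δ' • Q) ≤ ENNReal.ofReal ((1 + δ'/r)^(n+1)) * volume B := hgrow δ' hδ'
        _ = (ENNReal.ofReal ((1 + δ'/r)^(n+1) - 1) + 1) * volume B := by
            rw [← ENNReal.ofReal_one, ← ENNReal.ofReal_add (by linarith) zero_le_one,
              sub_add_cancel]
        _ = ENNReal.ofReal ((1 + δ'/r)^(n+1) - 1) * volume B + volume B := by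
            rw [add_mul, one_mul]
    exact (ENNReal.add_le_add_iff_right hBne).mp hkey
  constructor
  · -- part 1
    have h1 : volume ((A + (r + δ) • Q) \ B) ≤ ENNReal.ofReal ((1 + δ/r)^(n+1) - 1) * volume B := by
      rw [hsplitQ δ hδ]
      exact hdiff δ hδ
    have hc1 : (1:ℝ) ≤ (1 + δ/r)^(n+1) := one_le_pow₀ (by nlinarith [div_nonneg hδ.le hr.le])
    have h2 : ENNReal.ofReal ((1 + δ/r)^(n+1) - 1) * volume B
        ≤ ENNReal.ofReal (((1 + δ/r)^(n+1) - 1) * V) := by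
      calc ENNReal.ofReal ((1 + δ/r)^(n+1) - 1) * volume B
          ≤ ENNReal.ofReal ((1 + δ/r)^(n+1) - 1) * ENNReal.ofReal V := mul_le_mul_right hvol _
        _ = ENNReal.ofReal (((1 + δ/r)^(n+1) - 1) * V) :=
            (ENNReal.ofReal_mul (by linarith)).symm
    refine (h1.trans h2).trans (ENNReal.ofReal_le_ofReal ?_)
    have hrpow : (0:ℝ) < r ^ (n+1) := pow_pos hr (n+1)
    have hexp : (1 + δ/r)^(n+1) - 1 = ((r+δ)^(n+1) - r^(n+1))/r^(n+1) := by
      rw [show 1 + δ/r = (r+δ)/r by field_simp, div_pow]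
      field_simp
    have hmono : (0:ℝ) ≤ (r+δ)^(n+1) - r^(n+1) := by
      have := pow_le_pow_left₀ hr.le (by linarith : r ≤ r + δ) (n+1)
      linarith
    have h2d : (1:ℝ) ≤ 2^(2*(n+1)-1) := one_le_pow₀ one_le_two
    rw [hexp]
    have heq2 : ((r+δ)^(n+1) - r^(n+1))/r^(n+1) * V = V/r^(n+1) * ((r+δ)^(n+1) - r^(n+1)) := by
      ring
    rw [heq2]
    have hV0 : (0:ℝ) ≤ V / r^(n+1) := by positivity
    refine mul_le_mul_of_nonneg_left ?_ hV0
    nlinarith [hmono, h2d]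
  · -- part 2
    have hbound : ∀ᶠ δ' in nhdsWithin (0:ℝ) (Set.Ioi 0),
        (volume (B + δ' • Q) - volume B) / ENNReal.ofReal δ'
          ≤ ENNReal.ofReal (V / r * (2 ^ (2 * (n+1) - 1) * ((n:ℝ)+1))) := by
      filter_upwards [Ioc_mem_nhdsGT hr] with δ' hδ'mem
      obtain ⟨hδ'0, hδ'r⟩ := hδ'mem
      set K := V * ((n:ℝ)+1) * 2^(n+1) / r with hK
      have hu0 : (0:ℝ) ≤ δ'/r := by positivity
      have hu1 : δ'/r ≤ 1 := (div_le_one hr).mpr hδ'r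
      have hpb := pow_bound (n+1) hu0 hu1
      push_cast at hpb
      have hc1' : (1:ℝ) ≤ (1 + δ'/r)^(n+1) := one_le_pow₀ (by linarith)
      have hineq : ((1+δ'/r)^(n+1) - 1) * V ≤ δ' * K := by
        rw [hK]
        have hq : ((n:ℝ)+1)*(δ'/r)*2^(n+1) * V = δ' * (V * ((n:ℝ)+1) * 2^(n+1) / r) := by
          field_simp
        nlinarith [hpb, hV.le]
      have hnum : volume (B + δ' • Q) - volume B ≤ ENNReal.ofReal (δ' * K) := by
        refine tsub_le_iff_right.mpr ?_
        calc volume (B + δ' • Q) ≤ ENNReal.ofReal ((1 + δ'/r)^(n+1)) * volume B := hgrow δ' hδ'0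
          _ = (ENNReal.ofReal ((1+δ'/r)^(n+1) - 1) + 1) * volume B := by
              rw [← ENNReal.ofReal_one, ← ENNReal.ofReal_add (by linarith) zero_le_one,
                sub_add_cancel]
          _ = ENNReal.ofReal ((1+δ'/r)^(n+1) - 1) * volume B + volume B := by
              rw [add_mul, one_mul]
          _ ≤ ENNReal.ofReal (δ' * K) + volume B := by
              refine add_le_add_left ?_ _
              calc ENNReal.ofReal ((1+δ'/r)^(n+1) - 1) * volume B
                  ≤ ENNReal.ofReal ((1+δ'/r)^(n+1) - 1) * ENNReal.ofReal V :=
                    mul_le_mul_right hvol _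
                _ = ENNReal.ofReal (((1+δ'/r)^(n+1) - 1) * V) :=
                    (ENNReal.ofReal_mul (by linarith)).symm
                _ ≤ ENNReal.ofReal (δ' * K) := ENNReal.ofReal_le_ofReal hineq
      calc (volume (B + δ' • Q) - volume B) / ENNReal.ofReal δ'
          ≤ ENNReal.ofReal (δ' * K) / ENNReal.ofReal δ' := ENNReal.div_le_div_right hnum _
        _ = ENNReal.ofReal K := by
            rw [ENNReal.ofReal_mul hδ'0.le, mul_comm, mul_div_assoc,
              ENNReal.div_self (by simpa using hδ'0) ENNReal.ofReal_ne_top, mul_one]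
        _ ≤ ENNReal.ofReal (V / r * (2 ^ (2 * (n+1) - 1) * ((n:ℝ)+1))) := by
            refine ENNReal.ofReal_le_ofReal ?_
            rw [hK]
            have h2e : (2:ℝ)^(n+1) ≤ 2^(2*(n+1)-1) := by
              refine pow_le_pow_right₀ one_le_two (by omega)
            have hpos2 : (0:ℝ) ≤ V * ((n:ℝ)+1) / r := by positivity
            have hrw : V * ((n:ℝ)+1) * 2^(n+1) / r = (V * ((n:ℝ)+1) / r) * 2^(n+1) := by ring
            have hrw2 : V / r * (2 ^ (2*(n+1)-1) * ((n:ℝ)+1)) = (V * ((n:ℝ)+1) / r) * 2^(2*(n+1)-1) := by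
              ring
            rw [hrw, hrw2]
            exact mul_le_mul_of_nonneg_left h2e hpos2
    have hfinal := Filter.limsup_le_of_le (by isBoundedDefault) hbound
    show Filter.limsup (fun δ' : ℝ => (volume (B + δ' • Q) - volume B) / ENNReal.ofReal δ')
      (nhdsWithin 0 (Set.Ioi 0)) ≤ _
    refine hfinal.trans (ENNReal.ofReal_le_ofReal ?_)
    push_cast
    exact le_rfl
end
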